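/- arXiv:math/0205291 — 6 statements merged into one kernel-verified Lean document; each statement's English description precedes it below -/
import Mathlib

section
/- Let (X,d,∗) be a pointed metric space and let L(X) be the free vector space on X with ∗ identified with 0, equipped with the largest seminorm p such that p(x − y) ≤ d(x,y) for all x,y ∈ X. Then p is a norm and the induced distance restricted to X coincides with d. -/
open scoped BigOperators

/-- The free real vector space on a pointed metric space `(X, base)`:
the vector space with Hamel basis `X \ {base}` (and `base` serving as zero). -/
def FreeL (X : Type*) [MetricSpace X] (base : X) : Type _ :=
  {x : X // x ≠ base} →₀ ℝ

namespace FreeL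

open Classical

variable {X : Type*} [MetricSpace X]

noncomputable instance (base : X) : AddCommGroup (FreeL X base) :=
  Finsupp.instAddCommGroup

noncomputable instance (base : X) : Module ℝ (FreeL X base) :=
  Finsupp.module _ _

/-- The canonical embedding of `X` into `FreeL X base`, sending `base` to `0`. -/
noncomputable def δ (base : X) (x : X) : FreeL X base :=
  if h : x = base then 0 else Finsupp.single ⟨x, h⟩ 1

/-- A seminorm on the free vector space whose induced distance on `X` is majorized
by the metric `d`. -/
def IsGoodSeminorm (base : X) (p : Seminorm ℝ (FreeL X base)) : Prop :=
  ∀ x y : X, p (δ base x - δ base y) ≤ dist x y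

/-- The largest seminorm on `FreeL X base` whose induced distance on `X` is
majorized by the metric of `X`. -/
noncomputable def freeNorm (base : X) (z : FreeL X base) : ℝ :=
  ⨆ p : {p : Seminorm ℝ (FreeL X base) // IsGoodSeminorm base p}, p.1 z

-- auxiliary
variable (base : X)

noncomputable def Φ (f : X → ℝ) : FreeL X base →ₗ[ℝ] ℝ :=
  Finsupp.linearCombination ℝ (fun x : {x : X // x ≠ base} => f x.val)

noncomputable def pf (f : X → ℝ) : Seminorm ℝ (FreeL X base) :=
  (normSeminorm ℝ ℝ).comp (Φ base f)

lemma pf_apply (f : X → ℝ) (z : FreeL X base) : pf base f z = |Φ base f z| := rfl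

lemma Φ_apply (f : X → ℝ) (z : {x : X // x ≠ base} →₀ ℝ) :
    Φ base f z = z.sum fun x c => c * f x.val := rfl

lemma Φ_single (f : X → ℝ) (x : {x : X // x ≠ base}) (c : ℝ) :
    Φ base f (Finsupp.single x c) = c * f x.val := by
  rw [Φ_apply]
  exact Finsupp.sum_single_index (by simp)

lemma Φ_delta (f : X → ℝ) (hf : f base = 0) (x : X) :
    Φ base f (δ base x) = f x := by
  unfold δ
  split_ifs with h
  · simp [h, hf]
  · exact (congrArg (Φ base f) (dif_neg h : _ = (Finsupp.single (⟨x, h⟩ : {x : X // x ≠ base}) (1:ℝ) : FreeL X base))).trans ((Φ_single base f ⟨x, h⟩ 1).trans (one_mul _))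

lemma pf_good (f : X → ℝ) (hf : f base = 0) (hl : LipschitzWith 1 f) :
    IsGoodSeminorm base (pf base f) := by
  intro x y
  rw [pf_apply, map_sub, Φ_delta base f hf, Φ_delta base f hf]
  have := hl.dist_le_mul x y
  rwa [Real.dist_eq, NNReal.coe_one, one_mul] at this

lemma seminorm_sum_le {ι : Type*} (p : Seminorm ℝ (FreeL X base)) (s : Finset ι)
    (f : ι → FreeL X base) : p (∑ i ∈ s, f i) ≤ ∑ i ∈ s, p (f i) := by
  classical
  induction s using Finset.induction with
  | empty => simp
  | insert _ _ hnot ih =>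
    rw [Finset.sum_insert hnot, Finset.sum_insert hnot]
    exact le_trans (map_add_le_add p _ _) (by linarith)

lemma good_le (p : Seminorm ℝ (FreeL X base)) (hp : IsGoodSeminorm base p)
    (z : {x : X // x ≠ base} →₀ ℝ) :
    p z ≤ ∑ x ∈ z.support, |z x| * dist x.val base := by
  have hz : (z : {x : X // x ≠ base} →₀ ℝ) = ∑ x ∈ z.support, Finsupp.single x (z x) :=
    (Finsupp.sum_single z).symm
  calc p z = p (∑ x ∈ z.support, Finsupp.single x (z x)) := congrArg (fun w : {x : X // x ≠ base} →₀ ℝ => p w) hz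
    _ ≤ ∑ x ∈ z.support, p (Finsupp.single x (z x)) := seminorm_sum_le base p _ _
    _ ≤ ∑ x ∈ z.support, |z x| * dist x.val base := by
        refine Finset.sum_le_sum fun x _ => ?_
        have h1 : (Finsupp.single x (z x) : {x : X // x ≠ base} →₀ ℝ)
            = (z x) • δ base x.val := by
          have e : δ base x.val = (Finsupp.single x (1:ℝ) : FreeL X base) := dif_neg x.2
          rw [e]
          show Finsupp.single x (z x) = (z x) • Finsupp.single x (1 : ℝ)
          rw [Finsupp.smul_single, smul_eq_mul, mul_one]
        rw [h1, map_smul_eq_mul, Real.norm_eq_abs]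
        have h2 : p (δ base x.val) ≤ dist x.val base := by
          have := hp x.val base
          simpa [δ] using this
        exact mul_le_mul_of_nonneg_left h2 (abs_nonneg _)

noncomputable instance : Nonempty {p : Seminorm ℝ (FreeL X base) // IsGoodSeminorm base p} :=
  ⟨⟨0, fun x y => by simp [dist_nonneg]⟩⟩

lemma bdd (z : {x : X // x ≠ base} →₀ ℝ) :
    BddAbove (Set.range fun p : {p : Seminorm ℝ (FreeL X base) // IsGoodSeminorm base p} => p.1 z) := by
  refine ⟨∑ x ∈ z.support, |z x| * dist x.val base, ?_⟩
  rintro r ⟨p, rfl⟩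
  exact good_le base p.1 p.2 z

lemma le_freeNorm (p : Seminorm ℝ (FreeL X base)) (hp : IsGoodSeminorm base p)
    (z : {x : X // x ≠ base} →₀ ℝ) : p z ≤ freeNorm base z :=
  le_ciSup (bdd base z) ⟨p, hp⟩

end FreeL

/-- The largest seminorm `p` on `L(X)` with `p (x - y) ≤ d x y` for `x, y ∈ X`
is in fact a norm, and the distance it induces on `X` coincides with `d`. -/
theorem freeNorm_is_norm_and_extends_metric
    {X : Type*} [MetricSpace X] (base : X) :
    (∀ z : FreeL X base, FreeL.freeNorm base z = 0 → z = 0) ∧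
    (∀ x y : X,
      FreeL.freeNorm base (FreeL.δ base x - FreeL.δ base y) = dist x y) := by
  classical
  constructor
  · intro z hz
    obtain ⟨w, hw⟩ : ∃ w : {x : X // x ≠ base} →₀ ℝ, w = z := ⟨z, rfl⟩
    subst hw
    by_contra hne
    have hne' : w ≠ 0 := hne
    obtain ⟨a, ha⟩ := Finsupp.support_nonempty_iff.mpr hne'
    set S : Finset X := insert base ((w.support.erase a).image Subtype.val) with hS
    have hSne : S.Nonempty := ⟨base, Finset.mem_insert_self _ _⟩
    set r : ℝ := S.inf' hSne (fun t => dist a.val t) with hr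
    have hrpos : 0 < r := by
      rw [hr, Finset.lt_inf'_iff]
      intro t ht
      rw [hS] at ht
      rcases Finset.mem_insert.mp ht with h | h
      · subst h; exact dist_pos.mpr a.2
      · obtain ⟨b, hb, rfl⟩ := Finset.mem_image.mp h
        have : a ≠ b := fun h => (Finset.mem_erase.mp hb).1 h.symm
        exact dist_pos.mpr (fun hv => this (Subtype.ext hv))
    set f : X → ℝ := fun t => max (r - dist t a.val) 0 with hf
    have hfl : LipschitzWith 1 f := by
      rw [lipschitzWith_iff_dist_le_mul]
      intro s t
      rw [NNReal.coe_one, one_mul, Real.dist_eq, hf]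
      calc |max (r - dist s a.val) 0 - max (r - dist t a.val) 0|
          ≤ |(r - dist s a.val) - (r - dist t a.val)| := abs_max_sub_max_le_abs _ _ _
        _ = |dist t a.val - dist s a.val| := by ring_nf
        _ ≤ dist t s := abs_dist_sub_le _ _ _
        _ = dist s t := dist_comm _ _
    have hrle : ∀ t ∈ S, r ≤ dist a.val t := fun t ht => Finset.inf'_le _ ht
    have hfb : f base = 0 := by
      have := hrle base (Finset.mem_insert_self _ _)
      rw [dist_comm] at this
      rw [hf]
      simp only [max_eq_right_iff]
      linarith
    have hΦ : FreeL.Φ base f w = w a * r := by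
      rw [FreeL.Φ_apply, Finsupp.sum, Finset.sum_eq_single a]
      · congr 1
        rw [hf]; simp [hrpos.le]
      · intro b hb hba
        have hfb0 : f b.val = 0 := by
          have hbS : b.val ∈ S := by
            rw [hS]
            exact Finset.mem_insert_of_mem
              (Finset.mem_image.mpr ⟨b, Finset.mem_erase.mpr ⟨hba, hb⟩, rfl⟩)
          have := hrle b.val hbS
          rw [dist_comm] at this
          rw [hf]
          simp only [max_eq_right_iff]
          linarith
        simp [hfb0]
      · intro h; exact absurd ha h
    have hpf : FreeL.pf base f w ≤ FreeL.freeNorm base w :=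
      FreeL.le_freeNorm base _ (FreeL.pf_good base f hfb hfl) w
    rw [hz] at hpf
    replace hpf : |FreeL.Φ base f w| ≤ 0 := hpf
    rw [hΦ] at hpf
    have : 0 < |w a * r| := by
      rw [abs_pos]
      exact mul_ne_zero (Finsupp.mem_support_iff.mp ha) hrpos.ne'
    linarith
  · intro x y
    apply le_antisymm
    · exact ciSup_le fun p => p.2 x y
    · set f : X → ℝ := fun t => dist t y - dist base y with hf
      have hfb : f base = 0 := by simp [hf]
      have hfl : LipschitzWith 1 f := by
        rw [lipschitzWith_iff_dist_le_mul]
        intro s t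
        rw [NNReal.coe_one, one_mul, Real.dist_eq, hf]
        have h := abs_dist_sub_le s t y
        calc |dist s y - dist base y - (dist t y - dist base y)|
            = |dist s y - dist t y| := by ring_nf
          _ ≤ dist s t := h
      have hle := FreeL.le_freeNorm base _ (FreeL.pf_good base f hfb hfl)
        (FreeL.δ base x - FreeL.δ base y)
      rw [FreeL.pf_apply, map_sub, FreeL.Φ_delta base f hfb, FreeL.Φ_delta base f hfb] at hle
      have hfxy : f x - f y = dist x y := by rw [hf]; simp
      rw [hfxy] at hle
      rwa [abs_of_nonneg dist_nonneg] at hle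
end

section
/- The norm of the free normed space L(X,∗,d) admits the Graev/Kantorovich description: for every x ∈ L(X), ‖x‖ equals the infimum of Σᵢ |λᵢ| d(xᵢ,yᵢ) over all n ∈ ℕ, real scalars λᵢ, and points xᵢ, yᵢ ∈ X such that x = Σᵢ λᵢ xᵢ and 0 = Σᵢ λᵢ yᵢ in L(X). -/
open scoped BigOperators

namespace FreeL

open Classical

variable {X : Type*} [MetricSpace X]

/-! ### Auxiliary development for the Graev formula -/

/-- The set of costs of Graev representations of `z`. -/
def graevSet (base : X) (z : FreeL X base) : Set ℝ :=
  {s : ℝ | ∃ (n : ℕ) (lam : Fin n → ℝ) (xs ys : Fin n → X),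
    z = ∑ i, lam i • FreeL.δ base (xs i) ∧
    (0 : FreeL X base) = ∑ i, lam i • FreeL.δ base (ys i) ∧
    s = ∑ i, |lam i| * dist (xs i) (ys i)}

lemma graevSet_nonneg (base : X) (z : FreeL X base) :
    ∀ s ∈ graevSet base z, (0 : ℝ) ≤ s := by
  rintro s ⟨n, lam, xs, ys, -, -, rfl⟩
  exact Finset.sum_nonneg fun i _ => mul_nonneg (abs_nonneg _) dist_nonneg

lemma bddBelow_graevSet (base : X) (z : FreeL X base) :
    BddBelow (graevSet base z) :=
  ⟨0, fun s hs => graevSet_nonneg base z s hs⟩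

lemma graevSet_nonempty (base : X) (z : FreeL X base) :
    (graevSet base z).Nonempty := by
  classical
  -- represent `z` through its Finsupp structure, with all `ys i = base`
  have hz : ∃ (n : ℕ) (lam : Fin n → ℝ) (xs : Fin n → {x : X // x ≠ base}),
      z = ∑ i, Finsupp.single (xs i) (lam i) := by
    set w : {x : X // x ≠ base} →₀ ℝ := z with hw
    refine ⟨w.support.card, fun i => w (w.support.equivFin.symm i),
      fun i => (w.support.equivFin.symm i : {x : X // x ≠ base}), ?_⟩
    show w = _
    rw [Equiv.sum_comp (w.support.equivFin.symm)
      (fun a : w.support => Finsupp.single (a : {x : X // x ≠ base}) (w a))]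
    rw [Finset.sum_coe_sort w.support (fun a => Finsupp.single a (w a))]
    exact (Finsupp.sum_single w).symm
  obtain ⟨n, lam, xs, hz⟩ := hz
  refine ⟨∑ i, |lam i| * dist ((xs i : X)) base, n, lam, fun i => (xs i : X),
    fun _ => base, ?_, ?_, rfl⟩
  · rw [hz]
    refine Finset.sum_congr rfl fun i _ => ?_
    have h : ((xs i : X)) ≠ base := (xs i).2
    show (Finsupp.single (xs i) (lam i) : FreeL X base) = _
    rw [show δ base (xs i : X) = Finsupp.single (xs i) 1 by
      rw [δ]; exact dif_neg h]
    exact (Finsupp.smul_single_one (xs i) (lam i)).symm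
  · simp [δ]

/-- The Graev functional. -/
noncomputable def graev (base : X) (z : FreeL X base) : ℝ :=
  sInf (graevSet base z)

lemma graev_nonneg (base : X) (z : FreeL X base) : 0 ≤ graev base z :=
  le_csInf (graevSet_nonempty base z) (graevSet_nonneg base z)

lemma graev_le {base : X} {z : FreeL X base} {s : ℝ} (hs : s ∈ graevSet base z) :
    graev base z ≤ s :=
  csInf_le (bddBelow_graevSet base z) hs

lemma graev_zero (base : X) : graev base (0 : FreeL X base) = 0 := by
  refine le_antisymm (graev_le ?_) (graev_nonneg base 0)
  exact ⟨0, fun i => 0, fun i => base, fun i => base, by simp, by simp, by simp⟩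

lemma graev_add_le (base : X) (x y : FreeL X base) :
    graev base (x + y) ≤ graev base x + graev base y := by
  have key : ∀ a ∈ graevSet base x, ∀ b ∈ graevSet base y,
      graev base (x + y) ≤ a + b := by
    rintro a ⟨n, lam, xs, ys, hx1, hx2, rfl⟩ b ⟨m, mu, us, vs, hy1, hy2, rfl⟩
    refine graev_le ⟨n + m, Fin.append lam mu, Fin.append xs us, Fin.append ys vs,
      ?_, ?_, ?_⟩
    · rw [Fin.sum_univ_add]
      simp only [Fin.append_left, Fin.append_right]
      rw [← hx1, ← hy1]
    · rw [Fin.sum_univ_add]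
      simp only [Fin.append_left, Fin.append_right]
      rw [← hx2, ← hy2, add_zero]
    · rw [Fin.sum_univ_add]
      simp only [Fin.append_left, Fin.append_right]
  have h1 : graev base (x + y) - graev base y ≤ graev base x := by
    refine le_csInf (graevSet_nonempty base x) fun a ha => ?_
    have h2 : graev base (x + y) - a ≤ graev base y := by
      refine le_csInf (graevSet_nonempty base y) fun b hb => ?_
      have := key a ha b hb
      linarith
    linarith
  linarith

lemma graev_smul_le (base : X) (c : ℝ) (z : FreeL X base) :
    graev base (c • z) ≤ |c| * graev base z := by
  rcases eq_or_ne c 0 with rfl | hc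
  · simp [graev_zero, graev_nonneg]
  have key : ∀ s ∈ graevSet base z, graev base (c • z) ≤ |c| * s := by
    rintro s ⟨n, lam, xs, ys, h1, h2, rfl⟩
    refine graev_le ⟨n, fun i => c * lam i, xs, ys, ?_, ?_, ?_⟩
    · have := congrArg (fun w : FreeL X base => c • w) h1
      simpa [Finset.smul_sum, smul_smul] using this
    · have := congrArg (fun w : FreeL X base => c • w) h2
      simpa [Finset.smul_sum, smul_smul] using this
    · rw [Finset.mul_sum]
      refine Finset.sum_congr rfl fun i _ => ?_
      rw [abs_mul, mul_assoc]
  have h : graev base (c • z) / |c| ≤ graev base z := by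
    refine le_csInf (graevSet_nonempty base z) fun s hs => ?_
    rw [div_le_iff₀ (abs_pos.mpr hc)]
    rw [mul_comm]
    exact key s hs
  calc graev base (c • z) = |c| * (graev base (c • z) / |c|) := by
        field_simp
    _ ≤ |c| * graev base z := by
        exact mul_le_mul_of_nonneg_left h (abs_nonneg c)

lemma graev_smul (base : X) (c : ℝ) (z : FreeL X base) :
    graev base (c • z) = |c| * graev base z := by
  rcases eq_or_ne c 0 with rfl | hc
  · simp [graev_zero]
  refine le_antisymm (graev_smul_le base c z) ?_
  have h := graev_smul_le base c⁻¹ (c • z)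
  rw [smul_smul, inv_mul_cancel₀ hc, one_smul, abs_inv] at h
  have hpos : 0 < |c| := abs_pos.mpr hc
  calc |c| * graev base z ≤ |c| * (|c|⁻¹ * graev base (c • z)) :=
        mul_le_mul_of_nonneg_left h (le_of_lt hpos)
    _ = graev base (c • z) := by field_simp

/-- The Graev functional as a seminorm. -/
noncomputable def graevSeminorm (base : X) : Seminorm ℝ (FreeL X base) :=
  Seminorm.of (graev base) (graev_add_le base) (fun c z => by
    rw [Real.norm_eq_abs]; exact graev_smul base c z)

lemma graevSeminorm_good (base : X) : IsGoodSeminorm base (graevSeminorm base) := by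
  intro x y
  show graev base (δ base x - δ base y) ≤ dist x y
  have h := graev_le (base := base) (z := δ base x - δ base y)
    (s := |(1:ℝ)| * dist x x + |(-1:ℝ)| * dist y x)
    ⟨2, ![1, -1], ![x, y], ![x, x], ?_, ?_, ?_⟩
  · refine le_trans h ?_
    simp [dist_comm]
  · simp [Fin.sum_univ_two, sub_eq_add_neg]
  · simp [Fin.sum_univ_two]
  · simp [Fin.sum_univ_two]

lemma le_graev {base : X} {p : Seminorm ℝ (FreeL X base)} (hp : IsGoodSeminorm base p)
    (z : FreeL X base) : p z ≤ graev base z := by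
  refine le_csInf (graevSet_nonempty base z) ?_
  rintro s ⟨n, lam, xs, ys, h1, h2, rfl⟩
  have hz : z = ∑ i, lam i • (δ base (xs i) - δ base (ys i)) := by
    have : (∑ i, lam i • (δ base (xs i) - δ base (ys i)))
        = (∑ i, lam i • δ base (xs i)) - ∑ i, lam i • δ base (ys i) := by
      rw [← Finset.sum_sub_distrib]
      exact Finset.sum_congr rfl fun i _ => smul_sub _ _ _
    rw [this, ← h1, ← h2, sub_zero]
  calc p z = p (∑ i, lam i • (δ base (xs i) - δ base (ys i))) := by rw [← hz]
    _ ≤ ∑ i, p (lam i • (δ base (xs i) - δ base (ys i))) :=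
        Finset.le_sum_of_subadditive p (map_zero p).le (map_add_le_add p) _ _
    _ ≤ ∑ i, |lam i| * dist (xs i) (ys i) := by
        refine Finset.sum_le_sum fun i _ => ?_
        rw [map_smul_eq_mul, Real.norm_eq_abs]
        exact mul_le_mul_of_nonneg_left (hp (xs i) (ys i)) (abs_nonneg _)

end FreeL

/-- Graev/Kantorovich description of the norm of the free normed space:
`‖z‖` is the infimum of `∑ |λᵢ| d(xᵢ, yᵢ)` over all representations
`z = ∑ λᵢ xᵢ`, `0 = ∑ λᵢ yᵢ` with `λᵢ ∈ ℝ` and `xᵢ, yᵢ ∈ X`. -/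
theorem freeNorm_eq_graev_formula
    {X : Type*} [MetricSpace X] (base : X) (z : FreeL X base) :
    FreeL.freeNorm base z =
      sInf {s : ℝ | ∃ (n : ℕ) (lam : Fin n → ℝ) (xs ys : Fin n → X),
        z = ∑ i, lam i • FreeL.δ base (xs i) ∧
        (0 : FreeL X base) = ∑ i, lam i • FreeL.δ base (ys i) ∧
        s = ∑ i, |lam i| * dist (xs i) (ys i)} := by
  show FreeL.freeNorm base z = FreeL.graev base z
  haveI : Nonempty {p : Seminorm ℝ (FreeL X base) // FreeL.IsGoodSeminorm base p} :=
    ⟨⟨FreeL.graevSeminorm base, FreeL.graevSeminorm_good base⟩⟩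
  have hbdd : BddAbove (Set.range fun p :
      {p : Seminorm ℝ (FreeL X base) // FreeL.IsGoodSeminorm base p} => p.1 z) := by
    refine ⟨FreeL.graev base z, ?_⟩
    rintro r ⟨p, rfl⟩
    exact FreeL.le_graev p.2 z
  refine le_antisymm (ciSup_le fun p => FreeL.le_graev p.2 z) ?_
  exact le_ciSup hbdd ⟨FreeL.graevSeminorm base, FreeL.graevSeminorm_good base⟩
end

section
/- Integer value property of the transportation problem: if a real matrix A has the property that the sum of entries in each row and each column is an integer, then the nonzero entries of A can be replaced by integers without changing any row-sum or column-sum. -/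
open Finset

lemma two_mul_card_le (m n : ℕ) (S : Finset (Fin m × Fin n))
    (hrowdeg : ∀ p ∈ S, ∃ q ∈ S, q ≠ p ∧ q.1 = p.1) :
    2 * (S.image Prod.fst).card ≤ S.card := by
  classical
  have h1 : S.card = ∑ i ∈ S.image Prod.fst, (S.filter (fun p => p.1 = i)).card :=
    Finset.card_eq_sum_card_fiberwise (fun p hp => Finset.mem_image_of_mem _ hp)
  rw [h1]
  calc 2 * (S.image Prod.fst).card = ∑ _i ∈ S.image Prod.fst, 2 := by
        rw [Finset.sum_const, smul_eq_mul, mul_comm]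
    _ ≤ _ := by
        apply Finset.sum_le_sum
        intro i hi
        obtain ⟨p, hpS, hpi⟩ := Finset.mem_image.mp hi
        obtain ⟨q, hqS, hqp, hq1⟩ := hrowdeg p hpS
        rw [show (2:ℕ) = 1 + 1 from rfl, Nat.add_one_le_iff, Finset.one_lt_card_iff]
        exact ⟨p, q, Finset.mem_filter.mpr ⟨hpS, hpi⟩,
          Finset.mem_filter.mpr ⟨hqS, hq1.trans hpi⟩, fun h => hqp h.symm⟩

lemma exists_circulation (m n : ℕ) (S : Finset (Fin m × Fin n)) (hS : S.Nonempty)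
    (hrowdeg : ∀ p ∈ S, ∃ q ∈ S, q ≠ p ∧ q.1 = p.1)
    (hcoldeg : ∀ p ∈ S, ∃ q ∈ S, q ≠ p ∧ q.2 = p.2) :
    ∃ f : Fin m × Fin n → ℝ, f ≠ 0 ∧ (∀ p, p ∉ S → f p = 0) ∧
      (∀ i, ∑ j, f (i, j) = 0) ∧ (∀ j, ∑ i, f (i, j) = 0) := by
  classical
  set R : Finset (Fin m) := S.image Prod.fst with hR
  set C : Finset (Fin n) := S.image Prod.snd with hC
  obtain ⟨phat, hphat⟩ := hS
  have hj0 : phat.2 ∈ C := Finset.mem_image_of_mem _ hphat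
  set j0 : Fin n := phat.2 with hj0def
  set C' : Finset (Fin n) := C.erase j0 with hC'
  have hcardR : 2 * R.card ≤ S.card := two_mul_card_le m n S hrowdeg
  have hcardC2 : 2 * C.card ≤ S.card := by
    have := two_mul_card_le n m (S.image Prod.swap) ?_
    · rwa [Finset.image_image, Finset.card_image_of_injective _ Prod.swap_injective,
        show Prod.fst ∘ Prod.swap = (Prod.snd : Fin m × Fin n → Fin n) from rfl] at this
    · intro p hp
      obtain ⟨q, hqS, hq⟩ := Finset.mem_image.mp hp
      obtain ⟨r, hrS, hrq, hr2⟩ := hcoldeg q hqS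
      refine ⟨r.swap, Finset.mem_image_of_mem _ hrS, ?_, by rw [← hq]; exact hr2⟩
      intro h
      apply hrq
      have h2 := congrArg Prod.swap (h.trans hq.symm)
      simpa using h2
  -- the linear map
  let φ : (↥S → ℝ) →ₗ[ℝ] ((↥R → ℝ) × (↥C' → ℝ)) :=
    { toFun := fun g =>
        (fun i => ∑ p : ↥S, if (p : Fin m × Fin n).1 = (i : Fin m) then g p else 0,
         fun j => ∑ p : ↥S, if (p : Fin m × Fin n).2 = (j : Fin n) then g p else 0),
      map_add' := by
        intro g h
        refine Prod.ext ?_ ?_ <;> · funext x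
                                    simp only [Prod.mk_add_mk, Prod.fst_add, Prod.snd_add, Pi.add_apply]
                                    rw [← Finset.sum_add_distrib]
                                    apply Finset.sum_congr rfl
                                    intro p _
                                    split <;> simp
      map_smul' := by
        intro c g
        refine Prod.ext ?_ ?_ <;> · funext x
                                    simp only [Prod.smul_mk, Prod.smul_fst, Prod.smul_snd, Pi.smul_apply, smul_eq_mul, RingHom.id_apply]
                                    rw [Finset.mul_sum]
                                    apply Finset.sum_congr rfl
                                    intro p _
                                    split <;> simp }
  have hnotinj : ¬ Function.Injective φ := by
    intro hinj
    have hle := LinearMap.finrank_le_finrank_of_injective hinj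
    rw [Module.finrank_pi, Module.finrank_prod, Module.finrank_pi, Module.finrank_pi,
      Fintype.card_coe, Fintype.card_coe, Fintype.card_coe] at hle
    have hC'card : C'.card = C.card - 1 := Finset.card_erase_of_mem hj0
    have hR1 : 1 ≤ R.card := Finset.card_pos.mpr ⟨phat.1, Finset.mem_image_of_mem _ hphat⟩
    omega
  obtain ⟨g, hgker, hg0⟩ : ∃ g, φ g = 0 ∧ g ≠ 0 := by
    by_contra h
    push_neg at h
    exact hnotinj ((LinearMap.ker_eq_bot (f := φ)).mp (by
      rw [Submodule.eq_bot_iff]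
      intro g hg
      by_contra hne
      exact hne (h g (LinearMap.mem_ker.mp hg) ▸ rfl)))
  set f : Fin m × Fin n → ℝ := fun p => if h : p ∈ S then g ⟨p, h⟩ else 0 with hfdef
  have hsupp : ∀ p, p ∉ S → f p = 0 := fun p hp => dif_neg hp
  have hfg : ∀ p : ↥S, g p = f ↑p := by
    intro p
    simp [hfdef]
  -- row sums
  have hrowsum : ∀ i : Fin m, ∑ j, f (i, j) = ∑ p : ↥S, if (↑p : Fin m × Fin n).1 = i then g p else 0 := by
    intro i
    have e1 : (∑ p : ↥S, if (↑p : Fin m × Fin n).1 = i then g p else 0)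
        = ∑ p ∈ S, (if p.1 = i then f p else 0) := by
      rw [← Finset.sum_coe_sort S (fun p => if p.1 = i then f p else 0)]
      apply Finset.sum_congr rfl
      intro p _
      rw [hfg p]
    have e2 : (∑ p ∈ S, (if p.1 = i then f p else 0))
        = ∑ p : Fin m × Fin n, (if p.1 = i then f p else 0) := by
      apply Finset.sum_subset (Finset.subset_univ S)
      intro p _ hp
      rw [hsupp p hp]
      simp
    rw [e1, e2, Fintype.sum_prod_type]
    rw [Finset.sum_comm]
    apply Finset.sum_congr rfl
    intro j _
    rw [show (∑ x : Fin m, if (x, j).1 = i then f (x, j) else 0)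
      = ∑ x : Fin m, if x = i then f (x, j) else 0 from rfl,
      Finset.sum_ite_eq' Finset.univ i (fun x => f (x, j))]
    simp
  -- column sums
  have hcolsum : ∀ j : Fin n, ∑ i, f (i, j) = ∑ p : ↥S, if (↑p : Fin m × Fin n).2 = j then g p else 0 := by
    intro j
    have e1 : (∑ p : ↥S, if (↑p : Fin m × Fin n).2 = j then g p else 0)
        = ∑ p ∈ S, (if p.2 = j then f p else 0) := by
      rw [← Finset.sum_coe_sort S (fun p => if p.2 = j then f p else 0)]
      apply Finset.sum_congr rfl
      intro p _
      rw [hfg p]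
    have e2 : (∑ p ∈ S, (if p.2 = j then f p else 0))
        = ∑ p : Fin m × Fin n, (if p.2 = j then f p else 0) := by
      apply Finset.sum_subset (Finset.subset_univ S)
      intro p _ hp
      rw [hsupp p hp]
      simp
    rw [e1, e2, Fintype.sum_prod_type]
    apply Finset.sum_congr rfl
    intro i _
    rw [show (∑ y : Fin n, if (i, y).2 = j then f (i, y) else 0)
      = ∑ y : Fin n, if y = j then f (i, y) else 0 from rfl,
      Finset.sum_ite_eq' Finset.univ j (fun y => f (i, y))]
    simp
  -- kernel facts
  have hker1 : ∀ i : Fin m, i ∈ R → (∑ p : ↥S, if (↑p : Fin m × Fin n).1 = i then g p else 0) = 0 := by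
    intro i hi
    have := congrFun (congrArg Prod.fst hgker) ⟨i, hi⟩
    simpa [φ] using this
  have hker2 : ∀ j : Fin n, j ∈ C' → (∑ p : ↥S, if (↑p : Fin m × Fin n).2 = j then g p else 0) = 0 := by
    intro j hj
    have := congrFun (congrArg Prod.snd hgker) ⟨j, hj⟩
    simpa [φ] using this
  have hrow0 : ∀ i : Fin m, ∑ j, f (i, j) = 0 := by
    intro i
    rw [hrowsum i]
    by_cases hi : i ∈ R
    · exact hker1 i hi
    · apply Finset.sum_eq_zero
      intro p _
      rw [if_neg]
      intro h
      exact hi (h ▸ Finset.mem_image_of_mem Prod.fst p.2)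
  have hcol0' : ∀ j : Fin n, j ≠ j0 → ∑ i, f (i, j) = 0 := by
    intro j hj
    rw [hcolsum j]
    by_cases hjC : j ∈ C
    · exact hker2 j (Finset.mem_erase.mpr ⟨hj, hjC⟩)
    · apply Finset.sum_eq_zero
      intro p _
      rw [if_neg]
      intro h
      exact hjC (h ▸ Finset.mem_image_of_mem Prod.snd p.2)
  have hcol0 : ∀ j : Fin n, ∑ i, f (i, j) = 0 := by
    intro j
    by_cases hj : j = j0
    · 
      have htot : ∑ q : Fin n, ∑ i, f (i, q) = 0 := by
        rw [Finset.sum_comm]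
        exact Finset.sum_eq_zero fun i _ => hrow0 i
      have := Finset.add_sum_erase Finset.univ (fun q => ∑ i, f (i, q)) (Finset.mem_univ j)
      rw [← this] at htot
      have hzero : ∑ q ∈ Finset.univ.erase j, ∑ i, f (i, q) = 0 :=
        Finset.sum_eq_zero fun q hq => hcol0' q (hj ▸ (Finset.mem_erase.mp hq).1)
      rw [hzero, add_zero] at htot
      exact htot
    · exact hcol0' j hj
  refine ⟨f, ?_, hsupp, hrow0, hcol0⟩
  intro hf
  apply hg0
  funext p
  have := congrFun hf ↑p
  rw [← hfg p] at this
  exact this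
open scoped Classical in
lemma base_case (m n : ℕ) (A : Matrix (Fin m) (Fin n) ℝ)
    (h : ∀ i j, ∃ z : ℤ, A i j = (z : ℝ)) :
    ∃ B : Matrix (Fin m) (Fin n) ℤ,
      (∀ i j, A i j = 0 → B i j = 0) ∧
      (∀ i : Fin m, ∑ j, (B i j : ℝ) = ∑ j, A i j) ∧
      (∀ j : Fin n, ∑ i, (B i j : ℝ) = ∑ i, A i j) := by
  refine ⟨fun i j => (h i j).choose, ?_, ?_, ?_⟩
  · intro i j hij
    have h2 := (h i j).choose_spec
    exact_mod_cast (h2.symm.trans hij)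
  · intro i
    exact Finset.sum_congr rfl fun j _ => ((h i j).choose_spec).symm
  · intro j
    exact Finset.sum_congr rfl fun i _ => ((h i j).choose_spec).symm

open scoped Classical in
lemma key_induction (m n : ℕ) : ∀ (N : ℕ) (A : Matrix (Fin m) (Fin n) ℝ),
    (Finset.univ.filter (fun p : Fin m × Fin n => ¬∃ z : ℤ, A p.1 p.2 = (z : ℝ))).card ≤ N →
    (∀ i : Fin m, ∃ z : ℤ, ∑ j, A i j = (z : ℝ)) →
    (∀ j : Fin n, ∃ z : ℤ, ∑ i, A i j = (z : ℝ)) →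
    ∃ B : Matrix (Fin m) (Fin n) ℤ,
      (∀ i j, A i j = 0 → B i j = 0) ∧
      (∀ i : Fin m, ∑ j, (B i j : ℝ) = ∑ j, A i j) ∧
      (∀ j : Fin n, ∑ i, (B i j : ℝ) = ∑ i, A i j) := by
  intro N
  induction N with
  | zero =>
    intro A hcard hrow hcol
    apply base_case
    intro i j
    by_contra hc
    have : (i, j) ∈ Finset.univ.filter (fun p : Fin m × Fin n => ¬∃ z : ℤ, A p.1 p.2 = (z : ℝ)) :=
      Finset.mem_filter.mpr ⟨Finset.mem_univ _, hc⟩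
    have := Finset.card_pos.mpr ⟨_, this⟩
    omega
  | succ N ih =>
    intro A hcard hrow hcol
    set S := Finset.univ.filter (fun p : Fin m × Fin n => ¬∃ z : ℤ, A p.1 p.2 = (z : ℝ)) with hSdef
    by_cases hS : S.Nonempty
    · -- degree hypotheses
      have hmemS : ∀ p : Fin m × Fin n, p ∈ S ↔ ¬∃ z : ℤ, A p.1 p.2 = (z : ℝ) := by
        intro p
        simp [hSdef]
      have hrowdeg : ∀ p ∈ S, ∃ q ∈ S, q ≠ p ∧ q.1 = p.1 := by
        intro p hp
        by_contra h
        push_neg at h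
        have hint : ∀ j, j ≠ p.2 → ∃ z : ℤ, A p.1 j = (z : ℝ) := by
          intro j hj
          by_contra hc
          have hqS : (p.1, j) ∈ S := (hmemS _).mpr hc
          exact h (p.1, j) hqS (fun he => hj (congrArg Prod.snd he)) rfl
        set w : Fin n → ℤ := fun j => if hj : j ≠ p.2 then (hint j hj).choose else 0 with hw
        have hsum : ∑ j ∈ Finset.univ.erase p.2, A p.1 j
            = ((∑ j ∈ Finset.univ.erase p.2, w j : ℤ) : ℝ) := by
          push_cast
          apply Finset.sum_congr rfl
          intro j hj
          have hj' := (Finset.mem_erase.mp hj).1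
          rw [hw]
          simp only [hj', dif_pos, ne_eq, not_false_eq_true]
          exact (hint j hj').choose_spec
        obtain ⟨zr, hzr⟩ := hrow p.1
        have hdec := Finset.add_sum_erase Finset.univ (A p.1) (Finset.mem_univ p.2)
        apply (hmemS p).mp hp
        refine ⟨zr - ∑ j ∈ Finset.univ.erase p.2, w j, ?_⟩
        push_cast
        rw [← hzr, ← hdec, hsum]
        push_cast
        ring
      have hcoldeg : ∀ p ∈ S, ∃ q ∈ S, q ≠ p ∧ q.2 = p.2 := by
        intro p hp
        by_contra h
        push_neg at h
        have hint : ∀ i, i ≠ p.1 → ∃ z : ℤ, A i p.2 = (z : ℝ) := by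
          intro i hi
          by_contra hc
          have hqS : (i, p.2) ∈ S := (hmemS _).mpr hc
          exact h (i, p.2) hqS (fun he => hi (congrArg Prod.fst he)) rfl
        set w : Fin m → ℤ := fun i => if hi : i ≠ p.1 then (hint i hi).choose else 0 with hw
        have hsum : ∑ i ∈ Finset.univ.erase p.1, A i p.2
            = ((∑ i ∈ Finset.univ.erase p.1, w i : ℤ) : ℝ) := by
          push_cast
          apply Finset.sum_congr rfl
          intro i hi
          have hi' := (Finset.mem_erase.mp hi).1
          rw [hw]
          simp only [hi', dif_pos, ne_eq, not_false_eq_true]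
          exact (hint i hi').choose_spec
        obtain ⟨zc, hzc⟩ := hcol p.2
        have hdec := Finset.add_sum_erase Finset.univ (fun i => A i p.2) (Finset.mem_univ p.1)
        apply (hmemS p).mp hp
        refine ⟨zc - ∑ i ∈ Finset.univ.erase p.1, w i, ?_⟩
        push_cast
        rw [← hzc, ← hdec, hsum]
        push_cast
        ring
      obtain ⟨f, hf0, hfsupp, hfrow, hfcol⟩ := exists_circulation m n S hS hrowdeg hcoldeg
      obtain ⟨p0, hp0⟩ : ∃ p, f p ≠ 0 := by
        by_contra h
        push_neg at h
        exact hf0 (funext h)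
      set t : ℝ := ((⌈A p0.1 p0.2⌉ : ℝ) - A p0.1 p0.2) / f p0 with ht
      set A' : Matrix (Fin m) (Fin n) ℝ := fun i j => A i j + t * f (i, j) with hA'
      have hzero : ∀ i j, A i j = 0 → A' i j = 0 := by
        intro i j hij
        have hns : (i, j) ∉ S := by
          rw [hmemS]
          push_neg
          exact ⟨0, by rw [hij]; norm_num⟩
        rw [hA']
        simp [hfsupp _ hns, hij]
      have hrowsum' : ∀ i, ∑ j, A' i j = ∑ j, A i j := by
        intro i
        rw [hA']
        simp only
        rw [Finset.sum_add_distrib, ← Finset.mul_sum, hfrow i, mul_zero, add_zero]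
      have hcolsum' : ∀ j, ∑ i, A' i j = ∑ i, A i j := by
        intro j
        rw [hA']
        simp only
        rw [Finset.sum_add_distrib, ← Finset.mul_sum, hfcol j, mul_zero, add_zero]
      have hp0S : p0 ∈ S := by
        by_contra h
        exact hp0 (hfsupp _ h)
      have hA'p0 : A' p0.1 p0.2 = ((⌈A p0.1 p0.2⌉ : ℤ) : ℝ) := by
        rw [hA', ht]
        simp only
        rw [div_mul_cancel₀ _ hp0]
        ring
      have hsub : (Finset.univ.filter (fun p : Fin m × Fin n => ¬∃ z : ℤ, A' p.1 p.2 = (z : ℝ)))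
          ⊆ S.erase p0 := by
        intro p hp
        have hp' : ¬∃ z : ℤ, A' p.1 p.2 = (z : ℝ) := (Finset.mem_filter.mp hp).2
        refine Finset.mem_erase.mpr ⟨?_, ?_⟩
        · intro he
          exact hp' ⟨⌈A p0.1 p0.2⌉, by rw [he]; exact hA'p0⟩
        · by_contra h
          apply hp'
          obtain ⟨z, hz⟩ := not_not.mp (fun hc => h ((hmemS p).mpr hc))
          refine ⟨z, ?_⟩
          rw [hA']
          simp [hfsupp _ h, hz]
      have hcard' : (Finset.univ.filter
          (fun p : Fin m × Fin n => ¬∃ z : ℤ, A' p.1 p.2 = (z : ℝ))).card ≤ N := by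
        have h1 := Finset.card_le_card hsub
        have h2 : (S.erase p0).card = S.card - 1 := Finset.card_erase_of_mem hp0S
        have h3 := Finset.card_pos.mpr ⟨p0, hp0S⟩
        omega
      obtain ⟨B, hB0, hBrow, hBcol⟩ := ih A' hcard'
        (fun i => (hrowsum' i) ▸ hrow i) (fun j => (hcolsum' j) ▸ hcol j)
      refine ⟨B, fun i j hij => hB0 i j (hzero i j hij),
        fun i => (hBrow i).trans (hrowsum' i), fun j => (hBcol j).trans (hcolsum' j)⟩
    · apply base_case
      intro i j
      by_contra hc
      exact hS ⟨(i, j), (Finset.mem_filter.mpr ⟨Finset.mem_univ _, hc⟩)⟩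

/-- Integer value property of the transportation problem: if every row-sum and
every column-sum of a real matrix `A` is an integer, then the nonzero entries
of `A` can be replaced by integers without changing any row-sum or column-sum. -/
theorem integer_value_property_matrix
    (m n : ℕ) (A : Matrix (Fin m) (Fin n) ℝ)
    (hrow : ∀ i : Fin m, ∃ z : ℤ, ∑ j, A i j = (z : ℝ))
    (hcol : ∀ j : Fin n, ∃ z : ℤ, ∑ i, A i j = (z : ℝ)) :
    ∃ B : Matrix (Fin m) (Fin n) ℤ,
      (∀ i j, A i j = 0 → B i j = 0) ∧
      (∀ i : Fin m, ∑ j, (B i j : ℝ) = ∑ j, A i j) ∧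
      (∀ j : Fin n, ∑ i, (B i j : ℝ) = ∑ i, A i j) := by
  classical
  exact key_induction m n
    ((Finset.univ.filter (fun p : Fin m × Fin n => ¬∃ z : ℤ, A p.1 p.2 = (z : ℝ))).card)
    A le_rfl hrow hcol
end

section
/- Integer value property of the Graev norm: if x ∈ L(X,∗,d) is a linear combination of points of X with integer coefficients, then the infimum defining ‖x‖ (over representations x = Σ λᵢxᵢ, 0 = Σ λᵢyᵢ of Σ|λᵢ|d(xᵢ,yᵢ)) is attained at representations in which all coefficients λᵢ are integers. -/
open scoped BigOperators

open Classical
namespace Graev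
open FreeL
variable {X : Type*} [MetricSpace X] {base : X}

noncomputable def coord (base : X) (w : {x : X // x ≠ base}) : FreeL X base →ₗ[ℝ] ℝ :=
  Finsupp.lapply w

lemma coord_delta (w : {x : X // x ≠ base}) (x : X) :
    coord base w (δ base x) = if x = (w : X) then 1 else 0 := by
  unfold coord δ
  by_cases h : x = base
  · change (Finsupp.lapply w : ({x : X // x ≠ base} →₀ ℝ) →ₗ[ℝ] ℝ) (if h : x = base then (0 : {x : X // x ≠ base} →₀ ℝ) else Finsupp.single ⟨x, h⟩ 1) = _
    simp only [dif_pos h, map_zero]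
    have hxw : x ≠ (w : X) := fun he => w.2 (h ▸ he.symm : (w : X) = base)
    simp [hxw]
  · change (Finsupp.lapply w : ({x : X // x ≠ base} →₀ ℝ) →ₗ[ℝ] ℝ) (if h : x = base then (0 : {x : X // x ≠ base} →₀ ℝ) else Finsupp.single ⟨x, h⟩ 1) = _
    simp only [dif_neg h]
    change (Finsupp.single (⟨x, h⟩ : {x : X // x ≠ base}) (1:ℝ)) w = _
    rw [Finsupp.single_apply]
    by_cases hx : x = (w : X)
    · have : (⟨x, h⟩ : {x : X // x ≠ base}) = w := Subtype.ext hx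
      simp [this, hx]
    · have : (⟨x, h⟩ : {x : X // x ≠ base}) ≠ w := fun he => hx (congrArg Subtype.val he)
      simp [this, hx]

lemma ext_coord {a b : FreeL X base} (h : ∀ w, coord base w a = coord base w b) : a = b :=
  Finsupp.ext h

lemma coord_sum {ι : Type*} (s : Finset ι) (f : ι → ℝ) (u v : ι → X)
    (w : {x : X // x ≠ base}) :
    coord base w (∑ i ∈ s, f i • (δ base (u i) - δ base (v i))) =
      (∑ i ∈ s.filter (fun i => u i = (w : X)), f i)
        - (∑ i ∈ s.filter (fun i => v i = (w : X)), f i) := by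
  rw [map_sum]
  have : ∀ i ∈ s, coord base w (f i • (δ base (u i) - δ base (v i)))
      = (if u i = (w : X) then f i else 0) - (if v i = (w : X) then f i else 0) := by
    intro i _
    rw [map_smul, map_sub, coord_delta, coord_delta]
    by_cases h1 : u i = (w : X) <;> by_cases h2 : v i = (w : X) <;> simp [h1, h2]
  rw [Finset.sum_congr rfl this, Finset.sum_sub_distrib,
    Finset.sum_filter, Finset.sum_filter]

lemma int_sum {ι : Type*} (s : Finset ι) (f : ι → ℝ)
    (h : ∀ i ∈ s, ∃ k : ℤ, f i = (k : ℝ)) : ∃ k : ℤ, ∑ i ∈ s, f i = (k : ℝ) := by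
  induction s using Finset.induction_on with
  | empty => exact ⟨0, by simp⟩
  | insert a t hx ih =>
    obtain ⟨k1, hk1⟩ := h a (Finset.mem_insert_self a t)
    obtain ⟨k2, hk2⟩ := ih (fun i hi => h i (Finset.mem_insert_of_mem hi))
    exact ⟨k1 + k2, by rw [Finset.sum_insert hx, hk1, hk2]; push_cast; ring⟩

end Graev

namespace Graev
open FreeL
variable {X : Type*} [MetricSpace X] {base : X}

lemma delta_base : δ base base = 0 := by unfold δ; simp

lemma not_indep {m : ℕ} (u v : Fin m → X) (f : Fin m → ℝ)
    (hint : ∀ w, ∃ k : ℤ,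
      coord base w (∑ i, f i • (δ base (u i) - δ base (v i))) = (k : ℝ))
    (F : Finset (Fin m))
    (hF : F = Finset.univ.filter (fun i => ¬∃ k : ℤ, f i = (k : ℝ)))
    (hne : F.Nonempty) :
    ¬ LinearIndependent ℝ (fun i : F => δ base (u i) - δ base (v i)) := by
  intro hind
  -- no self loops among F
  have hloop : ∀ i : F, u i ≠ v i := by
    intro i he
    have h0 := hind.ne_zero i
    rw [he, sub_self] at h0
    exact h0 rfl
  set V : Finset X := ((F.image u) ∪ (F.image v)).filter (fun x => x ≠ base) with hV
  -- each endpoint is base or in V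
  have hend : ∀ i : F, ∀ x : X, (x = u i.1 ∨ x = v i.1) → x ≠ base → x ∈ V := by
    rintro i x (rfl | rfl) hxb
    · exact Finset.mem_filter.mpr ⟨Finset.mem_union_left _
        (Finset.mem_image.mpr ⟨i.1, i.2, rfl⟩), hxb⟩
    · exact Finset.mem_filter.mpr ⟨Finset.mem_union_right _
        (Finset.mem_image.mpr ⟨i.1, i.2, rfl⟩), hxb⟩
  -- |F| ≤ |V|
  have hFV : F.card ≤ V.card := by
    have hspan : Set.range (fun i : F => δ base (u i) - δ base (v i))
        ≤ (Submodule.span ℝ (↑(V.image (δ base)) : Set (FreeL X base)) : Set (FreeL X base)) := by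
      rintro y ⟨i, rfl⟩
      have hmem : ∀ x : X, (x = u i.1 ∨ x = v i.1) →
          δ base x ∈ Submodule.span ℝ (↑(V.image (δ base)) : Set (FreeL X base)) := by
        intro x hx
        by_cases hxb : x = base
        · rw [hxb, delta_base]; exact Submodule.zero_mem _
        · exact Submodule.subset_span (by
            exact_mod_cast Finset.mem_image.mpr ⟨x, hend i x hx hxb, rfl⟩)
      exact Submodule.sub_mem _ (hmem _ (Or.inl rfl)) (hmem _ (Or.inr rfl))
    have hcard := linearIndependent_le_span_aux' _ hind
      (↑(V.image (δ base)) : Set (FreeL X base)) hspan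
    have h1 : Fintype.card F = F.card := Fintype.card_coe F
    have h2 : Fintype.card (↑(V.image (δ base)) : Set (FreeL X base))
        = (V.image (δ base)).card := Fintype.card_coe _
    rw [h1, h2] at hcard
    exact hcard.trans (Finset.card_image_le)
  -- degree at least two at every vertex of V
  have hdeg : ∀ x ∈ V, 2 ≤ (F.filter (fun i => u i = x)).card
      + (F.filter (fun i => v i = x)).card := by
    intro x hxV
    have hxb : x ≠ base := (Finset.mem_filter.mp hxV).2
    by_contra hlt
    push_neg at hlt
    have h1 : 1 ≤ (F.filter (fun i => u i = x)).card
        + (F.filter (fun i => v i = x)).card := by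
      rcases Finset.mem_union.mp (Finset.mem_filter.mp hxV).1 with h | h
      · obtain ⟨i, hiF, hix⟩ := Finset.mem_image.mp h
        have hm : i ∈ F.filter (fun i => u i = x) := Finset.mem_filter.mpr ⟨hiF, hix⟩
        have := Finset.card_pos.mpr ⟨i, hm⟩
        omega
      · obtain ⟨i, hiF, hix⟩ := Finset.mem_image.mp h
        have hm : i ∈ F.filter (fun i => v i = x) := Finset.mem_filter.mpr ⟨hiF, hix⟩
        have := Finset.card_pos.mpr ⟨i, hm⟩
        omega
    -- the coordinate at x
    obtain ⟨k, hk⟩ := hint ⟨x, hxb⟩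
    rw [coord_sum] at hk
    -- split sums into F-part and complement
    have hsplit : ∀ g : Fin m → X,
        ∑ i ∈ Finset.univ.filter (fun i => g i = x), f i
          = (∑ i ∈ F.filter (fun i => g i = x), f i)
            + ∑ i ∈ (Finset.univ.filter (fun i => g i = x)).filter (fun i => i ∉ F), f i := by
      intro g
      rw [← Finset.sum_filter_add_sum_filter_not
        (Finset.univ.filter (fun i => g i = x)) (fun i => i ∈ F) f]
      congr 2
      ext i
      simp only [Finset.mem_filter, Finset.mem_univ, true_and]
      tauto
    obtain ⟨ku, hku⟩ := int_sum ((Finset.univ.filter (fun i => u i = x)).filter (fun i => i ∉ F)) f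
      (by
        intro i hi
        have hiF := (Finset.mem_filter.mp hi).2
        rw [hF] at hiF
        simp only [Finset.mem_filter, Finset.mem_univ, true_and, not_not] at hiF
        exact hiF)
    obtain ⟨kv, hkv⟩ := int_sum ((Finset.univ.filter (fun i => v i = x)).filter (fun i => i ∉ F)) f
      (by
        intro i hi
        have hiF := (Finset.mem_filter.mp hi).2
        rw [hF] at hiF
        simp only [Finset.mem_filter, Finset.mem_univ, true_and, not_not] at hiF
        exact hiF)
    rw [hsplit u, hsplit v, hku, hkv] at hk
    have hcase : ((F.filter (fun i => u i = x)).card = 1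
          ∧ (F.filter (fun i => v i = x)).card = 0)
        ∨ ((F.filter (fun i => u i = x)).card = 0
          ∧ (F.filter (fun i => v i = x)).card = 1) := by omega
    rcases hcase with ⟨hA, hB⟩ | ⟨hA, hB⟩
    · obtain ⟨i₀, hi₀⟩ := Finset.card_eq_one.mp hA
      rw [hi₀, Finset.sum_singleton, Finset.card_eq_zero.mp hB, Finset.sum_empty] at hk
      have hi₀F : i₀ ∈ F := by
        have : i₀ ∈ F.filter (fun i => u i = x) := by rw [hi₀]; exact Finset.mem_singleton_self _
        exact (Finset.mem_filter.mp this).1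
      rw [hF] at hi₀F
      simp only [Finset.mem_filter, Finset.mem_univ, true_and] at hi₀F
      exact hi₀F ⟨k - ku + kv, by push_cast; linarith⟩
    · obtain ⟨i₀, hi₀⟩ := Finset.card_eq_one.mp hB
      rw [hi₀, Finset.sum_singleton, Finset.card_eq_zero.mp hA, Finset.sum_empty] at hk
      have hi₀F : i₀ ∈ F := by
        have : i₀ ∈ F.filter (fun i => v i = x) := by rw [hi₀]; exact Finset.mem_singleton_self _
        exact (Finset.mem_filter.mp this).1
      rw [hF] at hi₀F
      simp only [Finset.mem_filter, Finset.mem_univ, true_and] at hi₀F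
      exact hi₀F ⟨-k + ku - kv, by push_cast; linarith⟩
  -- fiber counting
  have hfiber : ∀ g : Fin m → X,
      ∑ x ∈ V, (F.filter (fun i => g i = x)).card = (F.filter (fun i => g i ∈ V)).card := by
    intro g
    rw [Finset.card_eq_sum_card_fiberwise (f := g) (s := F.filter (fun i => g i ∈ V)) (t := V)
      (fun i hi => (Finset.mem_filter.mp hi).2)]
    apply Finset.sum_congr rfl
    intro x hx
    congr 1
    ext i
    simp only [Finset.mem_filter]
    constructor
    · rintro ⟨hiF, hgx⟩; exact ⟨⟨hiF, hgx ▸ hx⟩, hgx⟩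
    · rintro ⟨⟨hiF, _⟩, hgx⟩; exact ⟨hiF, hgx⟩
  have h2V : 2 * V.card ≤ (F.filter (fun i => u i ∈ V)).card
      + (F.filter (fun i => v i ∈ V)).card := by
    have := Finset.card_nsmul_le_sum V
      (fun x => (F.filter (fun i => u i = x)).card + (F.filter (fun i => v i = x)).card) 2 hdeg
    rw [Finset.sum_add_distrib, hfiber u, hfiber v] at this
    simpa [mul_comm] using this
  have hcu : (F.filter (fun i => u i ∈ V)).card ≤ F.card :=
    Finset.card_le_card (Finset.filter_subset _ _)
  have hcv : (F.filter (fun i => v i ∈ V)).card ≤ F.card :=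
    Finset.card_le_card (Finset.filter_subset _ _)
  have hVF : V.card = F.card := by omega
  have htu : F.filter (fun i => u i ∈ V) = F :=
    Finset.eq_of_subset_of_card_le (Finset.filter_subset _ _) (by omega)
  have htv : F.filter (fun i => v i ∈ V) = F :=
    Finset.eq_of_subset_of_card_le (Finset.filter_subset _ _) (by omega)
  have huV : ∀ i : F, u i.1 ∈ V := by
    intro i
    have : (i : Fin m) ∈ F.filter (fun i => u i ∈ V) := by rw [htu]; exact i.2
    exact (Finset.mem_filter.mp this).2
  have hvV : ∀ i : F, v i.1 ∈ V := by
    intro i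
    have : (i : Fin m) ∈ F.filter (fun i => v i ∈ V) := by rw [htv]; exact i.2
    exact (Finset.mem_filter.mp this).2
  -- the square matrix
  haveI : Nonempty F := hne.to_subtype
  have hcards : Fintype.card F = Fintype.card V := by
    rw [Fintype.card_coe, Fintype.card_coe, hVF]
  let e : {i // i ∈ F} ≃ {x // x ∈ V} := Fintype.equivOfCardEq hcards
  let M : Matrix {i // i ∈ F} {i // i ∈ F} ℝ := fun r c =>
    (if u c = ((e r) : X) then (1:ℝ) else 0) - (if v c = ((e r) : X) then 1 else 0)
  have hdet : M.det = 0 := by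
    rw [← Matrix.exists_vecMul_eq_zero_iff]
    refine ⟨(fun _ => 1), ?_, ?_⟩
    · intro h0
      have := congrFun h0 (Classical.arbitrary _)
      norm_num at this
    · funext c
      show ∑ r, (1:ℝ) * M r c = 0
      simp only [one_mul, M]
      rw [Finset.sum_sub_distrib]
      have hu1 : ∑ r : {i // i ∈ F}, (if u c = ((e r) : X) then (1:ℝ) else 0) = 1 := by
        rw [Equiv.sum_comp e (fun w : {x // x ∈ V} => if u c.1 = (w : X) then (1:ℝ) else 0)]
        have : ∑ w : {x // x ∈ V}, (if u c.1 = (w : X) then (1:ℝ) else 0)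
            = ∑ x ∈ V, (if u c.1 = x then (1:ℝ) else 0) :=
          Finset.sum_coe_sort V (fun x => if u c.1 = x then (1:ℝ) else 0)
        rw [this, Finset.sum_ite_eq, if_pos (huV c)]
      have hv1 : ∑ r : {i // i ∈ F}, (if v c = ((e r) : X) then (1:ℝ) else 0) = 1 := by
        rw [Equiv.sum_comp e (fun w : {x // x ∈ V} => if v c.1 = (w : X) then (1:ℝ) else 0)]
        have : ∑ w : {x // x ∈ V}, (if v c.1 = (w : X) then (1:ℝ) else 0)
            = ∑ x ∈ V, (if v c.1 = x then (1:ℝ) else 0) :=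
          Finset.sum_coe_sort V (fun x => if v c.1 = x then (1:ℝ) else 0)
        rw [this, Finset.sum_ite_eq, if_pos (hvV c)]
      rw [hu1, hv1, sub_self]
  obtain ⟨cv0, hcv0, hMcv⟩ := Matrix.exists_mulVec_eq_zero_iff.mpr hdet
  have hzero : ∑ i : {i // i ∈ F}, cv0 i • (δ base (u i) - δ base (v i)) = 0 := by
    apply ext_coord (b := 0)
    intro w
    rw [map_zero, map_sum]
    have hterm : ∀ i : {i // i ∈ F},
        coord base w (cv0 i • (δ base (u i.1) - δ base (v i.1)))
          = ((if u i.1 = (w : X) then (1:ℝ) else 0) - (if v i.1 = (w : X) then 1 else 0)) * cv0 i := by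
      intro i
      rw [map_smul, map_sub, coord_delta, coord_delta]
      simp [mul_comm]
    rw [Finset.sum_congr rfl (fun i _ => hterm i)]
    by_cases hwV : (w : X) ∈ V
    · have := congrFun hMcv (e.symm ⟨(w : X), hwV⟩)
      simp only [Matrix.mulVec, dotProduct, Pi.zero_apply, M] at this
      rw [Equiv.apply_symm_apply] at this
      exact this
    · apply Finset.sum_eq_zero
      intro i _
      have h1 : u i.1 ≠ (w : X) := fun h => hwV (h ▸ huV i)
      have h2 : v i.1 ≠ (w : X) := fun h => hwV (h ▸ hvV i)
      simp [h1, h2]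
  have := Fintype.linearIndependent_iff.mp hind cv0 hzero
  exact hcv0 (funext this)

end Graev

namespace Graev
open FreeL Finset
variable {X : Type*} [MetricSpace X] {base : X}

lemma descent {m : ℕ} (u v : Fin m → X) :
    ∀ (N : ℕ) (f : Fin m → ℝ), (Finset.univ.filter (fun i => f i ≠ 0)).card = N →
    (∀ i, 0 ≤ f i) →
    (∀ w, ∃ k : ℤ, coord base w (∑ i, f i • (δ base (u i) - δ base (v i))) = (k : ℝ)) →
    ∃ g : Fin m → ℕ,
      (∑ i, (g i : ℝ) • (δ base (u i) - δ base (v i)))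
        = ∑ i, f i • (δ base (u i) - δ base (v i)) ∧
      (∑ i, (g i : ℝ) * dist (u i) (v i)) ≤ ∑ i, f i * dist (u i) (v i) := by
  intro N
  induction N using Nat.strong_induction_on with
  | _ N IH =>
  intro f hcard hpos hint
  set F := Finset.univ.filter (fun i => ¬∃ k : ℤ, f i = (k : ℝ)) with hF
  by_cases hne : F.Nonempty
  · -- fractional part nonempty: descend
    have hdep := not_indep u v f hint F hF hne
    rw [Fintype.not_linearIndependent_iff] at hdep
    obtain ⟨c, hc0, i₁, hi₁⟩ := hdep
    set t : Fin m → ℝ := fun i => if h : i ∈ F then c ⟨i, h⟩ else 0 with ht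
    have htF : ∀ i, t i ≠ 0 → i ∈ F := by
      intro i h
      by_contra hiF
      simp only [ht, dif_neg hiF] at h
      exact h rfl
    have htsupp : ∀ i, t i ≠ 0 → f i ≠ 0 := by
      intro i h hfi
      have hiF := htF i h
      rw [hF] at hiF
      simp only [Finset.mem_filter, Finset.mem_univ, true_and] at hiF
      exact hiF ⟨0, by rw [hfi]; norm_num⟩
    have htcol : ∑ i, t i • (δ base (u i) - δ base (v i)) = 0 := by
      have h1 : ∑ i, t i • (δ base (u i) - δ base (v i))
          = ∑ i ∈ F, t i • (δ base (u i) - δ base (v i)) := by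
        refine (Finset.sum_subset (Finset.subset_univ F) ?_).symm
        intro i _ hiF
        simp [ht, dif_neg hiF]
      rw [h1, ← Finset.sum_coe_sort F (fun i => t i • (δ base (u i) - δ base (v i)))]
      rw [← hc0]
      apply Finset.sum_congr rfl
      intro i _
      congr 1
      simp [ht, i.2]
    have htne : t i₁.1 ≠ 0 := by
      simp only [ht, dif_pos i₁.2]
      exact hi₁
    -- massage direction: slope ≤ 0 and some negative coordinate
    obtain ⟨t', htcol', hslope, hneg, ht'F⟩ :
        ∃ t' : Fin m → ℝ, (∑ i, t' i • (δ base (u i) - δ base (v i)) = 0)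
          ∧ (∑ i, t' i * dist (u i) (v i)) ≤ 0 ∧ (∃ i, t' i < 0)
          ∧ (∀ i, t' i ≠ 0 → f i ≠ 0) := by
      by_cases hs : (∑ i, t i * dist (u i) (v i)) ≤ 0
      · by_cases hn : ∃ i, t i < 0
        · exact ⟨t, htcol, hs, hn, htsupp⟩
        · push_neg at hn
          refine ⟨-t, ?_, ?_, ?_, ?_⟩
          · simp only [Pi.neg_apply, neg_smul, Finset.sum_neg_distrib, htcol, neg_zero]
          · have h0 : 0 ≤ ∑ i, t i * dist (u i) (v i) :=
              Finset.sum_nonneg fun i _ => mul_nonneg (hn i) dist_nonneg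
            have : ∑ i, (-t) i * dist (u i) (v i) = -∑ i, t i * dist (u i) (v i) := by
              simp [neg_mul, Finset.sum_neg_distrib]
            rw [this]; linarith
          · exact ⟨i₁.1, by simp only [Pi.neg_apply, neg_neg, neg_lt_zero]; exact lt_of_le_of_ne (hn _) (Ne.symm htne)⟩
          · intro i h
            exact htsupp i (by simpa using h)
      · push_neg at hs
        refine ⟨-t, ?_, ?_, ?_, ?_⟩
        · simp only [Pi.neg_apply, neg_smul, Finset.sum_neg_distrib, htcol, neg_zero]
        · have : ∑ i, (-t) i * dist (u i) (v i) = -∑ i, t i * dist (u i) (v i) := by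
            simp [neg_mul, Finset.sum_neg_distrib]
          rw [this]; linarith
        · by_contra h
          push_neg at h
          have : ∑ i, t i * dist (u i) (v i) ≤ 0 :=
            Finset.sum_nonpos fun i _ => mul_nonpos_of_nonpos_of_nonneg
              (by have := h i; simp only [Pi.neg_apply, neg_lt_zero] at this; linarith) dist_nonneg
          linarith
        · intro i h
          exact htsupp i (by simpa using h)
    set Neg := Finset.univ.filter (fun i => t' i < 0) with hNeg
    have hNegne : Neg.Nonempty := by
      obtain ⟨i, hi⟩ := hneg
      exact ⟨i, by simp [hNeg, hi]⟩
    have hRne : (Neg.image (fun i => f i / (-t' i))).Nonempty := hNegne.image _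
    set α := (Neg.image (fun i => f i / (-t' i))).min' hRne with hα
    obtain ⟨i₀, hi₀Neg, hi₀⟩ := Finset.mem_image.mp (Finset.min'_mem _ hRne)
    have hαle : ∀ i ∈ Neg, α ≤ f i / (-t' i) := fun i hi =>
      Finset.min'_le _ _ (Finset.mem_image_of_mem _ hi)
    have hi₀neg : t' i₀ < 0 := by
      have := Finset.mem_filter.mp hi₀Neg
      exact this.2
    have hα0 : 0 ≤ α := by
      rw [hα, ← hi₀]
      exact div_nonneg (hpos i₀) (by linarith)
    set f' : Fin m → ℝ := fun i => f i + α * t' i with hf'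
    have hf'pos : ∀ i, 0 ≤ f' i := by
      intro i
      by_cases hti : t' i < 0
      · have h1 : α ≤ f i / (-t' i) := hαle i (by simp [hNeg, hti])
        have h2 : α * (-t' i) ≤ f i := (le_div_iff₀ (by linarith)).mp h1
        simp only [hf']
        nlinarith
      · push_neg at hti
        have := mul_nonneg hα0 hti
        simp only [hf']
        linarith [hpos i]
    have hf'sum : ∑ i, f' i • (δ base (u i) - δ base (v i))
        = ∑ i, f i • (δ base (u i) - δ base (v i)) := by
      have : ∀ i, f' i • (δ base (u i) - δ base (v i))
          = f i • (δ base (u i) - δ base (v i)) + α • (t' i • (δ base (u i) - δ base (v i))) := by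
        intro i
        rw [smul_smul, ← add_smul]
      rw [Finset.sum_congr rfl (fun i _ => this i), Finset.sum_add_distrib,
        ← Finset.smul_sum, htcol', smul_zero, add_zero]
    have hf'cost : ∑ i, f' i * dist (u i) (v i) ≤ ∑ i, f i * dist (u i) (v i) := by
      have heq : ∑ i, f' i * dist (u i) (v i)
          = ∑ i, f i * dist (u i) (v i) + α * ∑ i, t' i * dist (u i) (v i) := by
        rw [Finset.mul_sum, ← Finset.sum_add_distrib]
        apply Finset.sum_congr rfl
        intro i _
        simp only [hf']
        ring
      rw [heq]
      nlinarith [mul_nonneg hα0 (neg_nonneg.mpr hslope)]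
    have ht'0 : t' i₀ ≠ 0 := ne_of_lt hi₀neg
    have hf'zero : f' i₀ = 0 := by
      have hmul : f i₀ / -t' i₀ * t' i₀ = -f i₀ := by
        field_simp
      simp only [hf']
      rw [hα, ← hi₀, hmul]
      ring
    have hsubset : (Finset.univ.filter (fun i => f' i ≠ 0))
        ⊆ (Finset.univ.filter (fun i => f i ≠ 0)) := by
      intro i hi
      simp only [Finset.mem_filter, Finset.mem_univ, true_and] at hi ⊢
      intro hfi
      by_cases hti : t' i = 0
      · exact hi (by simp [hf', hfi, hti])
      · exact ht'F i hti hfi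
    have hsub : (Finset.univ.filter (fun i => f' i ≠ 0))
        ⊂ (Finset.univ.filter (fun i => f i ≠ 0)) := by
      refine (Finset.ssubset_iff_of_subset hsubset).mpr ⟨i₀, ?_, ?_⟩
      · simp only [Finset.mem_filter, Finset.mem_univ, true_and]
        exact ht'F i₀ ht'0
      · simp only [Finset.mem_filter, Finset.mem_univ, true_and, not_not]
        exact hf'zero
    have hcard' : (Finset.univ.filter (fun i => f' i ≠ 0)).card < N := by
      rw [← hcard]
      exact Finset.card_lt_card hsub
    obtain ⟨g, hg1, hg2⟩ := IH _ hcard' f' rfl hf'pos (by rw [hf'sum]; exact hint)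
    exact ⟨g, by rw [hg1, hf'sum], le_trans hg2 hf'cost⟩
  · -- all integer: done
    have hall : ∀ i, ∃ k : ℤ, f i = (k : ℝ) := by
      intro i
      by_contra h
      exact hne ⟨i, by rw [hF]; simp only [Finset.mem_filter, Finset.mem_univ, true_and]; exact h⟩
    choose k hk using hall
    have hknn : ∀ i, ((k i).toNat : ℝ) = f i := by
      intro i
      have h0 : (0:ℝ) ≤ (k i : ℝ) := (hk i) ▸ hpos i
      have : 0 ≤ k i := by exact_mod_cast h0
      rw [hk i]
      norm_cast
      omega
    refine ⟨fun i => (k i).toNat, ?_, le_of_eq ?_⟩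
    · exact Finset.sum_congr rfl fun i _ => by rw [hknn i]
    · exact Finset.sum_congr rfl fun i _ => by rw [hknn i]

end Graev

namespace Graev
open FreeL
variable {X : Type*} [MetricSpace X] {base : X}

noncomputable def mu (base : X) (L : Multiset (X × X)) : FreeL X base :=
  (L.map (fun p => δ base p.1 - δ base p.2)).sum

noncomputable def mcost (L : Multiset (X × X)) : ℝ :=
  (L.map (fun p => dist p.1 p.2)).sum

lemma mu_cons (a : X × X) (s : Multiset (X × X)) :
    mu base (a ::ₘ s) = (δ base a.1 - δ base a.2) + mu base s := by
  simp [mu]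

lemma mcost_cons (a : X × X) (s : Multiset (X × X)) :
    mcost (a ::ₘ s) = dist a.1 a.2 + mcost s := by
  simp [mcost]

lemma coord_mu (L : Multiset (X × X)) (w : {x : X // x ≠ base}) :
    coord base w (mu base L)
      = ((Multiset.countP (fun p => p.1 = (w : X)) L : ℝ))
        - (Multiset.countP (fun p => p.2 = (w : X)) L : ℝ) := by
  induction L using Multiset.induction_on with
  | empty => simp [mu]
  | cons a s ih =>
    rw [mu_cons, map_add, ih, map_sub, coord_delta, coord_delta,
      Multiset.countP_cons, Multiset.countP_cons]
    by_cases h1 : a.1 = (w : X) <;> by_cases h2 : a.2 = (w : X) <;>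
      simp [h1, h2] <;> push_cast <;> ring

/-- goodness: a point is `base` or in the support of `z`. -/
def good (z : FreeL X base) (x : X) : Prop :=
  x = base ∨ ∃ h : x ≠ base, coord base ⟨x, h⟩ z ≠ 0

lemma chain_reduce (z : FreeL X base) :
    ∀ (n : ℕ) (L : Multiset (X × X)), Multiset.card L = n → mu base L = z →
    ∃ L' : Multiset (X × X), mu base L' = z ∧ mcost L' ≤ mcost L ∧
      ∀ p ∈ L', good z p.1 ∧ good z p.2 := by
  intro n
  induction n using Nat.strong_induction_on with
  | _ n IH =>
  intro L hcard hmu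
  by_cases hbad : ∃ p ∈ L, ¬ good z p.1 ∨ ¬ good z p.2
  · obtain ⟨p, hpL, hbadp⟩ := hbad
    obtain ⟨E, hLp⟩ : ∃ E, L = p ::ₘ E := ⟨L.erase p, (Multiset.cons_erase hpL).symm⟩
    subst hLp
    rw [mu_cons] at hmu
    by_cases hself : p.1 = p.2
    · -- self-loop: just erase it
      have hmu' : mu base E = z := by
        rw [hself, sub_self, zero_add] at hmu
        exact hmu
      have hcard' : Multiset.card E < n := by
        rw [← hcard, Multiset.card_cons]
        omega
      obtain ⟨L', h1, h2, h3⟩ := IH _ hcard' E rfl hmu'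
      refine ⟨L', h1, ?_, h3⟩
      rw [mcost_cons, hself, dist_self, zero_add]
      exact h2
    · have hcnteq : ∀ (x : X) (hx : x ≠ base), coord base ⟨x, hx⟩ z = 0 →
          Multiset.countP (fun q => q.1 = x) (p ::ₘ E)
            = Multiset.countP (fun q => q.2 = x) (p ::ₘ E) := by
        intro x hx h0
        have hc := coord_mu (base := base) (p ::ₘ E) ⟨x, hx⟩
        rw [mu_cons, hmu, h0] at hc
        have : ((Multiset.countP (fun q => q.1 = x) (p ::ₘ E) : ℝ))
            = (Multiset.countP (fun q => q.2 = x) (p ::ₘ E) : ℝ) := by linarith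
        exact_mod_cast this
      rcases hbadp with hb | hb
      · -- bad source point p.1 : find q with q.2 = p.1 in E
        have hsb : p.1 ≠ base := fun h => hb (Or.inl h)
        have hz0 : coord base ⟨p.1, hsb⟩ z = 0 := by
          by_contra h
          exact hb (Or.inr ⟨hsb, h⟩)
        have hcnt := hcnteq p.1 hsb hz0
        have hpos : 0 < Multiset.countP (fun q => q.1 = p.1) (p ::ₘ E) :=
          Multiset.countP_pos.mpr ⟨p, Multiset.mem_cons_self _ _, rfl⟩
        have hcnt2 : 0 < Multiset.countP (fun q => q.2 = p.1) E := by
          have h1 : Multiset.countP (fun q => q.2 = p.1) (p ::ₘ E)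
              = Multiset.countP (fun q => q.2 = p.1) E + if p.2 = p.1 then 1 else 0 :=
            Multiset.countP_cons _ _ _
          rw [if_neg (fun h => hself h.symm), add_zero] at h1
          omega
        obtain ⟨q, hqE, hq2⟩ := Multiset.countP_pos.mp hcnt2
        obtain ⟨R, hER⟩ : ∃ R, E = q ::ₘ R := ⟨E.erase q, (Multiset.cons_erase hqE).symm⟩
        subst hER
        rw [mu_cons] at hmu
        refine ?_
        have hmu' : mu base ((q.1, p.2) ::ₘ R) = z := by
          rw [mu_cons, ← hmu, hq2]
          abel
        have hcard' : Multiset.card ((q.1, p.2) ::ₘ R) < n := by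
          rw [← hcard]
          simp only [Multiset.card_cons]
          omega
        obtain ⟨L'', h1, h2, h3⟩ := IH _ hcard' _ rfl hmu'
        refine ⟨L'', h1, ?_, h3⟩
        refine le_trans h2 ?_
        rw [mcost_cons, mcost_cons, mcost_cons]
        have htri : dist q.1 p.2 ≤ dist q.1 q.2 + dist p.1 p.2 := by
          rw [hq2]
          exact dist_triangle _ _ _
        simp only
        linarith
      · -- bad target point p.2 : find q with q.1 = p.2 in E
        have hsb : p.2 ≠ base := fun h => hb (Or.inl h)
        have hz0 : coord base ⟨p.2, hsb⟩ z = 0 := by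
          by_contra h
          exact hb (Or.inr ⟨hsb, h⟩)
        have hcnt := hcnteq p.2 hsb hz0
        have hpos : 0 < Multiset.countP (fun q => q.2 = p.2) (p ::ₘ E) :=
          Multiset.countP_pos.mpr ⟨p, Multiset.mem_cons_self _ _, rfl⟩
        have hcnt2 : 0 < Multiset.countP (fun q => q.1 = p.2) E := by
          have h1 : Multiset.countP (fun q => q.1 = p.2) (p ::ₘ E)
              = Multiset.countP (fun q => q.1 = p.2) E + if p.1 = p.2 then 1 else 0 :=
            Multiset.countP_cons _ _ _
          rw [if_neg hself, add_zero] at h1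
          omega
        obtain ⟨q, hqE, hq1⟩ := Multiset.countP_pos.mp hcnt2
        obtain ⟨R, hER⟩ : ∃ R, E = q ::ₘ R := ⟨E.erase q, (Multiset.cons_erase hqE).symm⟩
        subst hER
        rw [mu_cons] at hmu
        have hmu' : mu base ((p.1, q.2) ::ₘ R) = z := by
          rw [mu_cons, ← hmu, hq1]
          abel
        have hcard' : Multiset.card ((p.1, q.2) ::ₘ R) < n := by
          rw [← hcard]
          simp only [Multiset.card_cons]
          omega
        obtain ⟨L'', h1, h2, h3⟩ := IH _ hcard' _ rfl hmu'
        refine ⟨L'', h1, ?_, h3⟩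
        refine le_trans h2 ?_
        rw [mcost_cons, mcost_cons, mcost_cons]
        have htri : dist p.1 q.2 ≤ dist p.1 p.2 + dist q.1 q.2 := by
          rw [hq1]
          exact dist_triangle _ _ _
        simp only
        linarith
  · push_neg at hbad
    exact ⟨L, hmu, le_refl _, fun p hp => ⟨(hbad p hp).1, (hbad p hp).2⟩⟩

end Graev

namespace Graev
open FreeL
variable {X : Type*} [MetricSpace X] {base : X}

lemma fin_sum_list {α β : Type*} [AddCommMonoid β] (l : List α) (g : α → β) :
    ∑ i : Fin l.length, g (l.get i) = (l.map g).sum := by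
  induction l with
  | nil => simp
  | cons a t ih =>
    rw [List.map_cons, List.sum_cons, ← ih]
    exact Fin.sum_univ_succ fun i => g ((a :: t).get i)

lemma mcost_nonneg (L : Multiset (X × X)) : 0 ≤ mcost L := by
  refine Multiset.sum_nonneg ?_
  intro x hx
  obtain ⟨p, _, rfl⟩ := Multiset.mem_map.mp hx
  exact dist_nonneg

lemma pairing_rep (L : Multiset (X × X)) :
    ∃ (n : ℕ) (c : Fin n → ℤ) (xs ys : Fin n → X),
      (∑ i, (c i : ℝ) • δ base (xs i)) = mu base L ∧
      (∑ i, (c i : ℝ) • δ base (ys i)) = 0 ∧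
      (∑ i, |(c i : ℝ)| * dist (xs i) (ys i)) = mcost L := by
  set l := L.toList with hl
  have hlL : (l : Multiset (X × X)) = L := Multiset.coe_toList L
  have hmu : mu base L = ∑ k : Fin l.length, (δ base (l.get k).1 - δ base (l.get k).2) := by
    rw [fin_sum_list l (fun p => δ base p.1 - δ base p.2), mu, ← hlL]
    rfl
  have hmc : mcost L = ∑ k : Fin l.length, dist (l.get k).1 (l.get k).2 := by
    rw [fin_sum_list l (fun p => dist p.1 p.2), mcost, ← hlL]
    rfl
  refine ⟨l.length + l.length,
    Fin.addCases (fun _ => (1 : ℤ)) (fun _ => (-1 : ℤ)),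
    Fin.addCases (fun k => (l.get k).1) (fun k => (l.get k).2),
    Fin.addCases (fun k => (l.get k).2) (fun k => (l.get k).2), ?_, ?_, ?_⟩
  · rw [Fin.sum_univ_add]
    simp only [Fin.addCases_left, Fin.addCases_right]
    push_cast
    simp only [one_smul, neg_smul]
    rw [hmu, Finset.sum_sub_distrib, Finset.sum_neg_distrib, ← sub_eq_add_neg]
  · rw [Fin.sum_univ_add]
    simp only [Fin.addCases_left, Fin.addCases_right]
    push_cast
    simp only [one_smul, neg_smul]
    rw [← Finset.sum_add_distrib]
    exact Finset.sum_eq_zero fun k _ => by abel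
  · rw [Fin.sum_univ_add]
    simp only [Fin.addCases_left, Fin.addCases_right]
    push_cast
    simp only [abs_one, abs_neg, one_mul, dist_self, mul_zero]
    rw [hmc]
    simp

end Graev

namespace Graev
open FreeL
variable {X : Type*} [MetricSpace X] {base : X}

noncomputable def muHom (base : X) : Multiset (X × X) →+ FreeL X base where
  toFun := mu base
  map_zero' := by simp [mu]
  map_add' := fun s t => by simp [mu]

noncomputable def mcostHom (X : Type*) [MetricSpace X] : Multiset (X × X) →+ ℝ where
  toFun := mcost
  map_zero' := by simp [mcost]
  map_add' := fun s t => by simp [mcost]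

lemma mu_replicate (k : ℕ) (p : X × X) :
    mu base (Multiset.replicate k p) = (k : ℝ) • (δ base p.1 - δ base p.2) := by
  rw [mu, Multiset.map_replicate, Multiset.sum_replicate, Nat.cast_smul_eq_nsmul]

lemma mcost_replicate (k : ℕ) (p : X × X) :
    mcost (Multiset.replicate k p) = (k : ℝ) * dist p.1 p.2 := by
  rw [mcost, Multiset.map_replicate, Multiset.sum_replicate, nsmul_eq_mul]

lemma rep_to_good_pairing (z : FreeL X base)
    (hzint : ∀ w, ∃ k : ℤ, coord base w z = (k : ℝ))
    {m : ℕ} (lam : Fin m → ℝ) (us vs : Fin m → X)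
    (h1 : z = ∑ i, lam i • δ base (us i))
    (h2 : (0 : FreeL X base) = ∑ i, lam i • δ base (vs i)) :
    ∃ L : Multiset (X × X), mu base L = z ∧ (∀ p ∈ L, good z p.1 ∧ good z p.2) ∧
      mcost L ≤ ∑ i, |lam i| * dist (us i) (vs i) := by
  set uu : Fin m → X := fun i => if 0 ≤ lam i then us i else vs i with huu
  set vv : Fin m → X := fun i => if 0 ≤ lam i then vs i else us i with hvv
  set f : Fin m → ℝ := fun i => |lam i| with hf
  have hflow : ∑ i, f i • (δ base (uu i) - δ base (vv i)) = z := by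
    have hterm : ∀ i, f i • (δ base (uu i) - δ base (vv i))
        = lam i • δ base (us i) - lam i • δ base (vs i) := by
      intro i
      by_cases h : 0 ≤ lam i
      · simp only [hf, huu, hvv, if_pos h, abs_of_nonneg h, smul_sub]
      · push_neg at h
        simp only [hf, huu, hvv, if_neg (not_le.mpr h), abs_of_neg h, smul_sub,
          neg_smul]
        abel
    rw [Finset.sum_congr rfl (fun i _ => hterm i), Finset.sum_sub_distrib, ← h1, ← h2,
      sub_zero]
  have hint : ∀ w, ∃ k : ℤ,
      coord base w (∑ i, f i • (δ base (uu i) - δ base (vv i))) = (k : ℝ) := by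
    intro w
    rw [hflow]
    exact hzint w
  obtain ⟨g, hg1, hg2⟩ := descent (base := base) uu vv _ f rfl (fun i => abs_nonneg _) hint
  set L₀ : Multiset (X × X) := ∑ i : Fin m, Multiset.replicate (g i) (uu i, vv i) with hL₀
  have hmuL₀ : mu base L₀ = z := by
    have : mu base L₀ = ∑ i : Fin m, mu base (Multiset.replicate (g i) (uu i, vv i)) :=
      map_sum (muHom base) _ _
    rw [this]
    rw [Finset.sum_congr rfl (fun i _ => mu_replicate (g i) (uu i, vv i))]
    rw [hg1, hflow]
  have hcostL₀ : mcost L₀ ≤ ∑ i, |lam i| * dist (us i) (vs i) := by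
    have hc : mcost L₀ = ∑ i : Fin m, (g i : ℝ) * dist (uu i) (vv i) := by
      have : mcost L₀ = ∑ i : Fin m, mcost (Multiset.replicate (g i) (uu i, vv i)) :=
        map_sum (mcostHom X) _ _
      rw [this]
      exact Finset.sum_congr rfl (fun i _ => mcost_replicate (g i) (uu i, vv i))
    have hd : ∀ i, f i * dist (uu i) (vv i) = |lam i| * dist (us i) (vs i) := by
      intro i
      by_cases h : 0 ≤ lam i
      · simp only [hf, huu, hvv, if_pos h]
      · simp only [hf, huu, hvv, if_neg (not_le.mpr (not_le.mp h))]
        rw [dist_comm]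
    rw [hc]
    calc ∑ i : Fin m, (g i : ℝ) * dist (uu i) (vv i)
        ≤ ∑ i, f i * dist (uu i) (vv i) := hg2
      _ = ∑ i, |lam i| * dist (us i) (vs i) := Finset.sum_congr rfl (fun i _ => hd i)
  obtain ⟨L', hmu', hc', hgood'⟩ := chain_reduce z _ L₀ rfl hmuL₀
  exact ⟨L', hmu', hgood', le_trans hc' hcostL₀⟩

end Graev

namespace Graev
open FreeL
variable {X : Type*} [MetricSpace X] {base : X}

lemma exists_min_good_pairing (z : FreeL X base)
    (hex : ∃ L : Multiset (X × X), mu base L = z ∧ ∀ p ∈ L, good z p.1 ∧ good z p.2) :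
    ∃ L : Multiset (X × X), mu base L = z ∧ (∀ p ∈ L, good z p.1 ∧ good z p.2) ∧
      ∀ L2 : Multiset (X × X), mu base L2 = z →
        (∀ p ∈ L2, good z p.1 ∧ good z p.2) → mcost L ≤ mcost L2 := by
  classical
  set Ws : Finset X :=
    insert base (Finset.image (Subtype.val : {x : X // x ≠ base} → X)
      (z : {x : X // x ≠ base} →₀ ℝ).support)
    with hWs
  have hgood_mem : ∀ x : X, good z x → x ∈ Ws := by
    intro x hx
    rcases hx with rfl | ⟨h, hc⟩
    · exact Finset.mem_insert_self _ _
    · refine Finset.mem_insert_of_mem (Finset.mem_image.mpr ⟨⟨x, h⟩, ?_, rfl⟩)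
      exact Finsupp.mem_support_iff.mpr hc
  set T : Finset (X × X) := Ws ×ˢ Ws with hT
  set C : Set ℝ :=
    {c | ∃ L : Multiset (X × X), mu base L = z ∧ (∀ p ∈ L, good z p.1 ∧ good z p.2)
      ∧ mcost L = c} with hC
  obtain ⟨L₀, hL₀mu, hL₀good⟩ := hex
  set c₀ := mcost L₀ with hc₀def
  have hc₀ : c₀ ∈ C := ⟨L₀, hL₀mu, hL₀good, rfl⟩
  have hcost_expr : ∀ L : Multiset (X × X), (∀ p ∈ L, good z p.1 ∧ good z p.2) →
      mcost L = ∑ e ∈ T, (L.count e : ℝ) * dist e.1 e.2 := by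
    intro L hLg
    rw [mcost, Finset.sum_multiset_map_count]
    have hsub : L.toFinset ⊆ T := by
      intro p hp
      have hpL := Multiset.mem_toFinset.mp hp
      exact Finset.mem_product.mpr
        ⟨hgood_mem _ (hLg p hpL).1, hgood_mem _ (hLg p hpL).2⟩
    rw [Finset.sum_subset hsub]
    · exact Finset.sum_congr rfl fun e _ => (nsmul_eq_mul _ _)
    · intro e _ he
      have : L.count e = 0 := Multiset.count_eq_zero.mpr
        (fun hmem => he (Multiset.mem_toFinset.mpr hmem))
      rw [this, zero_smul]
  set T' : Finset (X × X) := T.filter (fun e => 0 < dist e.1 e.2) with hT'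
  by_cases hT'ne : T'.Nonempty
  · -- general case
    set dmin : ℝ := (T'.image (fun e => dist e.1 e.2)).min' (hT'ne.image _) with hdmin
    have hdminmem := (T'.image (fun e => dist e.1 e.2)).min'_mem (hT'ne.image _)
    obtain ⟨e₀, he₀, he₀d⟩ := Finset.mem_image.mp hdminmem
    have hdminpos : 0 < dmin := by
      rw [hdmin, ← he₀d]
      exact (Finset.mem_filter.mp he₀).2
    have hdminle : ∀ e ∈ T', dmin ≤ dist e.1 e.2 := fun e he =>
      Finset.min'_le _ _ (Finset.mem_image_of_mem _ he)
    set B : ℕ := ⌈c₀ / dmin⌉₊ with hB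
    set Φ : ({e // e ∈ T} → ℕ) → ℝ :=
      fun nn => ∑ e ∈ T.attach, (nn e : ℝ) * dist e.1.1 e.1.2 with hΦ
    have hNfin : {nn : {e // e ∈ T} → ℕ | ∀ e, nn e ≤ B}.Finite := by
      have heq : {nn : {e // e ∈ T} → ℕ | ∀ e, nn e ≤ B}
          = Set.univ.pi (fun _ : {e // e ∈ T} => Set.Iic B) := by
        ext nn
        rw [Set.mem_univ_pi]
        simp [Set.mem_Iic]
      rw [heq]
      exact Set.Finite.pi fun _ => Set.finite_Iic B
    have hsub : C ∩ Set.Icc 0 c₀ ⊆ Φ '' {nn | ∀ e, nn e ≤ B} := by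
      rintro c ⟨⟨L, hLmu, hLg, rfl⟩, hc1, hc2⟩
      refine ⟨fun e => if 0 < dist e.1.1 e.1.2 then L.count e.1 else 0, ?_, ?_⟩
      · intro e
        by_cases hpos : 0 < dist e.1.1 e.1.2
        · simp only [if_pos hpos]
          have h1 : (L.count e.1 : ℝ) * dist e.1.1 e.1.2 ≤ mcost L := by
            rw [hcost_expr L hLg]
            exact Finset.single_le_sum
              (f := fun e' => (L.count e' : ℝ) * dist e'.1 e'.2)
              (fun e' _ => mul_nonneg (Nat.cast_nonneg _) dist_nonneg) e.2
          have hd : dmin ≤ dist e.1.1 e.1.2 :=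
            hdminle e.1 (Finset.mem_filter.mpr ⟨e.2, hpos⟩)
          have h2 : (L.count e.1 : ℝ) ≤ c₀ / dmin := by
            rw [le_div_iff₀ hdminpos]
            calc (L.count e.1 : ℝ) * dmin
                ≤ (L.count e.1 : ℝ) * dist e.1.1 e.1.2 :=
                  mul_le_mul_of_nonneg_left hd (Nat.cast_nonneg _)
              _ ≤ mcost L := h1
              _ ≤ c₀ := hc2
          have h3 : (L.count e.1 : ℝ) ≤ (B : ℝ) := h2.trans (Nat.le_ceil _)
          exact_mod_cast h3
        · simp [hpos]
      · rw [hcost_expr L hLg,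
          ← Finset.sum_attach T (fun e => (L.count e : ℝ) * dist e.1 e.2)]
        apply Finset.sum_congr rfl
        intro e _
        by_cases hpos : 0 < dist e.1.1 e.1.2
        · simp [hpos]
        · have h0 : dist e.1.1 e.1.2 = 0 := le_antisymm (not_lt.mp hpos) dist_nonneg
          simp [hpos, h0]
    have hDfin : (C ∩ Set.Icc 0 c₀).Finite := (hNfin.image Φ).subset hsub
    have hDne : (C ∩ Set.Icc 0 c₀).Nonempty :=
      ⟨c₀, hc₀, mcost_nonneg L₀, le_refl _⟩
    obtain ⟨cmin, hcminmem, hcminle⟩ :=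
      Set.exists_min_image (C ∩ Set.Icc 0 c₀) id hDfin hDne
    obtain ⟨⟨Lm, hLmmu, hLmg, hLmc⟩, _, hcminc₀⟩ := hcminmem
    refine ⟨Lm, hLmmu, hLmg, ?_⟩
    intro L2 hmu2 hg2
    by_cases h : mcost L2 ≤ c₀
    · have hmem : mcost L2 ∈ C ∩ Set.Icc 0 c₀ :=
        ⟨⟨L2, hmu2, hg2, rfl⟩, mcost_nonneg L2, h⟩
      have := hcminle _ hmem
      simpa [hLmc] using this
    · push_neg at h
      rw [hLmc]
      exact le_trans hcminc₀ (le_of_lt h)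
  · -- degenerate case : all distances between good points vanish
    refine ⟨L₀, hL₀mu, hL₀good, ?_⟩
    intro L2 hmu2 hg2
    have hzero : ∀ L : Multiset (X × X), (∀ p ∈ L, good z p.1 ∧ good z p.2) →
        mcost L = 0 := by
      intro L hLg
      rw [hcost_expr L hLg]
      apply Finset.sum_eq_zero
      intro e he
      have : ¬ 0 < dist e.1 e.2 := by
        intro hpos
        exact hT'ne ⟨e, Finset.mem_filter.mpr ⟨he, hpos⟩⟩
      have h0 : dist e.1 e.2 = 0 := le_antisymm (not_lt.mp this) dist_nonneg
      rw [h0, mul_zero]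
    rw [hzero L₀ hL₀good, hzero L2 hg2]

end Graev

/-- Integer value property of the Graev norm: if `z ∈ L(X)` is an integer
linear combination of points of `X`, then the infimum
`inf {∑ |λᵢ| d(xᵢ,yᵢ) : z = ∑ λᵢxᵢ, 0 = ∑ λᵢyᵢ}` defining the free norm is
attained at a representation with integer coefficients. -/
theorem graev_norm_integer_value_property
    {X : Type*} [MetricSpace X] (base : X) (z : FreeL X base)
    (hz : ∃ (n : ℕ) (c : Fin n → ℤ) (xs : Fin n → X),
      z = ∑ i, (c i : ℝ) • FreeL.δ base (xs i)) :
    ∃ (n : ℕ) (c : Fin n → ℤ) (xs ys : Fin n → X),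
      z = ∑ i, (c i : ℝ) • FreeL.δ base (xs i) ∧
      (0 : FreeL X base) = ∑ i, (c i : ℝ) • FreeL.δ base (ys i) ∧
      (∑ i, |(c i : ℝ)| * dist (xs i) (ys i)) =
        sInf {s : ℝ | ∃ (m : ℕ) (lam : Fin m → ℝ) (us vs : Fin m → X),
          z = ∑ i, lam i • FreeL.δ base (us i) ∧
          (0 : FreeL X base) = ∑ i, lam i • FreeL.δ base (vs i) ∧
          s = ∑ i, |lam i| * dist (us i) (vs i)} := by
  classical
  obtain ⟨n₀, c₀, xs₀, hz₀⟩ := hz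
  have hzint : ∀ w : {x : X // x ≠ base}, ∃ k : ℤ, Graev.coord base w z = (k : ℝ) := by
    intro w
    refine ⟨∑ i, c₀ i * (if xs₀ i = (w : X) then 1 else 0), ?_⟩
    rw [hz₀, map_sum]
    push_cast
    apply Finset.sum_congr rfl
    intro i _
    rw [map_smul, Graev.coord_delta]
    by_cases h : xs₀ i = (w : X) <;> simp [h]
  have hrep₀ : (0 : FreeL X base) = ∑ i : Fin n₀, (c₀ i : ℝ) • FreeL.δ base base := by
    rw [Graev.delta_base]
    simp
  obtain ⟨Lex, hLexmu, hLexg, _⟩ :=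
    Graev.rep_to_good_pairing z hzint (fun i => (c₀ i : ℝ)) xs₀ (fun _ => base) hz₀ hrep₀
  obtain ⟨Lm, hLmmu, hLmg, hLmmin⟩ :=
    Graev.exists_min_good_pairing z ⟨Lex, hLexmu, hLexg⟩
  obtain ⟨n, c, xs, ys, hrep1, hrep2, hrep3⟩ := Graev.pairing_rep (base := base) Lm
  refine ⟨n, c, xs, ys, by rw [hrep1, hLmmu], hrep2.symm, ?_⟩
  rw [hrep3]
  have hmemA : Graev.mcost Lm ∈ {s : ℝ | ∃ (m : ℕ) (lam : Fin m → ℝ) (us vs : Fin m → X),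
      z = ∑ i, lam i • FreeL.δ base (us i) ∧
      (0 : FreeL X base) = ∑ i, lam i • FreeL.δ base (vs i) ∧
      s = ∑ i, |lam i| * dist (us i) (vs i)} :=
    ⟨n, fun i => (c i : ℝ), xs, ys, by rw [hrep1, hLmmu], hrep2.symm, hrep3.symm⟩
  have hbdd : BddBelow {s : ℝ | ∃ (m : ℕ) (lam : Fin m → ℝ) (us vs : Fin m → X),
      z = ∑ i, lam i • FreeL.δ base (us i) ∧
      (0 : FreeL X base) = ∑ i, lam i • FreeL.δ base (vs i) ∧
      s = ∑ i, |lam i| * dist (us i) (vs i)} := by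
    refine ⟨0, ?_⟩
    rintro s ⟨m, lam, us, vs, h1, h2, h3⟩
    rw [h3]
    exact Finset.sum_nonneg fun i _ => mul_nonneg (abs_nonneg _) dist_nonneg
  have hlb : ∀ s ∈ {s : ℝ | ∃ (m : ℕ) (lam : Fin m → ℝ) (us vs : Fin m → X),
      z = ∑ i, lam i • FreeL.δ base (us i) ∧
      (0 : FreeL X base) = ∑ i, lam i • FreeL.δ base (vs i) ∧
      s = ∑ i, |lam i| * dist (us i) (vs i)}, Graev.mcost Lm ≤ s := by
    rintro s ⟨m, lam, us, vs, h1, h2, h3⟩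
    obtain ⟨L', hmu', hg', hc'⟩ := Graev.rep_to_good_pairing z hzint lam us vs h1 h2
    calc Graev.mcost Lm ≤ Graev.mcost L' := hLmmin L' hmu' hg'
      _ ≤ ∑ i, |lam i| * dist (us i) (vs i) := hc'
      _ = s := h3.symm
  exact le_antisymm (le_csInf ⟨_, hmemA⟩ hlb) (csInf_le hbdd hmemA)
end

section
/- The Graev metric d̄ on the free abelian group A(X,∗), obtained by restricting the free-normed-space distance to A(X), is the maximal bi-invariant metric on A(X) whose restriction to X is majorized by d. -/
open scoped BigOperators

open Finset
open scoped Classical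

/-- `r` is (the cast of) an integer. -/
def IsZ (r : ℝ) : Prop := ∃ k : ℤ, (k : ℝ) = r

lemma IsZ.zero : IsZ 0 := ⟨0, by simp⟩

lemma IsZ.add {a b : ℝ} (ha : IsZ a) (hb : IsZ b) : IsZ (a + b) := by
  obtain ⟨k, rfl⟩ := ha; obtain ⟨l, rfl⟩ := hb; exact ⟨k + l, by push_cast; ring⟩

lemma IsZ.neg {a : ℝ} (ha : IsZ a) : IsZ (-a) := by
  obtain ⟨k, rfl⟩ := ha; exact ⟨-k, by push_cast; ring⟩

lemma IsZ.mul {a b : ℝ} (ha : IsZ a) (hb : IsZ b) : IsZ (a * b) := by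
  obtain ⟨k, rfl⟩ := ha; obtain ⟨l, rfl⟩ := hb; exact ⟨k * l, by push_cast; ring⟩

lemma IsZ.sub {a b : ℝ} (ha : IsZ a) (hb : IsZ b) : IsZ (a - b) := by
  simpa [sub_eq_add_neg] using ha.add hb.neg

lemma IsZ.finsetSum {ι : Type*} (s : Finset ι) (f : ι → ℝ)
    (h : ∀ i ∈ s, IsZ (f i)) : IsZ (∑ i ∈ s, f i) := by
  classical
  induction s using Finset.induction_on with
  | empty => simpa using IsZ.zero
  | insert _ _ hx ih =>
    rw [Finset.sum_insert hx]
    exact (h _ (Finset.mem_insert_self _ _)).add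
      (ih fun i hi => h i (Finset.mem_insert_of_mem hi))

lemma notIsZ_lt_ceil {r : ℝ} (h : ¬ IsZ r) : r < (⌈r⌉ : ℝ) :=
  lt_of_le_of_ne (Int.le_ceil r) (fun he => h ⟨⌈r⌉, he.symm⟩)

lemma notIsZ_floor_lt {r : ℝ} (h : ¬ IsZ r) : ((⌊r⌋ : ℝ)) < r :=
  lt_of_le_of_ne (Int.floor_le r) (fun he => h ⟨⌊r⌋, he⟩)

/-- Cycle-cancelling step: shifting along a circulation supported on
"fractional" coordinates, one can strictly decrease the number of fractional
coordinates without increasing the cost. -/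
lemma graev_step {n : ℕ} (c lam t : Fin n → ℝ) (hc : ∀ i, 0 ≤ c i)
    (ht0 : t ≠ 0) (hsupp : ∀ i, t i ≠ 0 → ¬ IsZ (lam i)) :
    ∃ s : ℝ, (∑ i, |lam i + s * t i| * c i ≤ ∑ i, |lam i| * c i) ∧
      (univ.filter (fun i => ¬ IsZ (lam i + s * t i))).card <
        (univ.filter (fun i => ¬ IsZ (lam i))).card := by
  classical
  set sgn : Fin n → ℝ := fun i => if 0 ≤ lam i then (1:ℝ) else -1 with hsgn
  set K : ℝ := ∑ i, sgn i * t i * c i with hK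
  set e : Fin n → ℝ := fun i => if K ≤ 0 then t i else -(t i) with he
  have hesupp : ∀ i, e i ≠ 0 ↔ t i ≠ 0 := by
    intro i; simp only [he]; split <;> simp
  have hKe : ∑ i, sgn i * e i * c i ≤ 0 := by
    by_cases hK0 : K ≤ 0
    · have h0 : ∑ i, sgn i * t i * c i ≤ 0 := hK0; simpa [he, hK0] using h0
    · have : ∑ i, sgn i * e i * c i = -K := by
        simp only [he, if_neg hK0, hK]
        rw [← Finset.sum_neg_distrib]
        exact Finset.sum_congr rfl (fun i _ => by rw [if_neg (by rwa [hK] at hK0)]; ring)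
      rw [this]
      linarith
  set D : Finset (Fin n) := univ.filter (fun i => e i ≠ 0) with hD
  have hDne : D.Nonempty := by
    obtain ⟨i, hi⟩ := Function.ne_iff.mp ht0
    exact ⟨i, Finset.mem_filter.mpr ⟨Finset.mem_univ i, (hesupp i).mpr hi⟩⟩
  set b : Fin n → ℝ := fun i =>
    if 0 < e i then ((⌈lam i⌉ : ℝ) - lam i) / e i
    else (lam i - (⌊lam i⌋ : ℝ)) / (-(e i)) with hb
  have hbpos : ∀ i ∈ D, 0 < b i := by
    intro i hi
    have hei : e i ≠ 0 := (Finset.mem_filter.mp hi).2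
    have hfrac : ¬ IsZ (lam i) := hsupp i ((hesupp i).mp hei)
    by_cases hpos : 0 < e i
    · simp only [hb, if_pos hpos]
      exact div_pos (by linarith [notIsZ_lt_ceil hfrac]) hpos
    · have hneg : e i < 0 := lt_of_le_of_ne (not_lt.mp hpos) hei
      simp only [hb, if_neg hpos]
      exact div_pos (by linarith [notIsZ_floor_lt hfrac]) (by linarith)
  obtain ⟨i₀, hi₀D, hi₀min⟩ := Finset.exists_min_image D b hDne
  set s : ℝ := b i₀ with hs
  have hspos : 0 < s := hbpos i₀ hi₀D
  -- bounds for each i with e i ≠ 0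
  have hbound : ∀ i, e i ≠ 0 →
      ((⌊lam i⌋ : ℝ) ≤ lam i + s * e i ∧ lam i + s * e i ≤ (⌈lam i⌉ : ℝ)) := by
    intro i hei
    have hiD : i ∈ D := by simp [hD, hei]
    have hsb : s ≤ b i := hi₀min i hiD
    by_cases hpos : 0 < e i
    · constructor
      · nlinarith [Int.floor_le (lam i)]
      · have : s * e i ≤ b i * e i := mul_le_mul_of_nonneg_right hsb (le_of_lt hpos)
        have hbi : b i * e i = (⌈lam i⌉ : ℝ) - lam i := by
          simp only [hb, if_pos hpos]; field_simp
        linarith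
    · have hneg : e i < 0 := lt_of_le_of_ne (not_lt.mp hpos) hei
      constructor
      · have : b i * e i ≤ s * e i := mul_le_mul_of_nonpos_right hsb (le_of_lt hneg)
        have hbi : b i * e i = -(lam i - (⌊lam i⌋ : ℝ)) := by
          simp only [hb, if_neg hpos]
          rw [div_mul_eq_mul_div, div_neg, mul_div_assoc, div_self hei, mul_one]
        nlinarith [Int.floor_le (lam i)]
      · nlinarith [Int.le_ceil (lam i)]
  have habs : ∀ i, |lam i + s * e i| = |lam i| + s * e i * sgn i := by
    intro i
    by_cases hei : e i = 0
    · simp [hei]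
    · have hfrac : ¬ IsZ (lam i) := hsupp i ((hesupp i).mp hei)
      obtain ⟨hlo, hhi⟩ := hbound i hei
      by_cases hl : 0 ≤ lam i
      · have hl0 : (0:ℝ) ≤ (⌊lam i⌋ : ℝ) := by
          exact_mod_cast Int.floor_nonneg.mpr hl
        have h1 : 0 ≤ lam i + s * e i := le_trans hl0 hlo
        rw [abs_of_nonneg h1, abs_of_nonneg hl]
        simp [hsgn, if_pos hl]
      · have hlneg : lam i < 0 := not_le.mp hl
        have hc0 : (⌈lam i⌉ : ℝ) ≤ 0 := by
          have : ⌈lam i⌉ ≤ (0 : ℤ) := Int.ceil_le.mpr (by norm_num; linarith)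
          exact_mod_cast this
        have h1 : lam i + s * e i ≤ 0 := le_trans hhi hc0
        rw [abs_of_nonpos h1, abs_of_nonpos (le_of_lt hlneg)]
        simp only [hsgn, if_neg hl]
        ring
  -- the chosen s makes lam i₀ + s * e i₀ an integer
  have hi₀e : e i₀ ≠ 0 := (Finset.mem_filter.mp hi₀D).2
  have hi₀int : IsZ (lam i₀ + s * e i₀) := by
    by_cases hpos : 0 < e i₀
    · have : s * e i₀ = (⌈lam i₀⌉ : ℝ) - lam i₀ := by
        simp only [hs, hb, if_pos hpos]; field_simp
      exact ⟨⌈lam i₀⌉, by rw [this]; ring⟩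
    · have : s * e i₀ = -(lam i₀ - (⌊lam i₀⌋ : ℝ)) := by
        simp only [hs, hb, if_neg hpos]
        rw [div_mul_eq_mul_div, div_neg, mul_div_assoc, div_self hi₀e, mul_one]
      exact ⟨⌊lam i₀⌋, by rw [this]; ring⟩
  -- now pick the actual shift for t
  refine ⟨if K ≤ 0 then s else -s, ?_, ?_⟩
  · have heq : ∀ i, lam i + (if K ≤ 0 then s else -s) * t i = lam i + s * e i := by
      intro i; simp only [he]; split <;> ring
    calc ∑ i, |lam i + (if K ≤ 0 then s else -s) * t i| * c i
        = ∑ i, (|lam i| + s * e i * sgn i) * c i := by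
          refine Finset.sum_congr rfl (fun i _ => ?_)
          rw [heq i, habs i]
      _ = (∑ i, |lam i| * c i) + s * ∑ i, sgn i * e i * c i := by
          rw [Finset.mul_sum, ← Finset.sum_add_distrib]
          exact Finset.sum_congr rfl (fun i _ => by ring)
      _ ≤ ∑ i, |lam i| * c i := by nlinarith
  · have heq : ∀ i, lam i + (if K ≤ 0 then s else -s) * t i = lam i + s * e i := by
      intro i; simp only [he]; split <;> ring
    apply Finset.card_lt_card
    rw [Finset.ssubset_iff_of_subset]
    · exact ⟨i₀, by
        simp only [Finset.mem_filter, Finset.mem_univ, true_and]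
        exact ⟨hsupp i₀ ((hesupp i₀).mp hi₀e), by rw [heq i₀]; exact not_not_intro hi₀int⟩⟩
    · intro i hi
      simp only [Finset.mem_filter, Finset.mem_univ, true_and] at hi ⊢
      rw [heq i] at hi
      by_cases hei : e i = 0
      · simpa [hei] using hi
      · exact hsupp i ((hesupp i).mp hei)


/-- coordinate of a combination of single-differences -/
lemma graev_coordsum {V : Type*} {n : ℕ} (xs ys : Fin n → V) (t : Fin n → ℝ) (v : V) :
    ((∑ i, t i • (Finsupp.single (xs i) (1:ℝ) - Finsupp.single (ys i) 1) : V →₀ ℝ)) v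
      = ∑ i, t i * ((if xs i = v then (1:ℝ) else 0) - (if ys i = v then 1 else 0)) := by
  rw [Finsupp.finset_sum_apply]
  refine Finset.sum_congr rfl fun i _ => ?_
  simp [Finsupp.single_apply]

/-- Existence of a nonzero circulation supported on a set of loop-free edges
all of whose incident vertices have degree at least two. -/
lemma graev_circ {V : Type*} {n : ℕ} (xs ys : Fin n → V) (F : Finset (Fin n))
    (hF : F.Nonempty) (hloop : ∀ i ∈ F, xs i ≠ ys i)
    (hdeg : ∀ (v : V) (i : Fin n), i ∈ F → (xs i = v ∨ ys i = v) →
      ∃ j ∈ F, j ≠ i ∧ (xs j = v ∨ ys j = v)) :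
    ∃ t : Fin n → ℝ, t ≠ 0 ∧ (∀ i, t i ≠ 0 → i ∈ F) ∧
      ∑ i, t i • (Finsupp.single (xs i) (1:ℝ) - Finsupp.single (ys i) 1) = 0 := by
  classical
  set σ : Fin n → V → ℝ :=
    fun i v => (if xs i = v then (1:ℝ) else 0) - (if ys i = v then 1 else 0) with hσ
  set V' : Finset V := F.image xs ∪ F.image ys with hV'
  have hxsV' : ∀ i ∈ F, xs i ∈ V' := fun i hi =>
    Finset.mem_union_left _ (Finset.mem_image_of_mem xs hi)
  have hysV' : ∀ i ∈ F, ys i ∈ V' := fun i hi =>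
    Finset.mem_union_right _ (Finset.mem_image_of_mem ys hi)
  -- counting : |V'| ≤ |F|
  have hcard : V'.card ≤ F.card := by
    have h2 : ∀ v ∈ V', 2 ≤ (F.filter (fun i => xs i = v ∨ ys i = v)).card := by
      intro v hv
      have : ∃ i ∈ F, xs i = v ∨ ys i = v := by
        rcases Finset.mem_union.mp hv with h | h
        · obtain ⟨i, hi, hiv⟩ := Finset.mem_image.mp h; exact ⟨i, hi, Or.inl hiv⟩
        · obtain ⟨i, hi, hiv⟩ := Finset.mem_image.mp h; exact ⟨i, hi, Or.inr hiv⟩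
      obtain ⟨i, hi, hend⟩ := this
      obtain ⟨j, hjF, hji, hjend⟩ := hdeg v i hi hend
      have hsub : ({j, i} : Finset (Fin n)) ⊆ F.filter (fun i => xs i = v ∨ ys i = v) := by
        intro x hx
        rcases Finset.mem_insert.mp hx with rfl | hx
        · exact Finset.mem_filter.mpr ⟨hjF, hjend⟩
        · rw [Finset.mem_singleton.mp hx]
          exact Finset.mem_filter.mpr ⟨hi, hend⟩
      have : ({j, i} : Finset (Fin n)).card = 2 := by
        rw [Finset.card_insert_of_notMem (by simpa using hji), Finset.card_singleton]
      rw [← this]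
      exact Finset.card_le_card hsub
    have hsum : ∑ v ∈ V', (F.filter (fun i => xs i = v ∨ ys i = v)).card = 2 * F.card := by
      have : ∀ v, (F.filter (fun i => xs i = v ∨ ys i = v)).card
          = ∑ i ∈ F, if xs i = v ∨ ys i = v then 1 else 0 := by
        intro v; rw [Finset.card_filter]
      simp_rw [this]
      rw [Finset.sum_comm]
      have : ∀ i ∈ F, (∑ v ∈ V', if xs i = v ∨ ys i = v then (1:ℕ) else 0) = 2 := by
        intro i hi
        have hfil : V'.filter (fun v => xs i = v ∨ ys i = v) = {xs i, ys i} := by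
          ext v
          simp only [Finset.mem_filter, Finset.mem_insert, Finset.mem_singleton]
          constructor
          · rintro ⟨_, h | h⟩
            · exact Or.inl h.symm
            · exact Or.inr h.symm
          · rintro (rfl | rfl)
            · exact ⟨hxsV' i hi, Or.inl rfl⟩
            · exact ⟨hysV' i hi, Or.inr rfl⟩
        rw [← Finset.sum_filter, hfil]
        rw [Finset.sum_pair (hloop i hi)]
      rw [Finset.sum_congr rfl this]
      rw [Finset.sum_const, smul_eq_mul, mul_comm]
    have : 2 * V'.card ≤ 2 * F.card := by
      rw [← hsum]
      calc 2 * V'.card = ∑ _v ∈ V', 2 := by rw [Finset.sum_const, smul_eq_mul, mul_comm]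
        _ ≤ _ := Finset.sum_le_sum h2
    omega
  -- V' nonempty and F.card ≥ 1
  obtain ⟨i₁, hi₁⟩ := hF
  have hV'ne : (⟨xs i₁, hxsV' i₁ hi₁⟩ : ↥V') = ⟨xs i₁, hxsV' i₁ hi₁⟩ := rfl
  have hFpos : 1 ≤ F.card := Finset.card_pos.mpr ⟨i₁, hi₁⟩
  -- the incidence linear map
  set T : (↥F → ℝ) →ₗ[ℝ] (↥V' → ℝ) :=
    { toFun := fun t v => ∑ i : ↥F, t i * σ (i : Fin n) (v : V)
      map_add' := by
        intro a b; funext v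
        simp only [Pi.add_apply, add_mul]
        rw [Finset.sum_add_distrib]
      map_smul' := by
        intro r a; funext v
        simp only [Pi.smul_apply, smul_eq_mul, RingHom.id_apply, Finset.mul_sum, mul_assoc] } with hT
  by_contra hcon
  push_neg at hcon
  -- T is injective
  have hker : ∀ a : ↥F → ℝ, T a = 0 → a = 0 := by
    intro a ha
    by_contra ha0
    set t : Fin n → ℝ := fun i => if h : i ∈ F then a ⟨i, h⟩ else 0 with ht
    have htF : ∀ i, t i ≠ 0 → i ∈ F := by
      intro i hti
      by_contra hiF
      exact hti (by simp [ht, dif_neg hiF])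
    have ht0 : t ≠ 0 := by
      obtain ⟨⟨i, hiF⟩, hai⟩ := Function.ne_iff.mp ha0
      intro h
      apply hai
      have := congrFun h i
      simpa [ht, dif_pos hiF] using this
    have hsum : ∑ i, t i • (Finsupp.single (xs i) (1:ℝ) - Finsupp.single (ys i) 1) = 0 := by
      ext v
      rw [graev_coordsum]
      by_cases hv : v ∈ V'
      · have h1 : ∑ i, t i * σ i v = ∑ i ∈ F, t i * σ i v := by
          refine (Finset.sum_subset (Finset.subset_univ F) ?_).symm
          intro i _ hiF
          simp [ht, dif_neg hiF]
        have h2 : ∑ i ∈ F, t i * σ i v = ∑ i : ↥F, a i * σ (i : Fin n) v := by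
          rw [← Finset.sum_coe_sort]
          refine Finset.sum_congr rfl fun i _ => ?_
          simp [ht, dif_pos i.2]
        have h3 := congrFun ha ⟨v, hv⟩
        have h4 : ∑ i : ↥F, a i * σ (i : Fin n) v = 0 := by
          simpa [hT] using h3
        have h5 : ∑ i, t i * σ i v = 0 := by rw [h1, h2, h4]
        simpa [hσ] using h5
      · rw [show (0 : V →₀ ℝ) v = 0 from rfl]
        refine Finset.sum_eq_zero fun i _ => ?_
        by_cases hti : t i = 0
        · simp [hti]
        · have hiF := htF i hti
          have : xs i ≠ v := fun h => hv (h ▸ hxsV' i hiF)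
          have h2 : ys i ≠ v := fun h => hv (h ▸ hysV' i hiF)
          simp [this, h2]
    exact hcon t ht0 htF hsum
  have hinj : Function.Injective T := by
    rw [← LinearMap.ker_eq_bot]
    exact LinearMap.ker_eq_bot'.mpr hker
  -- sum functional
  set sumF : (↥V' → ℝ) →ₗ[ℝ] ℝ :=
    { toFun := fun g => ∑ v : ↥V', g v
      map_add' := by intro a b; simp [Finset.sum_add_distrib]
      map_smul' := by intro r a; simp [Finset.mul_sum] } with hsumF
  have hrange : LinearMap.range T ≤ LinearMap.ker sumF := by
    rintro g ⟨t, rfl⟩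
    simp only [LinearMap.mem_ker, hsumF, hT, LinearMap.coe_mk, AddHom.coe_mk]
    show ∑ v : ↥V', ∑ i : ↥F, t i * σ (i : Fin n) (v : V) = 0
    rw [Finset.sum_comm]
    refine Finset.sum_eq_zero fun i _ => ?_
    rw [← Finset.mul_sum]
    have : ∑ v : ↥V', σ (i : Fin n) (v : V) = 0 := by
      rw [Finset.sum_coe_sort V' (fun v => σ (i : Fin n) v)]
      simp only [hσ]
      rw [Finset.sum_sub_distrib]
      rw [Finset.sum_ite_eq V' (xs (i : Fin n)) (fun _ => (1:ℝ)),
        Finset.sum_ite_eq V' (ys (i : Fin n)) (fun _ => (1:ℝ))]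
      rw [if_pos (hxsV' _ i.2), if_pos (hysV' _ i.2)]
      ring
    rw [this, mul_zero]
  -- dimension count
  have hc1 : Module.finrank ℝ (↥F → ℝ) = F.card := by
    rw [Module.finrank_fintype_fun_eq_card, Fintype.card_coe]
  have hc2 : Module.finrank ℝ (↥V' → ℝ) = V'.card := by
    rw [Module.finrank_fintype_fun_eq_card, Fintype.card_coe]
  have hsurj : Function.Surjective sumF := by
    intro r
    refine ⟨Pi.single (⟨xs i₁, hxsV' i₁ hi₁⟩ : ↥V') r, ?_⟩
    simp only [hsumF, LinearMap.coe_mk, AddHom.coe_mk]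
    show ∑ v : ↥V', (Pi.single (⟨xs i₁, hxsV' i₁ hi₁⟩ : ↥V') r : ↥V' → ℝ) v = r
    rw [Finset.sum_pi_single']
    simp
  have hrk : Module.finrank ℝ (LinearMap.range sumF) = 1 := by
    rw [LinearMap.range_eq_top.mpr hsurj]
    simpa using Module.finrank_self ℝ
  have hdim : Module.finrank ℝ (LinearMap.ker sumF) = V'.card - 1 := by
    have := LinearMap.finrank_range_add_finrank_ker sumF
    rw [hrk, hc2] at this
    omega
  set T' : (↥F → ℝ) →ₗ[ℝ] (LinearMap.ker sumF) := T.codRestrict _ (fun t => hrange ⟨t, rfl⟩)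
  have hinj' : Function.Injective T' := by
    intro a b hab
    exact hinj (congrArg Subtype.val hab)
  have hle := LinearMap.finrank_le_finrank_of_injective hinj'
  rw [hc1, hdim] at hle
  omega

/-- Integrality: a real combination of single-differences with integer
coordinates can be replaced by an integer combination (on the same edges)
of no larger cost. -/
lemma graev_int_rep {V : Type*} {n : ℕ} (xs ys : Fin n → V) (c : Fin n → ℝ)
    (hc : ∀ i, 0 ≤ c i) :
    ∀ (lam : Fin n → ℝ),
    (∀ v : V, IsZ (((∑ i, lam i • (Finsupp.single (xs i) (1:ℝ) - Finsupp.single (ys i) 1)) : V →₀ ℝ) v)) →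
    ∃ m : Fin n → ℤ,
      ((∑ i, ((m i : ℝ)) • (Finsupp.single (xs i) (1:ℝ) - Finsupp.single (ys i) 1)) : V →₀ ℝ)
        = ∑ i, lam i • (Finsupp.single (xs i) (1:ℝ) - Finsupp.single (ys i) 1)
      ∧ ∑ i, |(m i : ℝ)| * c i ≤ ∑ i, |lam i| * c i := by
  classical
  suffices H : ∀ (N : ℕ) (lam : Fin n → ℝ),
      (univ.filter fun i => ¬ IsZ (lam i)).card = N →
      (∀ v : V, IsZ (((∑ i, lam i • (Finsupp.single (xs i) (1:ℝ) - Finsupp.single (ys i) 1)) : V →₀ ℝ) v)) →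
      ∃ m : Fin n → ℤ,
        ((∑ i, ((m i : ℝ)) • (Finsupp.single (xs i) (1:ℝ) - Finsupp.single (ys i) 1)) : V →₀ ℝ)
          = ∑ i, lam i • (Finsupp.single (xs i) (1:ℝ) - Finsupp.single (ys i) 1)
        ∧ ∑ i, |(m i : ℝ)| * c i ≤ ∑ i, |lam i| * c i by
    intro lam hint
    exact H _ lam rfl hint
  intro N
  induction N using Nat.strong_induction_on with
  | _ N ih =>
    intro lam hN hint
    by_cases hall : ∀ i, IsZ (lam i)
    · choose m hm using hall
      refine ⟨m, ?_, ?_⟩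
      · exact Finset.sum_congr rfl fun i _ => by rw [hm i]
      · refine le_of_eq (Finset.sum_congr rfl fun i _ => by rw [hm i])
    · -- there is a fractional coordinate
      set F : Finset (Fin n) := univ.filter (fun i => ¬ IsZ (lam i)) with hF
      have hFmem : ∀ i, i ∈ F ↔ ¬ IsZ (lam i) := by
        intro i; simp [hF]
      have hFne : F.Nonempty := by
        push_neg at hall
        obtain ⟨i, hi⟩ := hall
        exact ⟨i, (hFmem i).mpr hi⟩
      -- find a circulation supported on F
      have hcircex : ∃ t : Fin n → ℝ, t ≠ 0 ∧ (∀ i, t i ≠ 0 → i ∈ F) ∧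
          ∑ i, t i • (Finsupp.single (xs i) (1:ℝ) - Finsupp.single (ys i) 1) = 0 := by
        by_cases hl : ∃ i ∈ F, xs i = ys i
        · obtain ⟨i₂, hi₂F, hi₂⟩ := hl
          refine ⟨fun j => if j = i₂ then 1 else 0, ?_, ?_, ?_⟩
          · intro h
            have := congrFun h i₂
            simp at this
          · intro i hti
            by_cases h : i = i₂
            · exact h ▸ hi₂F
            · simp [h] at hti
          · rw [Finset.sum_eq_single_of_mem i₂ (Finset.mem_univ i₂)]
            · simp [hi₂]
            · intro j _ hj
              simp [hj]
        · push_neg at hl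
          refine graev_circ xs ys F hFne hl ?_
          intro v i hiF hend
          by_contra hno
          push_neg at hno
          -- derive that lam i is an integer, contradiction
          have hIv := hint v
          rw [graev_coordsum] at hIv
          have hsplit := Finset.sum_filter_add_sum_filter_not univ
            (fun i => ¬ IsZ (lam i))
            (fun i => lam i * ((if xs i = v then (1:ℝ) else 0) - (if ys i = v then 1 else 0)))
          have hco : IsZ (∑ i ∈ univ.filter (fun i => ¬¬ IsZ (lam i)),
              lam i * ((if xs i = v then (1:ℝ) else 0) - (if ys i = v then 1 else 0))) := by
            refine IsZ.finsetSum _ _ fun j hj => ?_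
            have hj' : IsZ (lam j) := not_not.mp (Finset.mem_filter.mp hj).2
            have hone : ∀ (P : Prop) [Decidable P], IsZ (if P then (1:ℝ) else 0) := by
              intro P _
              split
              · exact ⟨1, by norm_num⟩
              · exact IsZ.zero
            exact hj'.mul ((hone _).sub (hone _))
          have hFsum : IsZ (∑ i ∈ F,
              lam i * ((if xs i = v then (1:ℝ) else 0) - (if ys i = v then 1 else 0))) := by
            have h1 : (∑ i ∈ F, lam i * ((if xs i = v then (1:ℝ) else 0) - (if ys i = v then 1 else 0)))
                = (∑ i, lam i * ((if xs i = v then (1:ℝ) else 0) - (if ys i = v then 1 else 0)))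
                  - ∑ i ∈ univ.filter (fun i => ¬¬ IsZ (lam i)),
                    lam i * ((if xs i = v then (1:ℝ) else 0) - (if ys i = v then 1 else 0)) := by
              rw [← hF] at hsplit
              linarith
            rw [h1]
            exact hIv.sub hco
          have hsingle : (∑ i ∈ F,
              lam i * ((if xs i = v then (1:ℝ) else 0) - (if ys i = v then 1 else 0)))
              = lam i * ((if xs i = v then (1:ℝ) else 0) - (if ys i = v then 1 else 0)) := by
            refine Finset.sum_eq_single_of_mem i hiF fun j hjF hji => ?_
            have hxj : xs j ≠ v := (hno j hjF hji).1
            have hyj : ys j ≠ v := (hno j hjF hji).2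
            simp [hxj, hyj]
          rw [hsingle] at hFsum
          have : IsZ (lam i) := by
            rcases hend with h | h
            · have hy : ys i ≠ v := fun h2 => (hl i hiF) (h ▸ h2.symm ▸ rfl)
              rw [if_pos h, if_neg hy] at hFsum
              simpa using hFsum
            · have hx : xs i ≠ v := fun h2 => (hl i hiF) (h ▸ h2.symm ▸ rfl)
              rw [if_pos h, if_neg hx] at hFsum
              obtain ⟨k, hk⟩ := hFsum
              exact ⟨-k, by push_cast; push_cast at hk; linarith⟩
          exact ((hFmem i).mp hiF) this
      obtain ⟨t, ht0, htF, hcirc⟩ := hcircex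
      have hsupp' : ∀ i, t i ≠ 0 → ¬ IsZ (lam i) := fun i hti => (hFmem i).mp (htF i hti)
      obtain ⟨s, hcost, hcard⟩ := graev_step c lam t hc ht0 hsupp'
      set lam' : Fin n → ℝ := fun i => lam i + s * t i with hlam'
      have hsame : ((∑ i, lam' i • (Finsupp.single (xs i) (1:ℝ) - Finsupp.single (ys i) 1)) : V →₀ ℝ)
          = ∑ i, lam i • (Finsupp.single (xs i) (1:ℝ) - Finsupp.single (ys i) 1) := by
        have h1 : ∀ i, lam' i • (Finsupp.single (xs i) (1:ℝ) - Finsupp.single (ys i) 1)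
            = lam i • (Finsupp.single (xs i) (1:ℝ) - Finsupp.single (ys i) 1)
              + s • (t i • (Finsupp.single (xs i) (1:ℝ) - Finsupp.single (ys i) 1)) := by
          intro i
          rw [smul_smul, ← add_smul]
        rw [Finset.sum_congr rfl fun i _ => h1 i, Finset.sum_add_distrib,
          ← Finset.smul_sum, hcirc, smul_zero, add_zero]
      have hint' : ∀ v : V, IsZ (((∑ i, lam' i • (Finsupp.single (xs i) (1:ℝ) - Finsupp.single (ys i) 1)) : V →₀ ℝ) v) := by
        intro v; rw [hsame]; exact hint v
      have hNlt : (univ.filter fun i => ¬ IsZ (lam' i)).card < N := hN ▸ hcard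
      obtain ⟨m, hmeq, hmcost⟩ := ih _ hNlt lam' rfl hint'
      exact ⟨m, hmeq.trans hsame, hmcost.trans hcost⟩

section GraevAssemble

open Finset
open scoped Classical
open scoped Pointwise

variable {X : Type*} [MetricSpace X]

/-- identity map realizing `FreeL X base` as a finitely supported function. -/
def graevCoe (base : X) (w : FreeL X base) : {x : X // x ≠ base} →₀ ℝ := w

/-- identity map in the other direction. -/
def graevOf (base : X) (m : {x : X // x ≠ base} →₀ ℝ) : FreeL X base := m

lemma graevCoe_add (base : X) (u v : FreeL X base) :
    graevCoe base (u + v) = graevCoe base u + graevCoe base v := rfl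

lemma graevCoe_smul (base : X) (r : ℝ) (u : FreeL X base) :
    graevCoe base (r • u) = r • graevCoe base u := rfl

lemma graevCoe_zero (base : X) : graevCoe base 0 = 0 := rfl

lemma graevCoe_of (base : X) (m : {x : X // x ≠ base} →₀ ℝ) :
    graevCoe base (graevOf base m) = m := rfl

lemma graevOf_coe (base : X) (w : FreeL X base) : graevOf base (graevCoe base w) = w := rfl

lemma graevδ_base (base : X) : FreeL.δ base base = 0 := dif_pos rfl

lemma graevδ_ne (base : X) {x : X} (h : x ≠ base) :
    FreeL.δ base x = graevOf base (Finsupp.single ⟨x, h⟩ 1) := dif_neg h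

lemma graevδ_coe (base : X) (j : {x : X // x ≠ base}) :
    FreeL.δ base j.val = graevOf base (Finsupp.single j 1) := dif_neg j.prop

lemma graevOf_single_smul (base : X) (j : {x : X // x ≠ base}) (r : ℝ) :
    r • FreeL.δ base j.val = graevOf base (Finsupp.single j r) := by
  rw [graevδ_coe]
  show r • (Finsupp.single j (1:ℝ)) = Finsupp.single j r
  rw [Finsupp.smul_single', mul_one]

/-- the projection from the free module on all of `X` onto `FreeL X base`. -/
noncomputable def graevPi (base : X) : (X →₀ ℝ) →ₗ[ℝ] FreeL X base :=
  Finsupp.linearCombination ℝ (FreeL.δ base)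

lemma graevPi_single (base : X) (x : X) :
    graevPi base (Finsupp.single x 1) = FreeL.δ base x := by
  rw [graevPi, Finsupp.linearCombination_single, one_smul]

lemma graevPi_apply (base : X) (m : X →₀ ℝ) (j : {x : X // x ≠ base}) :
    graevCoe base (graevPi base m) j = m j.val := by
  induction m using Finsupp.induction_linear with
  | zero => rw [map_zero, graevCoe_zero]; simp
  | add f g hf hg =>
    rw [map_add, graevCoe_add, Finsupp.add_apply, hf, hg, Finsupp.add_apply]
  | single x r =>
    rw [graevPi, Finsupp.linearCombination_single, graevCoe_smul]
    by_cases hx : x = base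
    · subst hx
      rw [graevδ_base, graevCoe_zero, smul_zero]
      rw [Finsupp.single_apply, if_neg (fun hh => j.prop hh.symm)]
      rfl
    · rw [graevδ_ne base hx, graevCoe_of, Finsupp.smul_apply, Finsupp.single_apply,
        Finsupp.single_apply]
      by_cases hj : x = j.val
      · rw [if_pos (Subtype.ext hj), if_pos hj, smul_eq_mul, mul_one]
      · rw [if_neg (fun hh => hj (congrArg Subtype.val hh)), if_neg hj, smul_eq_mul, mul_zero]

/-- the "total mass" functional. -/
noncomputable def graevTau (X : Type*) [MetricSpace X] : (X →₀ ℝ) →ₗ[ℝ] ℝ :=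
  Finsupp.linearCombination ℝ (fun _ : X => (1:ℝ))

lemma graevTau_apply (m : X →₀ ℝ) : graevTau X m = ∑ v ∈ m.support, m v := by
  rw [graevTau, Finsupp.linearCombination_apply]
  simp [Finsupp.sum]

lemma graev_base_coord (base : X) (m : X →₀ ℝ) :
    m base = graevTau X m - ∑ v ∈ m.support.erase base, m v := by
  rw [graevTau_apply]
  by_cases hb : base ∈ m.support
  · rw [← Finset.add_sum_erase _ _ hb]
    ring
  · rw [Finset.erase_eq_of_notMem hb]
    have : m base = 0 := Finsupp.notMem_support_iff.mp hb
    rw [this]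
    ring

/-- representation costs of an element of the free space. -/
def graevRepSet (base : X) (w : FreeL X base) : Set ℝ :=
  {C | ∃ (n : ℕ) (xs ys : Fin n → X) (lam : Fin n → ℝ),
    (∑ i, lam i • (FreeL.δ base (xs i) - FreeL.δ base (ys i))) = w ∧
    C = ∑ i, |lam i| * dist (xs i) (ys i)}

lemma graevRepSet_nonneg (base : X) (w : FreeL X base) :
    ∀ C ∈ graevRepSet base w, 0 ≤ C := by
  rintro C ⟨n, xs, ys, lam, _, rfl⟩
  exact Finset.sum_nonneg fun i _ => mul_nonneg (abs_nonneg _) dist_nonneg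

lemma graevRepSet_add (base : X) {u v : FreeL X base} {C D : ℝ}
    (hC : C ∈ graevRepSet base u) (hD : D ∈ graevRepSet base v) :
    C + D ∈ graevRepSet base (u + v) := by
  obtain ⟨n, xs, ys, lam, hsum, rfl⟩ := hC
  obtain ⟨n', xs', ys', lam', hsum', rfl⟩ := hD
  refine ⟨n + n', Fin.append xs xs', Fin.append ys ys', Fin.append lam lam', ?_, ?_⟩
  · rw [Fin.sum_univ_add]
    simp only [Fin.append_left, Fin.append_right]
    rw [hsum, hsum']
  · rw [Fin.sum_univ_add]
    simp only [Fin.append_left, Fin.append_right]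

lemma graevRepSet_single (base : X) (j : {x : X // x ≠ base}) (r : ℝ) :
    |r| * dist j.val base ∈ graevRepSet base (graevOf base (Finsupp.single j r)) := by
  refine ⟨1, fun _ => j.val, fun _ => base, fun _ => r, ?_, by simp⟩
  rw [Fin.sum_univ_one]
  show r • (FreeL.δ base j.val - FreeL.δ base base) = _
  rw [graevδ_base, sub_zero, graevOf_single_smul]

lemma graevRepSet_nonempty (base : X) (w : FreeL X base) :
    (graevRepSet base w).Nonempty := by
  have h : ∀ m : {x : X // x ≠ base} →₀ ℝ, (graevRepSet base (graevOf base m)).Nonempty := by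
    intro m
    induction m using Finsupp.induction_linear with
    | zero =>
      refine ⟨0, 0, Fin.elim0, Fin.elim0, Fin.elim0, ?_, by simp⟩
      show _ = (0 : FreeL X base)
      simp
    | add f g hf hg =>
      obtain ⟨C, hC⟩ := hf
      obtain ⟨D, hD⟩ := hg
      exact ⟨C + D, graevRepSet_add base hC hD⟩
    | single j r => exact ⟨_, graevRepSet_single base j r⟩
  simpa [graevOf_coe] using h (graevCoe base w)

/-- the Arens–Eells / Kantorovich–Rubinstein seminorm. -/
noncomputable def graevPAE (base : X) (w : FreeL X base) : ℝ :=
  sInf (graevRepSet base w)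

lemma graevPAE_le (base : X) {w : FreeL X base} {C : ℝ} (hC : C ∈ graevRepSet base w) :
    graevPAE base w ≤ C :=
  csInf_le ⟨0, fun _ h => graevRepSet_nonneg base w _ h⟩ hC

lemma graevPAE_add (base : X) (u v : FreeL X base) :
    graevPAE base (u + v) ≤ graevPAE base u + graevPAE base v := by
  have h : ∀ C ∈ graevRepSet base u, ∀ D ∈ graevRepSet base v,
      graevPAE base (u + v) ≤ C + D := fun C hC D hD =>
    graevPAE_le base (graevRepSet_add base hC hD)
  have key : ∀ D ∈ graevRepSet base v, graevPAE base (u + v) ≤ graevPAE base u + D := by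
    intro D hD
    have : graevPAE base (u + v) - D ≤ graevPAE base u :=
      le_csInf (graevRepSet_nonempty base u) fun C hC => by linarith [h C hC D hD]
    linarith
  have : graevPAE base (u + v) - graevPAE base u ≤ graevPAE base v :=
    le_csInf (graevRepSet_nonempty base v) fun D hD => by linarith [key D hD]
  linarith

lemma graevRepSet_smul (base : X) (a : ℝ) (ha : a ≠ 0) (w : FreeL X base) :
    graevRepSet base (a • w) = (fun C => |a| * C) '' graevRepSet base w := by
  ext C
  constructor
  · rintro ⟨n, xs, ys, lam, hsum, rfl⟩
    refine ⟨∑ i, |a⁻¹ * lam i| * dist (xs i) (ys i), ⟨n, xs, ys, fun i => a⁻¹ * lam i, ?_, rfl⟩, ?_⟩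
    · have : ∑ i, (a⁻¹ * lam i) • (FreeL.δ base (xs i) - FreeL.δ base (ys i))
          = a⁻¹ • ∑ i, lam i • (FreeL.δ base (xs i) - FreeL.δ base (ys i)) := by
        rw [Finset.smul_sum]
        exact Finset.sum_congr rfl fun i _ => by rw [smul_smul]
      rw [this, hsum, smul_smul, inv_mul_cancel₀ ha, one_smul]
    · show |a| * (∑ i, |a⁻¹ * lam i| * dist (xs i) (ys i)) = _
      rw [Finset.mul_sum]
      refine Finset.sum_congr rfl fun i _ => ?_
      rw [abs_mul, abs_inv, ← mul_assoc, ← mul_assoc, mul_inv_cancel₀ (abs_ne_zero.mpr ha), one_mul]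
  · rintro ⟨C, ⟨n, xs, ys, lam, hsum, rfl⟩, rfl⟩
    refine ⟨n, xs, ys, fun i => a * lam i, ?_, ?_⟩
    · have : ∑ i, (a * lam i) • (FreeL.δ base (xs i) - FreeL.δ base (ys i))
          = a • ∑ i, lam i • (FreeL.δ base (xs i) - FreeL.δ base (ys i)) := by
        rw [Finset.smul_sum]
        exact Finset.sum_congr rfl fun i _ => by rw [smul_smul]
      rw [this, hsum]
    · show |a| * (∑ i, |lam i| * dist (xs i) (ys i)) = ∑ i, |a * lam i| * dist (xs i) (ys i)
      rw [Finset.mul_sum]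
      exact Finset.sum_congr rfl fun i _ => by rw [abs_mul, mul_assoc]

lemma graevPAE_zero (base : X) : graevPAE base (0 : FreeL X base) = 0 := by
  refine le_antisymm ?_ ?_
  · exact graevPAE_le base ⟨0, Fin.elim0, Fin.elim0, Fin.elim0, by simp, by simp⟩
  · exact le_csInf (graevRepSet_nonempty base 0) fun C hC => graevRepSet_nonneg base 0 C hC

lemma graevPAE_smul (base : X) (a : ℝ) (w : FreeL X base) :
    graevPAE base (a • w) = ‖a‖ * graevPAE base w := by
  rcases eq_or_ne a 0 with rfl | ha
  · rw [zero_smul, graevPAE_zero, norm_zero, zero_mul]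
  · rw [Real.norm_eq_abs, graevPAE, graevRepSet_smul base a ha w]
    have himg : (fun C => |a| * C) '' graevRepSet base w = |a| • graevRepSet base w := by
      rw [← Set.image_smul]
      rfl
    rw [himg, Real.sInf_smul_of_nonneg (abs_nonneg a)]
    rfl

/-- the Arens–Eells seminorm as a bundled seminorm. -/
noncomputable def graevPAEsem (base : X) : Seminorm ℝ (FreeL X base) :=
  Seminorm.of (graevPAE base) (graevPAE_add base) (graevPAE_smul base)

lemma graev_seminorm_sum_le {E : Type*} [AddCommGroup E] [Module ℝ E] (p : Seminorm ℝ E)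
    {ι : Type*} (s : Finset ι) (f : ι → E) :
    p (∑ i ∈ s, f i) ≤ ∑ i ∈ s, p (f i) := by
  classical
  induction s using Finset.induction_on with
  | empty => simp
  | insert _ _ h ih =>
    rw [Finset.sum_insert h, Finset.sum_insert h]
    exact (map_add_le_add p _ _).trans (by linarith)

lemma graevPAEsem_good (base : X) : FreeL.IsGoodSeminorm base (graevPAEsem base) := by
  intro x y
  refine graevPAE_le base ⟨1, fun _ => x, fun _ => y, fun _ => 1, ?_, by simp⟩
  rw [Fin.sum_univ_one, one_smul]

/-- every good seminorm is bounded on each element. -/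
lemma graev_good_bound (base : X) (p : Seminorm ℝ (FreeL X base))
    (hp : FreeL.IsGoodSeminorm base p) (z : FreeL X base) :
    p z ≤ ∑ j ∈ (graevCoe base z).support, |graevCoe base z j| * dist j.val base := by
  have hδ : ∀ j : {x : X // x ≠ base}, p (FreeL.δ base j.val) ≤ dist j.val base := by
    intro j
    have := hp j.val base
    rwa [graevδ_base, sub_zero] at this
  have hsingle : ∀ (j : {x : X // x ≠ base}) (r : ℝ),
      p (graevOf base (Finsupp.single j r)) ≤ |r| * dist j.val base := by
    intro j r
    rw [← graevOf_single_smul, map_smul_eq_mul, Real.norm_eq_abs]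
    exact mul_le_mul_of_nonneg_left (hδ j) (abs_nonneg r)
  have hz : z = ∑ j ∈ (graevCoe base z).support,
      graevOf base (Finsupp.single j (graevCoe base z j)) := by
    have h1 : graevCoe base z = ∑ j ∈ (graevCoe base z).support,
        Finsupp.single j (graevCoe base z j) := (Finsupp.sum_single (graevCoe base z)).symm
    conv_lhs => rw [show z = graevOf base (graevCoe base z) from rfl, h1]
    rfl
  calc p z = p (∑ j ∈ (graevCoe base z).support,
        graevOf base (Finsupp.single j (graevCoe base z j))) := by rw [← hz]
    _ ≤ ∑ j ∈ (graevCoe base z).support,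
        p (graevOf base (Finsupp.single j (graevCoe base z j))) :=
      graev_seminorm_sum_le p _ _
    _ ≤ _ := Finset.sum_le_sum fun j _ => hsingle j _

end GraevAssemble

/-- The Graev metric `d̄(a,b) = ‖a-b‖` on the free abelian group `A(X) ⊆ L(X)`
is the maximal bi-invariant metric on `A(X)` whose restriction to `X` is
majorized by `d`. -/
theorem graev_metric_maximal
    {X : Type*} [MetricSpace X] (base : X)
    (A : AddSubgroup (FreeL X base))
    (hA : A = AddSubgroup.closure (Set.range (FreeL.δ base)))
    (ρ : A → A → ℝ)
    (hρ_self : ∀ a b : A, ρ a b = 0 ↔ a = b)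
    (hρ_symm : ∀ a b : A, ρ a b = ρ b a)
    (hρ_tri : ∀ a b c : A, ρ a c ≤ ρ a b + ρ b c)
    (hρ_inv : ∀ a b c : A, ρ (a + c) (b + c) = ρ a b)
    (hρ_le : ∀ x y : X,
      ρ ⟨FreeL.δ base x, hA ▸ AddSubgroup.subset_closure ⟨x, rfl⟩⟩
        ⟨FreeL.δ base y, hA ▸ AddSubgroup.subset_closure ⟨y, rfl⟩⟩ ≤ dist x y) :
    ∀ a b : A, ρ a b ≤ FreeL.freeNorm base ((a : FreeL X base) - (b : FreeL X base)) := by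
  classical
  have hδA : ∀ x : X, FreeL.δ base x ∈ A := fun x =>
    hA ▸ AddSubgroup.subset_closure ⟨x, rfl⟩
  set aδ : X → A := fun x => ⟨FreeL.δ base x, hδA x⟩ with haδ
  set g : A → ℝ := fun a => ρ a 0 with hg
  have g0 : g 0 = 0 := (hρ_self 0 0).mpr rfl
  have gadd : ∀ u v : A, g (u + v) ≤ g u + g v := by
    intro u v
    have h1 : ρ (u + v) (0 + v) = ρ u 0 := hρ_inv u 0 v
    rw [zero_add] at h1
    calc g (u + v) = ρ (u + v) 0 := rfl
      _ ≤ ρ (u + v) v + ρ v 0 := hρ_tri _ _ _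
      _ = g u + g v := by rw [h1]
  have gneg : ∀ u : A, g (-u) = g u := by
    intro u
    have h1 : ρ (-u + u) (0 + u) = ρ (-u) 0 := hρ_inv (-u) 0 u
    rw [neg_add_cancel, zero_add] at h1
    calc g (-u) = ρ (-u) 0 := rfl
      _ = ρ 0 u := h1.symm
      _ = ρ u 0 := hρ_symm 0 u
      _ = g u := rfl
  have gnsmul : ∀ (k : ℕ) (u : A), g (k • u) ≤ (k : ℝ) * g u := by
    intro k
    induction k with
    | zero => intro u; rw [zero_smul]; simp [g0]
    | succ k ih =>
      intro u
      rw [succ_nsmul]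
      calc g (k • u + u) ≤ g (k • u) + g u := gadd _ _
        _ ≤ (k : ℝ) * g u + g u := by linarith [ih u]
        _ = ((k + 1 : ℕ) : ℝ) * g u := by push_cast; ring
  have gzsmul : ∀ (k : ℤ) (u : A), g (k • u) ≤ |(k : ℝ)| * g u := by
    intro k u
    rcases le_or_gt 0 k with hk | hk
    · lift k to ℕ using hk
      rw [natCast_zsmul]
      have := gnsmul k u
      rwa [show |((k : ℤ) : ℝ)| = ((k : ℕ) : ℝ) by push_cast; exact abs_of_nonneg (by positivity)]
    · have hk' : (0:ℤ) ≤ -k := by linarith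
      have hkk : (((-k).toNat : ℕ) : ℤ) = -k := Int.toNat_of_nonneg hk'
      have h1 : k • u = -(((-k).toNat : ℕ) • u) := by
        rw [← natCast_zsmul, hkk, neg_smul, neg_neg]
      rw [h1, gneg]
      have h4 := gnsmul (-k).toNat u
      have habs : |(k : ℝ)| = (((-k).toNat : ℕ) : ℝ) := by
        have h2 : (((-k).toNat : ℕ) : ℝ) = -(k : ℝ) := by exact_mod_cast hkk
        rw [abs_of_neg (by exact_mod_cast hk), h2]
      rwa [habs]
  have gedge : ∀ x y : X, g (aδ x - aδ y) ≤ dist x y := by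
    intro x y
    have h1 : ρ (aδ x - aδ y + aδ y) (0 + aδ y) = ρ (aδ x - aδ y) 0 := hρ_inv _ _ _
    rw [sub_add_cancel, zero_add] at h1
    calc g (aδ x - aδ y) = ρ (aδ x) (aδ y) := h1.symm
      _ ≤ dist x y := hρ_le x y
  have gsum : ∀ (n : ℕ) (xs ys : Fin n → X) (m : Fin n → ℤ),
      g (∑ i, m i • (aδ (xs i) - aδ (ys i))) ≤ ∑ i, |(m i : ℝ)| * dist (xs i) (ys i) := by
    intro n xs ys m
    have H : ∀ s : Finset (Fin n), g (∑ i ∈ s, m i • (aδ (xs i) - aδ (ys i)))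
        ≤ ∑ i ∈ s, |(m i : ℝ)| * dist (xs i) (ys i) := by
      intro s
      induction s using Finset.induction_on with
      | empty => simp [g0]
      | insert _ _ h ih =>
        rename_i i s'
        rw [Finset.sum_insert h, Finset.sum_insert h]
        have h2 : g (m i • (aδ (xs i) - aδ (ys i))) ≤ |(m i : ℝ)| * dist (xs i) (ys i) := by
          calc g (m i • (aδ (xs i) - aδ (ys i)))
              ≤ |(m i : ℝ)| * g (aδ (xs i) - aδ (ys i)) := gzsmul _ _
            _ ≤ |(m i : ℝ)| * dist (xs i) (ys i) :=
              mul_le_mul_of_nonneg_left (gedge _ _) (abs_nonneg _)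
        calc g (m i • (aδ (xs i) - aδ (ys i)) + ∑ j ∈ s', m j • (aδ (xs j) - aδ (ys j)))
            ≤ g (m i • (aδ (xs i) - aδ (ys i)))
              + g (∑ j ∈ s', m j • (aδ (xs j) - aδ (ys j))) := gadd _ _
          _ ≤ _ := by linarith
    exact H Finset.univ
  intro a b
  have hab : ρ a b = g (a - b) := by
    have h1 : ρ (a - b + b) (0 + b) = ρ (a - b) 0 := hρ_inv (a - b) 0 b
    rw [sub_add_cancel, zero_add] at h1
    exact h1
  rw [hab]
  set z : FreeL X base := (a : FreeL X base) - (b : FreeL X base) with hzdef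
  have hzA : z ∈ A := by rw [hzdef]; exact sub_mem a.2 b.2
  have hzel : ((a - b : A) : FreeL X base) = z := by rw [AddSubgroup.coe_sub]
  -- every element of A has integer coordinates
  have hint : ∀ w : A, ∀ j : {x : X // x ≠ base},
      IsZ (graevCoe base (w : FreeL X base) j) := by
    intro w j
    have hw : (w : FreeL X base) ∈ AddSubgroup.closure (Set.range (FreeL.δ base)) := by
      rw [← hA]; exact w.2
    refine AddSubgroup.closure_induction ?_ ?_ ?_ ?_ hw
    · rintro x ⟨x', rfl⟩
      by_cases hx : x' = base
      · subst hx
        rw [graevδ_base, graevCoe_zero]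
        exact ⟨0, by simp⟩
      · rw [graevδ_ne base hx, graevCoe_of, Finsupp.single_apply]
        split
        · exact ⟨1, by norm_num⟩
        · exact ⟨0, by norm_num⟩
    · rw [graevCoe_zero]
      exact ⟨0, by simp⟩
    · intro u v _ _ hIu hIv
      rw [graevCoe_add, Finsupp.add_apply]
      exact hIu.add hIv
    · intro u _ hIu
      rw [show graevCoe base (-u) = -graevCoe base u from rfl, Finsupp.neg_apply]
      exact hIu.neg
  have hkey : g (a - b) ≤ graevPAE base z := by
    refine le_csInf (graevRepSet_nonempty base z) ?_
    rintro C ⟨n, xs, ys, lam, hsum, rfl⟩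
    set SM : X →₀ ℝ :=
      ∑ i, lam i • (Finsupp.single (xs i) (1:ℝ) - Finsupp.single (ys i) 1) with hSM
    have hπ : graevPi base SM = z := by
      rw [hSM, map_sum, ← hsum]
      refine Finset.sum_congr rfl fun i _ => ?_
      rw [map_smul, map_sub, graevPi_single, graevPi_single]
    have hτ : graevTau X SM = 0 := by
      rw [hSM, map_sum]
      refine Finset.sum_eq_zero fun i _ => ?_
      rw [map_smul, map_sub, graevTau, Finsupp.linearCombination_single,
        Finsupp.linearCombination_single]
      simp
    have hcoords : ∀ v : X, IsZ (SM v) := by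
      intro v
      by_cases hv : v = base
      · rw [hv, graev_base_coord base SM, hτ, zero_sub]
        refine IsZ.neg (IsZ.finsetSum _ _ fun u hu => ?_)
        have hub : u ≠ base := Finset.ne_of_mem_erase hu
        have h3 := hint ⟨z, hzA⟩ ⟨u, hub⟩
        rw [show ((⟨z, hzA⟩ : A) : FreeL X base) = z from rfl, ← hπ, graevPi_apply] at h3
        exact h3
      · have h3 := hint ⟨z, hzA⟩ ⟨v, hv⟩
        rw [show ((⟨z, hzA⟩ : A) : FreeL X base) = z from rfl, ← hπ, graevPi_apply] at h3
        exact h3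
    obtain ⟨m, hmeq, hmcost⟩ := graev_int_rep xs ys (fun i => dist (xs i) (ys i))
      (fun _ => dist_nonneg) lam (by intro v; rw [← hSM]; exact hcoords v)
    set aS : A := ∑ i, m i • (aδ (xs i) - aδ (ys i)) with haS
    have hcoe : (aS : FreeL X base) = z := by
      have h1 : ((∑ i, m i • (aδ (xs i) - aδ (ys i)) : A) : FreeL X base)
          = ∑ i, (m i : ℝ) • (FreeL.δ base (xs i) - FreeL.δ base (ys i)) := by
        rw [show ((∑ i, m i • (aδ (xs i) - aδ (ys i)) : A) : FreeL X base)
            = A.subtype (∑ i, m i • (aδ (xs i) - aδ (ys i))) from rfl, map_sum]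
        refine Finset.sum_congr rfl fun i _ => ?_
        rw [AddMonoidHom.map_zsmul]
        rw [show A.subtype (aδ (xs i) - aδ (ys i))
            = FreeL.δ base (xs i) - FreeL.δ base (ys i) from rfl]
        rw [← Int.cast_smul_eq_zsmul ℝ]
      have h2 : graevPi base (∑ i, (m i : ℝ) •
          (Finsupp.single (xs i) (1:ℝ) - Finsupp.single (ys i) 1)) = z := by
        rw [hmeq, ← hSM, hπ]
      rw [map_sum] at h2
      simp only [map_smul, map_sub, graevPi_single] at h2
      rw [haS, h1]
      exact h2
    have haSel : aS = a - b := Subtype.ext (by rw [hcoe, hzel])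
    calc g (a - b) = g aS := by rw [haSel]
      _ ≤ ∑ i, |(m i : ℝ)| * dist (xs i) (ys i) := gsum n xs ys m
      _ ≤ ∑ i, |lam i| * dist (xs i) (ys i) := hmcost
  have hfinal : graevPAE base z ≤ FreeL.freeNorm base z := by
    have hbdd : BddAbove (Set.range fun p :
        {p : Seminorm ℝ (FreeL X base) // FreeL.IsGoodSeminorm base p} => p.1 z) := by
      refine ⟨∑ j ∈ (graevCoe base z).support, |graevCoe base z j| * dist j.val base, ?_⟩
      rintro _ ⟨p, rfl⟩
      exact graev_good_bound base p.1 p.2 z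
    have h := le_ciSup hbdd
      (⟨graevPAEsem base, graevPAEsem_good base⟩ :
        {p : Seminorm ℝ (FreeL X base) // FreeL.IsGoodSeminorm base p})
    exact h
  exact hkey.trans hfinal
end

section
/- Universal property of the Graev metric: if (G,ς) is an abelian group with a bi-invariant metric and f: X → G is 1-Lipschitz with f(∗) = 0, then the unique group homomorphism f̄: A(X,∗) → G extending f is 1-Lipschitz with respect to the Graev metric d̄ on A(X,∗). -/
open scoped BigOperators

namespace GraevAux

open Finset FreeL

variable {X : Type*} [MetricSpace X] (base : X)

/-- Identity map viewing an element of `FreeL X base` as a `Finsupp`. -/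
def toF (z : FreeL X base) : {x : X // x ≠ base} →₀ ℝ := z

lemma toF_add (z w : FreeL X base) : toF base (z + w) = toF base z + toF base w := rfl
lemma toF_sub (z w : FreeL X base) : toF base (z - w) = toF base z - toF base w := rfl
lemma toF_neg (z : FreeL X base) : toF base (-z) = -(toF base z) := rfl
lemma toF_zero : toF base (0 : FreeL X base) = 0 := rfl
lemma toF_smul (c : ℝ) (z : FreeL X base) : toF base (c • z) = c • toF base z := rfl
lemma toF_sum {ι : Type*} (s : Finset ι) (f : ι → FreeL X base) :
    toF base (∑ i ∈ s, f i) = ∑ i ∈ s, toF base (f i) := rfl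

lemma coordEq (t : X) (s : {u : X // u ≠ base}) :
    toF base (δ base t) s = Finsupp.single t (1 : ℝ) s.1 := by
  classical
  unfold δ toF
  split_ifs with h
  · subst h
    simp [Finsupp.single_apply, Ne.symm s.2]
    rfl
  · show toF base (δ base t) s = _
    rw [show δ base t = Finsupp.single ⟨t, h⟩ 1 from dif_neg h]
    simp [toF, Finsupp.single_apply, Subtype.ext_iff]

lemma coordDelta (x y : X) (s : {u : X // u ≠ base}) :
    toF base (δ base x - δ base y) s
      = Finsupp.single x (1 : ℝ) s.1 - Finsupp.single y (1 : ℝ) s.1 := by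
  rw [toF_sub, Finsupp.sub_apply, coordEq, coordEq]

end GraevAux

namespace GraevAux2

open Finset FreeL GraevAux Pointwise

variable {X : Type*} [MetricSpace X] (base : X)

/-- The set of costs of representations of `z`. -/
def Rset (z : FreeL X base) : Set ℝ :=
  {r | ∃ (n : ℕ) (c : Fin n → ℝ) (x y : Fin n → X),
    z = ∑ i, c i • (δ base (x i) - δ base (y i)) ∧
    r = ∑ i, |c i| * dist (x i) (y i)}

lemma Rset_nonneg (z : FreeL X base) : ∀ r ∈ Rset base z, 0 ≤ r := by
  rintro r ⟨n, c, x, y, -, rfl⟩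
  exact Finset.sum_nonneg fun i _ => mul_nonneg (abs_nonneg _) dist_nonneg

lemma Rset_bddBelow (z : FreeL X base) : BddBelow (Rset base z) :=
  ⟨0, fun r hr => Rset_nonneg base z r hr⟩

lemma rep_exists (z : FreeL X base) :
    ∃ (n : ℕ) (c : Fin n → ℝ) (x y : Fin n → X),
      z = ∑ i, c i • (δ base (x i) - δ base (y i)) := by
  classical
  set s := (toF base z).support with hs
  refine ⟨s.card, fun i => toF base z (s.equivFin.symm i),
    fun i => ((s.equivFin.symm i : {u : X // u ≠ base}) : X), fun _ => base, ?_⟩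
  have hdb : δ base base = (0 : FreeL X base) := by unfold δ; simp
  have hδ : ∀ u : {u : X // u ≠ base}, δ base (u : X) = Finsupp.single u (1:ℝ) := by
    intro u
    exact dif_neg u.2
  set g : {u : X // u ≠ base} → ({u : X // u ≠ base} →₀ ℝ) :=
    fun u => Finsupp.single u (toF base z u) with hg
  have key : ∀ i : Fin s.card,
      toF base z (s.equivFin.symm i) • (δ base ((s.equivFin.symm i : {u : X // u ≠ base}) : X)
        - δ base base)
      = (fun u : ↥s => g (u : {u : X // u ≠ base})) (s.equivFin.symm i) := by
    intro i
    rw [hdb, sub_zero, hδ]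
    show toF base z _ • (Finsupp.single _ (1:ℝ)) = _
    rw [hg]
    show _ = Finsupp.single _ _
    rw [Finsupp.smul_single, smul_eq_mul, mul_one]
  rw [funext key]
  have h2 := Equiv.sum_comp s.equivFin.symm (fun u : ↥s => g (u : {u : X // u ≠ base}))
  show toF base z = ∑ i : Fin s.card, (fun u : ↥s => g (u : {u : X // u ≠ base})) (s.equivFin.symm i)
  rw [h2, Finset.sum_coe_sort s g, hg]
  show toF base z = _
  conv_lhs => rw [← Finsupp.sum_single (toF base z)]
  rfl

lemma Rset_nonempty (z : FreeL X base) : (Rset base z).Nonempty := by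
  obtain ⟨n, c, x, y, h⟩ := rep_exists base z
  exact ⟨_, n, c, x, y, h, rfl⟩

noncomputable def pfun (z : FreeL X base) : ℝ := sInf (Rset base z)

lemma pfun_nonneg (z : FreeL X base) : 0 ≤ pfun base z :=
  le_csInf (Rset_nonempty base z) (Rset_nonneg base z)

lemma pfun_le {z : FreeL X base} {r : ℝ} (hr : r ∈ Rset base z) : pfun base z ≤ r :=
  csInf_le (Rset_bddBelow base z) hr

lemma mem_concat {z w : FreeL X base} {r s : ℝ} (hr : r ∈ Rset base z) (hs : s ∈ Rset base w) :
    r + s ∈ Rset base (z + w) := by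
  obtain ⟨n1, c1, x1, y1, hz, rfl⟩ := hr
  obtain ⟨n2, c2, x2, y2, hw, rfl⟩ := hs
  refine ⟨n1 + n2, Fin.append c1 c2, Fin.append x1 x2, Fin.append y1 y2, ?_, ?_⟩
  · rw [Fin.sum_univ_add]
    simp only [Fin.append_left, Fin.append_right]
    rw [hz, hw]
  · rw [Fin.sum_univ_add]
    simp only [Fin.append_left, Fin.append_right]

lemma pfun_zero : pfun base (0 : FreeL X base) = 0 := by
  have h0 : (0:ℝ) ∈ Rset base (0 : FreeL X base) := by
    refine ⟨0, Fin.elim0, Fin.elim0, Fin.elim0, ?_, ?_⟩ <;> simp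
  exact le_antisymm (pfun_le base h0) (pfun_nonneg base 0)

lemma pfun_add (z w : FreeL X base) : pfun base (z + w) ≤ pfun base z + pfun base w := by
  have H : ∀ r ∈ Rset base z, ∀ s ∈ Rset base w, pfun base (z + w) ≤ r + s :=
    fun r hr s hs => pfun_le base (mem_concat base hr hs)
  have H2 : ∀ r ∈ Rset base z, pfun base (z + w) - r ≤ pfun base w := by
    intro r hr
    refine le_csInf (Rset_nonempty base w) (fun s hs => ?_)
    linarith [H r hr s hs]
  have H3 : pfun base (z + w) - pfun base w ≤ pfun base z := by
    refine le_csInf (Rset_nonempty base z) (fun r hr => ?_)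
    linarith [H2 r hr]
  linarith

lemma Rset_neg_subset (z : FreeL X base) : Rset base z ⊆ Rset base (-z) := by
  rintro r ⟨n, c, x, y, hz, rfl⟩
  refine ⟨n, fun i => -(c i), x, y, ?_, by simp⟩
  rw [hz, ← Finset.sum_neg_distrib]
  exact Finset.sum_congr rfl fun i _ => by rw [neg_smul]

lemma pfun_neg (z : FreeL X base) : pfun base (-z) = pfun base z := by
  have h1 : Rset base z = Rset base (-z) := by
    refine le_antisymm (Rset_neg_subset base z) ?_
    have := Rset_neg_subset base (-z)
    rwa [neg_neg] at this
  unfold pfun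
  rw [h1]

lemma pfun_smul (a : ℝ) (z : FreeL X base) : pfun base (a • z) = |a| * pfun base z := by
  have key : ∀ (b : ℝ) (w : FreeL X base), pfun base (b • w) ≤ |b| * pfun base w := by
    intro b w
    have hsub : |b| • Rset base w ⊆ Rset base (b • w) := by
      rintro r ⟨s, ⟨n, c, x, y, hw, rfl⟩, rfl⟩
      refine ⟨n, fun i => b * c i, x, y, ?_, ?_⟩
      · rw [hw, Finset.smul_sum]
        exact Finset.sum_congr rfl fun i _ => by rw [smul_smul]
      · simp only [smul_eq_mul, Finset.mul_sum, abs_mul, mul_assoc]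
    calc pfun base (b • w) ≤ sInf (|b| • Rset base w) :=
          csInf_le_csInf (Rset_bddBelow base _)
            ((Rset_nonempty base w).smul_set) hsub
      _ = |b| * pfun base w := by
          rw [Real.sInf_smul_of_nonneg (abs_nonneg b)]; rfl
  rcases eq_or_ne a 0 with rfl | ha
  · simp [pfun_zero base]
  · refine le_antisymm (key a z) ?_
    have h2 := key a⁻¹ (a • z)
    rw [inv_smul_smul₀ ha, abs_inv] at h2
    have := mul_le_mul_of_nonneg_left h2 (abs_nonneg a)
    rw [← mul_assoc, mul_inv_cancel₀ (by simpa using ha), one_mul] at this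
    linarith

noncomputable def pSem : Seminorm ℝ (FreeL X base) where
  toFun := pfun base
  map_zero' := pfun_zero base
  add_le' := pfun_add base
  neg' := pfun_neg base
  smul' := fun a z => by
    show pfun base (a • z) = ‖a‖ * pfun base z
    rw [pfun_smul base a z, Real.norm_eq_abs]

lemma pSem_good : IsGoodSeminorm base (pSem base) := by
  intro x y
  have : dist x y ∈ Rset base (δ base x - δ base y) := by
    refine ⟨1, fun _ => 1, fun _ => x, fun _ => y, ?_, ?_⟩ <;>
      simp [Fin.sum_univ_one]
  exact pfun_le base this

lemma seminorm_sum_le {ι : Type*} (p : Seminorm ℝ (FreeL X base)) (s : Finset ι)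
    (f : ι → FreeL X base) : p (∑ i ∈ s, f i) ≤ ∑ i ∈ s, p (f i) := by
  classical
  induction s using Finset.induction_on with
  | empty => simp
  | insert _ _ hi ih =>
    rw [Finset.sum_insert hi, Finset.sum_insert hi]
    exact le_trans (map_add_le_add p _ _) (by linarith)

lemma good_le_cost {p : Seminorm ℝ (FreeL X base)} (hp : IsGoodSeminorm base p)
    {n : ℕ} {c : Fin n → ℝ} {x y : Fin n → X} {z : FreeL X base}
    (hz : z = ∑ i, c i • (δ base (x i) - δ base (y i))) :
    p z ≤ ∑ i, |c i| * dist (x i) (y i) := by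
  rw [hz]
  refine le_trans (seminorm_sum_le base p _ _) (Finset.sum_le_sum fun i _ => ?_)
  rw [map_smul_eq_mul, Real.norm_eq_abs]
  exact mul_le_mul_of_nonneg_left (hp (x i) (y i)) (abs_nonneg _)

lemma good_le_freeNorm {p : Seminorm ℝ (FreeL X base)} (hp : IsGoodSeminorm base p)
    (z : FreeL X base) : p z ≤ freeNorm base z := by
  obtain ⟨n, c, x, y, hz⟩ := rep_exists base z
  have hbdd : BddAbove (Set.range fun q : {q : Seminorm ℝ (FreeL X base) //
      IsGoodSeminorm base q} => q.1 z) := by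
    refine ⟨∑ i, |c i| * dist (x i) (y i), ?_⟩
    rintro r ⟨q, rfl⟩
    exact good_le_cost base q.2 hz
  exact le_ciSup hbdd ⟨p, hp⟩

end GraevAux2

namespace GraevAux3

open Finset FreeL GraevAux

variable {X : Type*} [MetricSpace X] (base : X)

lemma exists_dep {n : ℕ} (x y : Fin n → X) (c : Fin n → ℝ) (Fr : Finset (Fin n))
    (hFr : Fr.Nonempty)
    (hc : ∀ i ∈ Fr, ∀ m : ℤ, c i ≠ (m : ℝ))
    (hw : ∀ s : {u : X // u ≠ base}, ∃ m : ℤ,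
      toF base (∑ i ∈ Fr, c i • (δ base (x i) - δ base (y i))) s = (m : ℝ)) :
    ∃ k : Fin n → ℝ, (∀ i, i ∉ Fr → k i = 0) ∧ (∃ i, k i ≠ 0) ∧
      ∑ i, k i • (δ base (x i) - δ base (y i)) = 0 := by
  classical
  set mh : Fin n → (X →₀ ℝ) :=
    fun i => Finsupp.single (x i) (1:ℝ) - Finsupp.single (y i) 1 with hmh
  have happ : ∀ i v, mh i v = (if x i = v then (1:ℝ) else 0) - (if y i = v then 1 else 0) := by
    intro i v
    rw [hmh]
    simp [Finsupp.sub_apply, Finsupp.single_apply]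
  suffices hnli : ¬ LinearIndependent ℝ (fun i : ↥Fr => δ base (x ↑i) - δ base (y ↑i)) by
    obtain ⟨g, hg0, j, hgj⟩ := Fintype.not_linearIndependent_iff.mp hnli
    refine ⟨fun i => if h : i ∈ Fr then g ⟨i, h⟩ else 0, fun i hi => dif_neg hi,
      ⟨j, by show (if h : (j : Fin n) ∈ Fr then g ⟨↑j, h⟩ else 0) ≠ 0
             rw [dif_pos j.2]; exact hgj⟩, ?_⟩
    rw [← Finset.sum_subset (Finset.subset_univ Fr)
      (fun i _ hi => by
        show (if h : i ∈ Fr then g ⟨i, h⟩ else 0) • (δ base (x i) - δ base (y i)) = 0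
        rw [dif_neg hi, zero_smul])]
    rw [← Finset.sum_coe_sort Fr
      (fun i => (if h : i ∈ Fr then g ⟨i, h⟩ else 0) • (δ base (x i) - δ base (y i)))]
    rw [← hg0]
    refine Finset.sum_congr rfl fun i _ => ?_
    show (if h : (i : Fin n) ∈ Fr then g ⟨↑i, h⟩ else 0) • _ = _
    rw [dif_pos i.2]
  intro hLI
  set π : (X →₀ ℝ) →ₗ[ℝ] FreeL X base := Finsupp.linearCombination ℝ (δ base) with hπdef
  have hπ : ∀ i, π (mh i) = δ base (x i) - δ base (y i) := by
    intro i
    rw [hmh, hπdef]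
    simp only [map_sub, Finsupp.linearCombination_single, one_smul]
  have hLI2 : LinearIndependent ℝ (fun i : ↥Fr => mh ↑i) := by
    refine LinearIndependent.of_comp π ?_
    have hcomp : (⇑π ∘ fun i : ↥Fr => mh ↑i) = fun i : ↥Fr => δ base (x ↑i) - δ base (y ↑i) :=
      funext fun i => hπ ↑i
    rw [hcomp]
    exact hLI
  have hne : ∀ i ∈ Fr, x i ≠ y i := by
    intro i hi hxy
    have h0 := hLI2.ne_zero ⟨i, hi⟩
    apply h0
    show mh i = 0
    rw [hmh]
    simp [hxy]
  set V2 : Finset X := Fr.image x ∪ Fr.image y with hV2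
  have hxmem : ∀ i ∈ Fr, x i ∈ V2 := fun i hi =>
    Finset.mem_union_left _ (Finset.mem_image_of_mem x hi)
  have hymem : ∀ i ∈ Fr, y i ∈ V2 := fun i hi =>
    Finset.mem_union_right _ (Finset.mem_image_of_mem y hi)
  have hsupp : ∀ i ∈ Fr, (mh i).support = {x i, y i} := by
    intro i hi
    ext v
    rw [Finsupp.mem_support_iff, happ, Finset.mem_insert, Finset.mem_singleton]
    constructor
    · intro hne0
      by_contra hcon
      push_neg at hcon
      rw [if_neg (fun h => hcon.1 h.symm), if_neg (fun h => hcon.2 h.symm), sub_zero] at hne0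
      exact hne0 rfl
    · rintro (rfl | rfl)
      · rw [if_pos rfl, if_neg (fun h => hne i hi h.symm)]; norm_num
      · rw [if_neg (hne i hi), if_pos rfl]; norm_num
  have hsuppsub : ∀ i ∈ Fr, (mh i).support ⊆ V2 := by
    intro i hi
    rw [hsupp i hi]
    intro v hv
    rcases Finset.mem_insert.mp hv with rfl | hv
    · exact hxmem i hi
    · rw [Finset.mem_singleton] at hv
      subst hv
      exact hymem i hi
  -- degrees
  have hdeg1 : ∀ v ∈ V2, (Fr.filter fun i => mh i v ≠ 0).Nonempty := by
    intro v hv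
    rcases Finset.mem_union.mp hv with hv' | hv'
    · obtain ⟨i, hi, rfl⟩ := Finset.mem_image.mp hv'
      refine ⟨i, Finset.mem_filter.mpr ⟨hi, ?_⟩⟩
      rw [happ, if_pos rfl, if_neg (fun h => hne i hi h.symm)]
      norm_num
    · obtain ⟨i, hi, rfl⟩ := Finset.mem_image.mp hv'
      refine ⟨i, Finset.mem_filter.mpr ⟨hi, ?_⟩⟩
      rw [happ, if_pos rfl, if_neg (hne i hi)]
      norm_num
  have hdeg2 : ∀ v ∈ V2, v ≠ base → 2 ≤ (Fr.filter fun i => mh i v ≠ 0).card := by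
    intro v hv hvb
    by_contra hlt
    push_neg at hlt
    have h1 : (Fr.filter fun i => mh i v ≠ 0).card = 1 := by
      have := (hdeg1 v hv).card_pos
      omega
    obtain ⟨i0, hi0⟩ := Finset.card_eq_one.mp h1
    have hi0mem : i0 ∈ Fr ∧ mh i0 v ≠ 0 := by
      have : i0 ∈ Fr.filter fun i => mh i v ≠ 0 := hi0 ▸ Finset.mem_singleton_self i0
      exact Finset.mem_filter.mp this
    obtain ⟨m, hm⟩ := hw ⟨v, hvb⟩
    have hcoord : toF base (∑ i ∈ Fr, c i • (δ base (x i) - δ base (y i))) ⟨v, hvb⟩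
        = ∑ i ∈ Fr, c i * mh i v := by
      rw [toF_sum, Finsupp.finset_sum_apply]
      refine Finset.sum_congr rfl fun i _ => ?_
      rw [toF_smul base (c i) (δ base (x i) - δ base (y i))]
      rw [Finsupp.smul_apply, smul_eq_mul, coordDelta]
      simp [hmh, Finsupp.sub_apply]
    have hsum1 : ∑ i ∈ Fr, c i * mh i v = c i0 * mh i0 v := by
      rw [← Finset.sum_filter_of_ne (p := fun i => mh i v ≠ 0)
        (fun i hi hne0 => fun h0 => hne0 (by rw [h0, mul_zero])), hi0,
        Finset.sum_singleton]
    rw [hcoord, hsum1] at hm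
    have hval : mh i0 v = 1 ∨ mh i0 v = -1 := by
      rw [happ]
      by_cases h1' : x i0 = v
      · have h2' : ¬ y i0 = v := fun h => hne i0 hi0mem.1 (h1'.trans h.symm)
        rw [if_pos h1', if_neg h2']; left; ring
      · by_cases h2' : y i0 = v
        · rw [if_neg h1', if_pos h2']; right; ring
        · exfalso
          apply hi0mem.2
          rw [happ, if_neg h1', if_neg h2', sub_zero]
    rcases hval with hval | hval
    · rw [hval, mul_one] at hm
      exact hc i0 hi0mem.1 m hm
    · rw [hval] at hm
      refine hc i0 hi0mem.1 (-m) ?_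
      push_cast
      linarith
  -- double counting
  have hcount : ∑ v ∈ V2, (Fr.filter fun i => mh i v ≠ 0).card = 2 * Fr.card := by
    calc ∑ v ∈ V2, (Fr.filter fun i => mh i v ≠ 0).card
        = ∑ v ∈ V2, ∑ i ∈ Fr, if mh i v ≠ 0 then 1 else 0 :=
          Finset.sum_congr rfl fun v _ => Finset.card_filter _ _
      _ = ∑ i ∈ Fr, ∑ v ∈ V2, if mh i v ≠ 0 then 1 else 0 := Finset.sum_comm
      _ = ∑ i ∈ Fr, (V2.filter fun v => mh i v ≠ 0).card :=
          Finset.sum_congr rfl fun i _ => (Finset.card_filter _ _).symm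
      _ = ∑ i ∈ Fr, 2 := by
          refine Finset.sum_congr rfl fun i hi => ?_
          have hfe : V2.filter (fun v => mh i v ≠ 0) = (mh i).support := by
            ext v
            rw [Finset.mem_filter, Finsupp.mem_support_iff]
            exact ⟨fun h => h.2, fun h => ⟨hsuppsub i hi (Finsupp.mem_support_iff.mpr h), h⟩⟩
          rw [hfe, hsupp i hi, Finset.card_pair (hne i hi)]
      _ = 2 * Fr.card := by rw [Finset.sum_const, smul_eq_mul, mul_comm]
  have hcard_ge : V2.card ≤ Fr.card := by
    by_cases hb : base ∈ V2
    · have h1 : ∑ v ∈ V2.erase base, (Fr.filter fun i => mh i v ≠ 0).card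
          + (Fr.filter fun i => mh i base ≠ 0).card
          = ∑ v ∈ V2, (Fr.filter fun i => mh i v ≠ 0).card :=
        Finset.sum_erase_add V2 _ hb
      have h2 : ∀ v ∈ V2.erase base, 2 ≤ (Fr.filter fun i => mh i v ≠ 0).card :=
        fun v hv => hdeg2 v (Finset.mem_of_mem_erase hv) (Finset.ne_of_mem_erase hv)
      have h3 : (V2.erase base).card * 2 ≤
          ∑ v ∈ V2.erase base, (Fr.filter fun i => mh i v ≠ 0).card := by
        calc (V2.erase base).card * 2 = ∑ _v ∈ V2.erase base, 2 := by
              rw [Finset.sum_const, smul_eq_mul]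
          _ ≤ _ := Finset.sum_le_sum h2
      have h4 : 1 ≤ (Fr.filter fun i => mh i base ≠ 0).card := (hdeg1 base hb).card_pos
      have h5 : (V2.erase base).card = V2.card - 1 := Finset.card_erase_of_mem hb
      have h6 : 1 ≤ V2.card := Finset.card_pos.mpr ⟨base, hb⟩
      omega
    · have h2 : ∀ v ∈ V2, 2 ≤ (Fr.filter fun i => mh i v ≠ 0).card :=
        fun v hv => hdeg2 v hv (fun h => hb (h ▸ hv))
      have h3 : V2.card * 2 ≤ ∑ v ∈ V2, (Fr.filter fun i => mh i v ≠ 0).card := by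
        calc V2.card * 2 = ∑ _v ∈ V2, 2 := by rw [Finset.sum_const, smul_eq_mul]
          _ ≤ _ := Finset.sum_le_sum h2
      omega
  -- dimension bound
  have hVne : V2.Nonempty := by
    obtain ⟨i, hi⟩ := hFr
    exact ⟨x i, hxmem i hi⟩
  set ρ : (X →₀ ℝ) →ₗ[ℝ] (↥V2 → ℝ) := LinearMap.pi (fun v => Finsupp.lapply (v : X)) with hρ
  have hρapp : ∀ (w : X →₀ ℝ) (v : ↥V2), ρ w v = w ↑v := by
    intro w v
    rw [hρ, LinearMap.pi_apply, Finsupp.lapply_apply]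
  have hdisj : Disjoint (Submodule.span ℝ (Set.range fun i : ↥Fr => mh ↑i))
      (LinearMap.ker ρ) := by
    rw [Submodule.disjoint_def]
    intro w hw hker
    have hsp : Submodule.span ℝ (Set.range fun i : ↥Fr => mh ↑i) ≤
        Finsupp.supported ℝ ℝ (↑V2 : Set X) := by
      rw [Submodule.span_le]
      rintro _ ⟨i, rfl⟩
      rw [SetLike.mem_coe, Finsupp.mem_supported]
      exact_mod_cast hsuppsub ↑i i.2
    have hsupported := hsp hw
    rw [LinearMap.mem_ker] at hker
    ext v
    show w v = 0
    by_cases hv : v ∈ V2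
    · have h2 : ρ w ⟨v, hv⟩ = 0 := by rw [hker]; rfl
      rwa [hρapp] at h2
    · exact (Finsupp.mem_supported' ℝ w).mp hsupported v (by simpa using hv)
  have hLI3 : LinearIndependent ℝ (⇑ρ ∘ fun i : ↥Fr => mh ↑i) := hLI2.map hdisj
  set S : (↥V2 → ℝ) →ₗ[ℝ] ℝ := ∑ v : ↥V2, LinearMap.proj v with hS
  have hSapp : ∀ w : ↥V2 → ℝ, S w = ∑ v : ↥V2, w v := by
    intro w
    rw [hS, LinearMap.sum_apply]
    exact Finset.sum_congr rfl fun v _ => rfl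
  have hSN : ∀ i : ↥Fr, (⇑ρ ∘ fun i : ↥Fr => mh ↑i) i ∈ LinearMap.ker S := by
    intro i
    rw [LinearMap.mem_ker]
    show S (ρ (mh ↑i)) = 0
    rw [hSapp]
    have hxyne := hne ↑i i.2
    calc ∑ v : ↥V2, ρ (mh ↑i) v = ∑ v : ↥V2, mh ↑i ↑v :=
          Finset.sum_congr rfl fun v _ => hρapp _ v
      _ = ∑ v ∈ V2, mh ↑i v := Finset.sum_coe_sort V2 (fun v => mh ↑i v)
      _ = ∑ v ∈ (mh ↑i).support, mh ↑i v :=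
          (Finset.sum_subset (hsuppsub ↑i i.2)
            (fun v _ hv => Finsupp.notMem_support_iff.mp hv)).symm
      _ = 0 := by
          rw [hsupp ↑i i.2, Finset.sum_pair hxyne, happ, happ,
            if_pos rfl, if_pos rfl, if_neg (fun h => hxyne h.symm), if_neg hxyne]
          ring
  have hLI4 : LinearIndependent ℝ (fun i : ↥Fr =>
      (⟨(⇑ρ ∘ fun i : ↥Fr => mh ↑i) i, hSN i⟩ : LinearMap.ker S)) := by
    refine LinearIndependent.of_comp (LinearMap.ker S).subtype ?_
    exact hLI3
  have hcard2 : Fintype.card ↥Fr ≤ Module.finrank ℝ (LinearMap.ker S) :=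
    hLI4.fintype_card_le_finrank
  have hS0 : S ≠ 0 := by
    intro h0
    have h1 := hSapp (fun _ => (1:ℝ))
    rw [h0] at h1
    simp only [LinearMap.zero_apply, Finset.sum_const, nsmul_eq_mul, mul_one] at h1
    rw [Finset.card_univ, Fintype.card_coe] at h1
    have h2 := Finset.card_pos.mpr hVne
    exact absurd (Nat.cast_eq_zero.mp h1.symm) (by omega)
  have hker2 : Module.finrank ℝ (LinearMap.ker S) + 1 = Module.finrank ℝ (↥V2 → ℝ) :=
    Module.Dual.finrank_ker_add_one_of_ne_zero hS0
  rw [Module.finrank_fintype_fun_eq_card, Fintype.card_coe] at hker2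
  rw [Fintype.card_coe] at hcard2
  omega

end GraevAux3

namespace GraevAux4

open Finset FreeL GraevAux GraevAux2 GraevAux3
open scoped Classical

variable {X : Type*} [MetricSpace X] (base : X)

lemma int_coords {z : FreeL X base}
    (hz : z ∈ AddSubgroup.closure (Set.range (δ base))) :
    ∀ s : {u : X // u ≠ base}, ∃ m : ℤ, toF base z s = (m : ℝ) := by
  classical
  refine AddSubgroup.closure_induction (fun g hg s => ?_) (fun s => ⟨0, ?_⟩)
    (fun a b _ _ ha hb s => ?_) (fun a _ ha s => ?_) hz
  · obtain ⟨t, rfl⟩ := hg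
    rw [coordEq, Finsupp.single_apply]
    refine ⟨if t = ↑s then 1 else 0, ?_⟩
    split_ifs <;> simp
  · rw [toF_zero]
    simp
  · obtain ⟨m1, h1⟩ := ha s
    obtain ⟨m2, h2⟩ := hb s
    exact ⟨m1 + m2, by rw [toF_add, Finsupp.add_apply, h1, h2]; push_cast; ring⟩
  · obtain ⟨m1, h1⟩ := ha s
    exact ⟨-m1, by rw [toF_neg, Finsupp.neg_apply, h1]; push_cast; ring⟩

lemma mem_gen (x y : X) :
    δ base x - δ base y ∈ AddSubgroup.closure (Set.range (δ base)) :=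
  sub_mem (AddSubgroup.subset_closure ⟨x, rfl⟩) (AddSubgroup.subset_closure ⟨y, rfl⟩)

lemma int_sum {ι : Type*} (s : Finset ι) (f : ι → ℝ) (h : ∀ i ∈ s, ∃ m : ℤ, f i = (m:ℝ)) :
    ∃ m : ℤ, ∑ i ∈ s, f i = (m:ℝ) := by
  classical
  induction s using Finset.induction_on with
  | empty => exact ⟨0, by simp⟩
  | @insert a s ha ih =>
    obtain ⟨m1, h1⟩ := h a (Finset.mem_insert_self a s)
    obtain ⟨m2, h2⟩ := ih (fun i hi => h i (Finset.mem_insert_of_mem hi))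
    exact ⟨m1 + m2, by rw [Finset.sum_insert ha, h1, h2]; push_cast; ring⟩

section Q

variable (q : FreeL X base → ℝ)
variable (hq0 : q 0 = 0)
variable (hq_add : ∀ z w : FreeL X base, z ∈ AddSubgroup.closure (Set.range (δ base)) →
  w ∈ AddSubgroup.closure (Set.range (δ base)) → q (z + w) ≤ q z + q w)
variable (hq_neg : ∀ z : FreeL X base, z ∈ AddSubgroup.closure (Set.range (δ base)) →
  q (-z) = q z)
variable (hq_gen : ∀ x y : X, q (δ base x - δ base y) ≤ dist x y)

include hq0 hq_add in
lemma q_nsmul : ∀ (k : ℕ) (z : FreeL X base),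
    z ∈ AddSubgroup.closure (Set.range (δ base)) → q (k • z) ≤ (k : ℝ) * q z := by
  intro k
  induction k with
  | zero => intro z _; simp [hq0]
  | succ k ih =>
    intro z hz
    rw [succ_nsmul]
    calc q (k • z + z) ≤ q (k • z) + q z :=
          hq_add _ _ (nsmul_mem hz k) hz
      _ ≤ (k : ℝ) * q z + q z := by linarith [ih z hz]
      _ = ((k + 1 : ℕ) : ℝ) * q z := by push_cast; ring

include hq0 hq_add hq_neg in
lemma q_zsmul : ∀ (m : ℤ) (z : FreeL X base),
    z ∈ AddSubgroup.closure (Set.range (δ base)) →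
    q (m • z) ≤ (m.natAbs : ℝ) * q z := by
  intro m z hz
  rcases Int.natAbs_eq m with h | h
  · rw [h, natCast_zsmul]
    exact q_nsmul base q hq0 hq_add m.natAbs z hz
  · have hmz : m • z = -(m.natAbs • z) := by
      conv_lhs => rw [h]
      rw [neg_smul, natCast_zsmul]
    rw [hmz, hq_neg _ (nsmul_mem hz _)]
    exact q_nsmul base q hq0 hq_add m.natAbs z hz

include hq0 hq_add hq_neg hq_gen in
lemma q_intrep {n : ℕ} (m : Fin n → ℤ) (x y : Fin n → X) :
    q (∑ i, ((m i : ℝ)) • (δ base (x i) - δ base (y i))) ≤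
      ∑ i, |(m i : ℝ)| * dist (x i) (y i) := by
  classical
  have main : ∀ s : Finset (Fin n),
      q (∑ i ∈ s, ((m i : ℝ)) • (δ base (x i) - δ base (y i))) ≤
        ∑ i ∈ s, |(m i : ℝ)| * dist (x i) (y i) := by
    intro s
    induction s using Finset.induction_on with
    | empty => simp [hq0]
    | @insert a s ha ih =>
      rw [Finset.sum_insert ha, Finset.sum_insert ha]
      have hterm_mem : ((m a : ℝ)) • (δ base (x a) - δ base (y a)) ∈
          AddSubgroup.closure (Set.range (δ base)) := by
        rw [Int.cast_smul_eq_zsmul]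
        exact zsmul_mem (mem_gen base (x a) (y a)) (m a)
      have hsum_mem : (∑ i ∈ s, ((m i : ℝ)) • (δ base (x i) - δ base (y i))) ∈
          AddSubgroup.closure (Set.range (δ base)) := by
        refine sum_mem fun i _ => ?_
        rw [Int.cast_smul_eq_zsmul]
        exact zsmul_mem (mem_gen base (x i) (y i)) (m i)
      have hterm : q (((m a : ℝ)) • (δ base (x a) - δ base (y a))) ≤
          |(m a : ℝ)| * dist (x a) (y a) := by
        rw [Int.cast_smul_eq_zsmul]
        calc q ((m a) • (δ base (x a) - δ base (y a)))
            ≤ ((m a).natAbs : ℝ) * q (δ base (x a) - δ base (y a)) :=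
              q_zsmul base q hq0 hq_add hq_neg (m a) _ (mem_gen base (x a) (y a))
          _ ≤ ((m a).natAbs : ℝ) * dist (x a) (y a) :=
              mul_le_mul_of_nonneg_left (hq_gen (x a) (y a)) (by positivity)
          _ = |(m a : ℝ)| * dist (x a) (y a) := by
              rw [Nat.cast_natAbs, Int.cast_abs]
      calc q (((m a : ℝ)) • (δ base (x a) - δ base (y a)) + ∑ i ∈ s, _)
          ≤ q (((m a : ℝ)) • (δ base (x a) - δ base (y a))) +
            q (∑ i ∈ s, ((m i : ℝ)) • (δ base (x i) - δ base (y i))) :=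
            hq_add _ _ hterm_mem hsum_mem
        _ ≤ |(m a : ℝ)| * dist (x a) (y a) + ∑ i ∈ s, |(m i : ℝ)| * dist (x i) (y i) := by
            linarith [ih]
  exact main Finset.univ

include hq0 hq_add hq_neg hq_gen in
lemma key : ∀ (N : ℕ) {n : ℕ} (c : Fin n → ℝ) (x y : Fin n → X) (z : FreeL X base),
    z ∈ AddSubgroup.closure (Set.range (δ base)) →
    (Finset.univ.filter fun i => ∀ m : ℤ, c i ≠ (m:ℝ)).card = N →
    z = ∑ i, c i • (δ base (x i) - δ base (y i)) →
    q z ≤ ∑ i, |c i| * dist (x i) (y i) := by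
  classical
  intro N
  induction N using Nat.strong_induction_on with
  | _ N IH =>
  intro n c x y z hz hcard hrep
  by_cases hFr : (Finset.univ.filter fun i => ∀ m : ℤ, c i ≠ (m:ℝ)).Nonempty
  · -- there is a fractional coefficient
    set Fr := Finset.univ.filter fun i => ∀ m : ℤ, c i ≠ (m:ℝ) with hFrdef
    have hc : ∀ i ∈ Fr, ∀ m : ℤ, c i ≠ (m:ℝ) := fun i hi => (Finset.mem_filter.mp hi).2
    have hw : ∀ s : {u : X // u ≠ base}, ∃ m : ℤ,
        toF base (∑ i ∈ Fr, c i • (δ base (x i) - δ base (y i))) s = (m : ℝ) := by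
      intro s
      have hsplit : ∑ i ∈ Fr, c i • (δ base (x i) - δ base (y i))
          = z - ∑ i ∈ Finset.univ.filter (fun i => ¬ ∀ m : ℤ, c i ≠ (m:ℝ)),
              c i • (δ base (x i) - δ base (y i)) := by
        rw [eq_sub_iff_add_eq, hFrdef,
          Finset.sum_filter_add_sum_filter_not Finset.univ _ _, hrep]
      obtain ⟨mz, hmz⟩ := int_coords base hz s
      have hB : ∃ mB : ℤ,
          toF base (∑ i ∈ Finset.univ.filter (fun i => ¬ ∀ m : ℤ, c i ≠ (m:ℝ)),
            c i • (δ base (x i) - δ base (y i))) s = (mB : ℝ) := by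
        rw [toF_sum, Finsupp.finset_sum_apply]
        refine int_sum _ _ fun i hi => ?_
        have hci : ∃ m : ℤ, c i = (m:ℝ) := by
          have h' := (Finset.mem_filter.mp hi).2
          push_neg at h'
          exact h'
        obtain ⟨mi, hmi⟩ := hci
        rw [toF_smul base (c i) _, Finsupp.smul_apply, smul_eq_mul, coordDelta,
          Finsupp.single_apply, Finsupp.single_apply, hmi]
        refine ⟨mi * ((if x i = ↑s then 1 else 0) - (if y i = ↑s then 1 else 0)), ?_⟩
        split_ifs <;> push_cast <;> ring
      obtain ⟨mB, hmB⟩ := hB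
      refine ⟨mz - mB, ?_⟩
      rw [hsplit, toF_sub, Finsupp.sub_apply, hmz, hmB]
      push_cast
      ring
    obtain ⟨k0, hk0z, hk0ne, hk0sum⟩ := exists_dep base x y c Fr hFr hc hw
    set sgn : Fin n → ℝ := fun i => if 0 ≤ c i then 1 else -1 with hsgndef
    have hadj : ∃ k : Fin n → ℝ, (∀ i, i ∉ Fr → k i = 0) ∧ (∃ i, k i ≠ 0) ∧
        (∑ i, k i • (δ base (x i) - δ base (y i))) = 0 ∧
        (∑ i, sgn i * k i * dist (x i) (y i)) ≤ 0 := by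
      rcases le_or_gt (∑ i, sgn i * k0 i * dist (x i) (y i)) 0 with h | h
      · exact ⟨k0, hk0z, hk0ne, hk0sum, h⟩
      · obtain ⟨j, hj⟩ := hk0ne
        refine ⟨fun i => -(k0 i), fun i hi => by show -(k0 i) = 0; rw [hk0z i hi, neg_zero],
          ⟨j, by simpa using hj⟩, ?_, ?_⟩
        · have : ∑ i, (-(k0 i)) • (δ base (x i) - δ base (y i))
              = -∑ i, k0 i • (δ base (x i) - δ base (y i)) := by
            rw [← Finset.sum_neg_distrib]
            exact Finset.sum_congr rfl fun i _ => by rw [neg_smul]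
          rw [this, hk0sum, neg_zero]
        · have : ∑ i, sgn i * (-(k0 i)) * dist (x i) (y i)
              = -∑ i, sgn i * k0 i * dist (x i) (y i) := by
            rw [← Finset.sum_neg_distrib]
            exact Finset.sum_congr rfl fun i _ => by ring
          rw [this]
          linarith
    obtain ⟨k, hkz, hkne, hksum, hS⟩ := hadj
    set s0 := Finset.univ.filter (fun i => k i ≠ 0) with hs0def
    have hs0ne : s0.Nonempty := by
      obtain ⟨i, hi⟩ := hkne
      exact ⟨i, Finset.mem_filter.mpr ⟨Finset.mem_univ i, hi⟩⟩
    have hs0Fr : ∀ i ∈ s0, i ∈ Fr := by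
      intro i hi
      by_contra h
      exact (Finset.mem_filter.mp hi).2 (hkz i h)
    set τ : Fin n → ℝ := fun i =>
      if 0 < k i then ((⌈c i⌉ : ℝ) - c i) / k i else ((⌊c i⌋ : ℝ) - c i) / k i with hτdef
    have hτapp : ∀ i, τ i =
      if 0 < k i then ((⌈c i⌉ : ℝ) - c i) / k i else ((⌊c i⌋ : ℝ) - c i) / k i := fun i => rfl
    have hτpos : ∀ i ∈ s0, 0 < τ i := by
      intro i hi
      have hki : k i ≠ 0 := (Finset.mem_filter.mp hi).2
      have hci : ∀ m : ℤ, c i ≠ (m:ℝ) := hc i (hs0Fr i hi)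
      rw [hτapp i]
      by_cases hk : 0 < k i
      · rw [if_pos hk]
        refine div_pos ?_ hk
        have h1 : c i < (⌈c i⌉ : ℝ) := lt_of_le_of_ne (Int.le_ceil _) (hci _)
        linarith
      · have hk' : k i < 0 := lt_of_le_of_ne (not_lt.mp hk) hki
        rw [if_neg hk]
        refine div_pos_iff.mpr (Or.inr ⟨?_, hk'⟩)
        have h1 : (⌊c i⌋ : ℝ) < c i :=
          lt_of_le_of_ne (Int.floor_le _) (fun h => hci _ h.symm)
        linarith
    obtain ⟨i0, hi0mem, hi0min⟩ := s0.exists_min_image τ hs0ne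
    set t := τ i0 with htdef
    have ht : 0 < t := hτpos i0 hi0mem
    set c' : Fin n → ℝ := fun i => c i + t * k i with hc'def
    have hc'app : ∀ i, c' i = c i + t * k i := fun i => rfl
    have hsgnapp : ∀ i, sgn i = if 0 ≤ c i then (1:ℝ) else -1 := fun i => rfl
    have hsgnc : ∀ i, |c i| = sgn i * c i := by
      intro i
      rw [hsgnapp i]
      by_cases h : 0 ≤ c i
      · rw [if_pos h, one_mul, abs_of_nonneg h]
      · rw [if_neg h, neg_one_mul, abs_of_neg (not_le.mp h)]
    have hsgnc' : ∀ i, |c' i| = sgn i * c' i := by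
      intro i
      by_cases hki : k i = 0
      · have : c' i = c i := by rw [hc'app i, hki, mul_zero, add_zero]
        rw [this]
        exact hsgnc i
      · have hi : i ∈ s0 := Finset.mem_filter.mpr ⟨Finset.mem_univ i, hki⟩
        have htle : t ≤ τ i := hi0min i hi
        have hci : ∀ m : ℤ, c i ≠ (m:ℝ) := hc i (hs0Fr i hi)
        by_cases hk : 0 < k i
        · have hub : c' i ≤ (⌈c i⌉ : ℝ) := by
            have h1 : t * k i ≤ τ i * k i := mul_le_mul_of_nonneg_right htle hk.le
            have h2 : τ i * k i = (⌈c i⌉ : ℝ) - c i := by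
              rw [hτapp i, if_pos hk]
              exact div_mul_cancel₀ _ hki
            rw [hc'app i]
            linarith
          have hlb : c i ≤ c' i := by
            rw [hc'app i]
            nlinarith [mul_nonneg ht.le hk.le]
          rw [hsgnapp i]
          by_cases h : 0 ≤ c i
          · rw [if_pos h, one_mul, abs_of_nonneg (le_trans h hlb)]
          · have hcneg : c i < 0 := not_le.mp h
            have hceil : (⌈c i⌉ : ℝ) ≤ 0 := by
              have h0 : ⌈c i⌉ ≤ (0:ℤ) := Int.ceil_le.mpr (by exact_mod_cast hcneg.le)
              exact_mod_cast h0
            rw [if_neg h, neg_one_mul, abs_of_nonpos (le_trans hub hceil)]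
        · have hk' : k i < 0 := lt_of_le_of_ne (not_lt.mp hk) hki
          have hlb : (⌊c i⌋ : ℝ) ≤ c' i := by
            have h1 : τ i * k i ≤ t * k i := mul_le_mul_of_nonpos_right htle hk'.le
            have h2 : τ i * k i = (⌊c i⌋ : ℝ) - c i := by
              rw [hτapp i, if_neg hk]
              exact div_mul_cancel₀ _ hki
            rw [hc'app i]
            linarith
          have hub : c' i ≤ c i := by
            rw [hc'app i]
            nlinarith [mul_nonpos_of_nonneg_of_nonpos ht.le hk'.le]
          rw [hsgnapp i]
          by_cases h : 0 ≤ c i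
          · have hfl : (0:ℝ) ≤ (⌊c i⌋ : ℝ) := by
              have : (0:ℤ) ≤ ⌊c i⌋ := Int.floor_nonneg.mpr h
              exact_mod_cast this
            rw [if_pos h, one_mul, abs_of_nonneg (le_trans hfl hlb)]
          · have hcneg : c i < 0 := not_le.mp h
            rw [if_neg h, neg_one_mul, abs_of_nonpos (le_trans hub hcneg.le)]
    have hrep' : z = ∑ i, c' i • (δ base (x i) - δ base (y i)) := by
      have hexp : ∑ i, c' i • (δ base (x i) - δ base (y i))
          = ∑ i, c i • (δ base (x i) - δ base (y i)) +
            t • ∑ i, k i • (δ base (x i) - δ base (y i)) := by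
        rw [Finset.smul_sum, ← Finset.sum_add_distrib]
        refine Finset.sum_congr rfl fun i _ => ?_
        rw [hc'app i, add_smul, smul_smul]
      rw [hexp, hksum, smul_zero, add_zero, ← hrep]
    have hcost : ∑ i, |c' i| * dist (x i) (y i) ≤ ∑ i, |c i| * dist (x i) (y i) := by
      have h1 : ∑ i, |c' i| * dist (x i) (y i)
          = ∑ i, sgn i * c i * dist (x i) (y i) +
            t * ∑ i, sgn i * k i * dist (x i) (y i) := by
        rw [Finset.mul_sum, ← Finset.sum_add_distrib]
        refine Finset.sum_congr rfl fun i _ => ?_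
        rw [hsgnc' i, hc'app i]
        ring
      have h2 : ∑ i, |c i| * dist (x i) (y i)
          = ∑ i, sgn i * c i * dist (x i) (y i) :=
        Finset.sum_congr rfl fun i _ => by rw [hsgnc i]
      have h3 : t * ∑ i, sgn i * k i * dist (x i) (y i) ≤ 0 :=
        mul_nonpos_of_nonneg_of_nonpos ht.le hS
      rw [h1, h2]
      linarith
    have hi0Fr : i0 ∈ Fr := hs0Fr i0 hi0mem
    have hc'i0 : ∃ m : ℤ, c' i0 = (m:ℝ) := by
      have hki0 : k i0 ≠ 0 := (Finset.mem_filter.mp hi0mem).2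
      rw [hc'app i0, htdef, hτapp i0]
      by_cases hk : 0 < k i0
      · refine ⟨⌈c i0⌉, ?_⟩
        rw [if_pos hk, div_mul_cancel₀ _ hki0]
        ring
      · refine ⟨⌊c i0⌋, ?_⟩
        rw [if_neg hk, div_mul_cancel₀ _ hki0]
        ring
    have hfr' : (Finset.univ.filter fun i => ∀ m : ℤ, c' i ≠ (m:ℝ)) ⊆ Fr.erase i0 := by
      intro i hi
      have hfrac' : ∀ m : ℤ, c' i ≠ (m:ℝ) := (Finset.mem_filter.mp hi).2
      have hiFr : i ∈ Fr := by
        by_contra h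
        have hki : k i = 0 := hkz i h
        have : ∃ m : ℤ, c i = (m:ℝ) := by
          rw [hFrdef] at h
          simp only [Finset.mem_filter, Finset.mem_univ, true_and] at h
          push_neg at h
          exact h
        obtain ⟨m, hm⟩ := this
        refine hfrac' m ?_
        rw [hc'app i, hki, mul_zero, add_zero, hm]
      have hne_i0 : i ≠ i0 := by
        intro h
        subst h
        obtain ⟨m, hm⟩ := hc'i0
        exact hfrac' m hm
      exact Finset.mem_erase.mpr ⟨hne_i0, hiFr⟩
    have hcard' : (Finset.univ.filter fun i => ∀ m : ℤ, c' i ≠ (m:ℝ)).card < N := by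
      have h1 := Finset.card_le_card hfr'
      have h2 : (Fr.erase i0).card = Fr.card - 1 := Finset.card_erase_of_mem hi0Fr
      have h3 : 0 < Fr.card := Finset.card_pos.mpr hFr
      omega
    exact (IH _ hcard' c' x y z hz rfl hrep').trans hcost
  · -- all coefficients are integral
    have hall : ∀ i, ∃ m : ℤ, c i = (m:ℝ) := by
      intro i
      by_contra hcon
      push_neg at hcon
      exact hFr ⟨i, Finset.mem_filter.mpr ⟨Finset.mem_univ i, hcon⟩⟩
    choose m hm using hall
    have hrep' : z = ∑ i, ((m i : ℝ)) • (δ base (x i) - δ base (y i)) := by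
      rw [hrep]
      exact Finset.sum_congr rfl fun i _ => by rw [hm i]
    have hcost : ∑ i, |c i| * dist (x i) (y i)
        = ∑ i, |(m i : ℝ)| * dist (x i) (y i) :=
      Finset.sum_congr rfl fun i _ => by rw [hm i]
    rw [hrep', hcost]
    exact q_intrep base q hq0 hq_add hq_neg hq_gen m x y

end Q

end GraevAux4

namespace GraevAux2

variable {X : Type*} [MetricSpace X] (base : X)

lemma pSem_apply (z : FreeL X base) : pSem base z = pfun base z := rfl

end GraevAux2


/-- Universal property of the Graev metric: if `(G, ς)` is an abelian group
with a bi-invariant metric and `f : X → G` is `1`-Lipschitz with `f ∗ = 0`,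
then any group homomorphism `A(X) → G` extending `f` is `1`-Lipschitz with
respect to the Graev metric `d̄(a,b) = ‖a - b‖` on `A(X)`. -/
theorem graev_universal_property
    {X : Type*} [MetricSpace X] (base : X)
    (A : AddSubgroup (FreeL X base))
    (hA : A = AddSubgroup.closure (Set.range (FreeL.δ base)))
    (G : Type*) [AddCommGroup G] [MetricSpace G]
    (hinv : ∀ a b c : G, dist (a + c) (b + c) = dist a b)
    (f : X → G) (hf : ∀ x y : X, dist (f x) (f y) ≤ dist x y)
    (hf0 : f base = 0)
    (F : A →+ G)
    (hF : ∀ x : X,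
      F ⟨FreeL.δ base x, hA ▸ AddSubgroup.subset_closure ⟨x, rfl⟩⟩ = f x) :
    ∀ a b : A,
      dist (F a) (F b) ≤
        FreeL.freeNorm base ((a : FreeL X base) - (b : FreeL X base)) := by
  classical
  subst hA
  intro a b
  set q : FreeL X base → ℝ := fun z =>
    if h : z ∈ AddSubgroup.closure (Set.range (FreeL.δ base)) then dist (F ⟨z, h⟩) 0 else 0
    with hqdef
  have hqmem : ∀ (z : FreeL X base)
      (h : z ∈ AddSubgroup.closure (Set.range (FreeL.δ base))),
      q z = dist (F ⟨z, h⟩) 0 := fun z h => dif_pos h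
  have hq0 : q 0 = 0 := by
    rw [hqmem 0 (zero_mem _)]
    have harg : (⟨(0 : FreeL X base), zero_mem _⟩ :
        AddSubgroup.closure (Set.range (FreeL.δ base))) = 0 := rfl
    rw [harg, map_zero, dist_self]
  have hd1 : ∀ g h : G, dist (g + h) h = dist g 0 := by
    intro g h
    have := hinv g 0 h
    rwa [zero_add] at this
  have hq_add : ∀ z w : FreeL X base,
      z ∈ AddSubgroup.closure (Set.range (FreeL.δ base)) →
      w ∈ AddSubgroup.closure (Set.range (FreeL.δ base)) →
      q (z + w) ≤ q z + q w := by
    intro z w hz hw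
    rw [hqmem _ (add_mem hz hw), hqmem _ hz, hqmem _ hw]
    have harg : (⟨z + w, add_mem hz hw⟩ :
        AddSubgroup.closure (Set.range (FreeL.δ base))) = ⟨z, hz⟩ + ⟨w, hw⟩ := rfl
    rw [harg, map_add]
    calc dist (F ⟨z, hz⟩ + F ⟨w, hw⟩) 0
        ≤ dist (F ⟨z, hz⟩ + F ⟨w, hw⟩) (F ⟨w, hw⟩) + dist (F ⟨w, hw⟩) 0 :=
          dist_triangle _ _ _
      _ = dist (F ⟨z, hz⟩) 0 + dist (F ⟨w, hw⟩) 0 := by rw [hd1]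
  have hq_neg : ∀ z : FreeL X base,
      z ∈ AddSubgroup.closure (Set.range (FreeL.δ base)) → q (-z) = q z := by
    intro z hz
    rw [hqmem _ (neg_mem hz), hqmem _ hz]
    have harg : (⟨-z, neg_mem hz⟩ :
        AddSubgroup.closure (Set.range (FreeL.δ base))) = -⟨z, hz⟩ := rfl
    rw [harg, map_neg]
    have h2 := hinv (-(F ⟨z, hz⟩)) 0 (F ⟨z, hz⟩)
    rw [neg_add_cancel, zero_add] at h2
    rw [← h2, dist_comm]
  have hq_gen : ∀ x y : X, q (FreeL.δ base x - FreeL.δ base y) ≤ dist x y := by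
    intro x y
    have hm := GraevAux4.mem_gen base x y
    rw [hqmem _ hm]
    have harg : (⟨FreeL.δ base x - FreeL.δ base y, hm⟩ :
        AddSubgroup.closure (Set.range (FreeL.δ base))) =
        ⟨FreeL.δ base x, AddSubgroup.subset_closure ⟨x, rfl⟩⟩ -
        ⟨FreeL.δ base y, AddSubgroup.subset_closure ⟨y, rfl⟩⟩ := rfl
    rw [harg, map_sub, hF x, hF y]
    have h2 := hinv (f x - f y) 0 (f y)
    rw [sub_add_cancel, zero_add] at h2
    rw [← h2]
    exact hf x y
  have hmemab : ((a : FreeL X base) - (b : FreeL X base)) ∈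
      AddSubgroup.closure (Set.range (FreeL.δ base)) := sub_mem a.2 b.2
  have hq_ab : dist (F a) (F b) = q ((a : FreeL X base) - (b : FreeL X base)) := by
    rw [hqmem _ hmemab]
    have harg : (⟨(a : FreeL X base) - (b : FreeL X base), hmemab⟩ :
        AddSubgroup.closure (Set.range (FreeL.δ base))) = a - b := rfl
    rw [harg, map_sub]
    have h2 := hinv (F a - F b) 0 (F b)
    rw [sub_add_cancel, zero_add] at h2
    exact h2
  rw [hq_ab]
  have hkey : q ((a : FreeL X base) - (b : FreeL X base)) ≤
      GraevAux2.pfun base ((a : FreeL X base) - (b : FreeL X base)) := by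
    refine le_csInf (GraevAux2.Rset_nonempty base _) ?_
    rintro r ⟨n, c, x, y, hz, rfl⟩
    exact GraevAux4.key base q hq0 hq_add hq_neg hq_gen _ c x y _ hmemab rfl hz
  refine hkey.trans ?_
  have := GraevAux2.good_le_freeNorm base (GraevAux2.pSem_good base)
    ((a : FreeL X base) - (b : FreeL X base))
  rwa [GraevAux2.pSem_apply] at this
end
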